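/- arXiv:2409.07366 — 7 statements merged into one kernel-verified Lean document; each statement's English description precedes it below -/
import Mathlib

section
/- Let G be a claw-free graph, let P = p_1 p_2 … p_k be a longest path of G, and let u be a vertex of G not on P such that u is adjacent to p_i. Then 1 < i < k and p_{i-1} is adjacent to p_{i+1} in G. -/
open SimpleGraph

/-- `p` is a longest path of `G`: it is a path, and no path of `G` is longer. -/
def IsLongestPath {V : Type*} (G : SimpleGraph V) {u v : V} (p : G.Walk u v) : Prop :=
  p.IsPath ∧ ∀ (x y : V) (q : G.Walk x y), q.IsPath → q.length ≤ p.length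

/-- `v` is a Gallai vertex of `G`: it lies on every longest path of `G`. -/
def IsGallaiVertex {V : Type*} (G : SimpleGraph V) (v : V) : Prop :=
  ∀ (x y : V) (p : G.Walk x y), IsLongestPath G p → v ∈ p.support

/-- `G` is `H`-free: no induced subgraph of `G` is isomorphic to `H`. -/
def Free {W V : Type*} (H : SimpleGraph W) (G : SimpleGraph V) : Prop :=
  IsEmpty (H ↪g G)

/-- The claw `K_{1,3}`. -/
def claw : SimpleGraph (Fin 1 ⊕ Fin 3) := completeBipartiteGraph (Fin 1) (Fin 3)

/-- `P_3 + 2P_1`: a three-vertex path together with two isolated vertices. -/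
def P3_2P1 : SimpleGraph (Fin 5) := fromEdgeSet {s(0,1), s(1,2)}
/-- `K_3 + 2P_1`: a triangle together with two isolated vertices. -/
def K3_2P1 : SimpleGraph (Fin 5) := fromEdgeSet {s(0,1), s(1,2), s(0,2)}
/-- `2P_2 + P_1`: two disjoint edges together with one isolated vertex. -/
def twoP2_P1 : SimpleGraph (Fin 5) := fromEdgeSet {s(0,1), s(2,3)}
/-- `P_2 + 3P_1`: an edge together with three isolated vertices. -/
def P2_3P1 : SimpleGraph (Fin 5) := fromEdgeSet {s(0,1)}
/-- `2P_2`: the disjoint union of two edges. -/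
def twoP2 : SimpleGraph (Fin 4) := fromEdgeSet {s(0,1), s(2,3)}
/-- The paw `N_{1,0,0}`: a triangle with a pendant vertex. -/
def paw : SimpleGraph (Fin 4) := fromEdgeSet {s(0,1), s(1,2), s(0,2), s(2,3)}
/-- The diamond: `K_4` minus an edge. -/
def diamond : SimpleGraph (Fin 4) := fromEdgeSet {s(0,1), s(0,2), s(0,3), s(1,2), s(1,3)}
/-- The bull `N_{1,1,0}`: a triangle with two pendant vertices at distinct vertices. -/
def bull : SimpleGraph (Fin 5) := fromEdgeSet {s(0,1), s(1,2), s(0,2), s(0,3), s(1,4)}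
/-- `N_{2,0,0}`: a triangle with a path of length two appended at one vertex. -/
def N200 : SimpleGraph (Fin 5) := fromEdgeSet {s(0,1), s(1,2), s(0,2), s(0,3), s(3,4)}
/-- `N_{1,0,0} + P_1`: the paw together with an isolated vertex. -/
def paw_P1 : SimpleGraph (Fin 5) := fromEdgeSet {s(0,1), s(1,2), s(0,2), s(0,3)}
/-- `K_3 + P_2`: a triangle together with a disjoint edge. -/
def K3_P2 : SimpleGraph (Fin 5) := fromEdgeSet {s(0,1), s(1,2), s(0,2), s(3,4)}

/-- `x` is a cut vertex of `G`: deleting `x` leaves a disconnected graph. -/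
def IsCutVertex {V : Type*} (G : SimpleGraph V) (x : V) : Prop :=
  ¬ (G.induce {y | y ≠ x}).Preconnected

/-- A linear forest: an acyclic graph in which every vertex has degree at most two,
i.e. a graph every connected component of which is a path. -/
def IsLinearForest {V : Type*} (G : SimpleGraph V) : Prop :=
  G.IsAcyclic ∧ ∀ v : V, (G.neighborSet v).ncard ≤ 2

/-- A 5-ring: the vertices can be partitioned into five nonempty stable sets
`S 0, …, S 4` such that (indices mod 5) `S i` is complete to `S (i±1)` and
anticomplete to `S (i±2)`. -/
def Is5Ring {V : Type*} (G : SimpleGraph V) : Prop :=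
  ∃ S : Fin 5 → Set V,
    (∀ i, (S i).Nonempty) ∧
    (∀ v : V, ∃! i, v ∈ S i) ∧
    (∀ i, ∀ u ∈ S i, ∀ v ∈ S i, ¬ G.Adj u v) ∧
    (∀ i, ∀ u ∈ S i, ∀ v ∈ S (i + 1), G.Adj u v) ∧
    (∀ i, ∀ u ∈ S i, ∀ v ∈ S (i + 2), ¬ G.Adj u v)

lemma getVert_inj {V : Type*} {G : SimpleGraph V} {a b : V} {p : G.Walk a b}
    (hp : p.IsPath) : ∀ i j, i ≤ p.length → j ≤ p.length →
    p.getVert i = p.getVert j → i = j := by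
  induction p with
  | nil => intro i j hi hj _; simp only [Walk.length_nil, Nat.le_zero] at hi hj; omega
  | cons h q ih =>
    intro i j hi hj heq
    rw [Walk.cons_isPath_iff] at hp
    match i, j with
    | 0, 0 => rfl
    | 0, (k+1) =>
      exfalso
      rw [Walk.getVert_zero, Walk.getVert_cons_succ] at heq
      exact hp.2 (heq ▸ (Walk.mem_support_iff_exists_getVert.2 ⟨k, rfl, by simpa using hj⟩))
    | (k+1), 0 =>
      exfalso
      rw [Walk.getVert_zero, Walk.getVert_cons_succ] at heq
      exact hp.2 (heq ▸ (Walk.mem_support_iff_exists_getVert.2 ⟨k, rfl, by simpa using hi⟩))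
    | (k+1), (l+1) =>
      rw [Walk.getVert_cons_succ, Walk.getVert_cons_succ] at heq
      have := ih hp.1 k l (by simpa using hi) (by simpa using hj) heq
      omega

lemma splice {V : Type*} {G : SimpleGraph V} {a b u : V} (p : G.Walk a b) (hp : p.IsPath)
    (i : ℕ) (h0 : 0 < i) (hi : i ≤ p.length) (hu : u ∉ p.support)
    (h1 : G.Adj (p.getVert (i-1)) u) (h2 : G.Adj u (p.getVert i)) :
    ∃ q : G.Walk a b, q.IsPath ∧ q.length = p.length + 1 ∧
      ∀ x ∈ q.support, x ∈ p.support ∨ x = u := by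
  induction p generalizing i with
  | nil => simp at hi; omega
  | @cons a c b h q ih =>
    rw [Walk.cons_isPath_iff] at hp
    have hu' : u ∉ q.support := fun hx => hu (by simp [hx])
    have hau : a ≠ u := fun he => hu (by simp [he])
    match i with
    | 1 =>
      have h1' : G.Adj a u := by simpa using h1
      have h2' : G.Adj u c := by
        have : (Walk.cons h q).getVert 1 = q.getVert 0 := Walk.getVert_cons_succ q h
        rw [this, Walk.getVert_zero] at h2; exact h2
      refine ⟨Walk.cons h1' (Walk.cons h2' q), ?_, by simp, ?_⟩
      · rw [Walk.cons_isPath_iff, Walk.cons_isPath_iff]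
        refine ⟨⟨hp.1, hu'⟩, ?_⟩
        simp only [Walk.support_cons, List.mem_cons]
        rintro (rfl | hx)
        · exact hau rfl
        · exact hp.2 hx
      · intro x hx
        simp only [Walk.support_cons, List.mem_cons] at hx ⊢
        rcases hx with rfl | rfl | hx
        · exact Or.inl (Or.inl rfl)
        · exact Or.inr rfl
        · exact Or.inl (Or.inr hx)
    | (k+2) =>
      have h1' : G.Adj (q.getVert (k+1-1)) u := by
        have e : (Walk.cons h q).getVert (k+1) = q.getVert k := Walk.getVert_cons_succ q h
        rw [show k+2-1 = k+1 from rfl, e] at h1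
        simpa using h1
      have h2' : G.Adj u (q.getVert (k+1)) := by
        rwa [Walk.getVert_cons_succ] at h2
      obtain ⟨r, hr, hrl, hrs⟩ := ih hp.1 (k+1) (by omega)
        (by have := hi; simp only [Walk.length_cons] at this; omega) hu' h1' h2'
      refine ⟨Walk.cons h r, ?_, by simp [hrl], ?_⟩
      · rw [Walk.cons_isPath_iff]
        refine ⟨hr, fun hx => ?_⟩
        rcases hrs a hx with hx' | rfl
        · exact hp.2 hx'
        · exact hau rfl
      · intro x hx
        simp only [Walk.support_cons, List.mem_cons] at hx ⊢
        rcases hx with rfl | hx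
        · exact Or.inl (Or.inl rfl)
        · rcases hrs x hx with hx' | rfl
          · exact Or.inl (Or.inr hx')
          · exact Or.inr rfl

/-- In a claw-free graph, if a vertex `u` off a longest path `p` is adjacent to the
`i`-th vertex of `p` (0-indexed, so `p.getVert i` is `p_{i+1}`), then that vertex is
internal and its two neighbours on the path are adjacent. -/
theorem stmt_2 {V : Type} [Fintype V] (G : SimpleGraph V) (hfree : _root_.Free claw G)
    {a b : V} (p : G.Walk a b) (hp : IsLongestPath G p)
    (u : V) (hu : u ∉ p.support) (i : ℕ) (hi : i ≤ p.length)
    (hadj : G.Adj u (p.getVert i)) :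
    0 < i ∧ i < p.length ∧ G.Adj (p.getVert (i - 1)) (p.getVert (i + 1)) := by
  obtain ⟨hpath, hmax⟩ := hp
  -- 0 < i
  have h0 : 0 < i := by
    by_contra h
    have : i = 0 := by omega
    subst this
    rw [Walk.getVert_zero] at hadj
    have := hmax u b (Walk.cons hadj p) ((Walk.cons_isPath_iff _ _).2 ⟨hpath, hu⟩)
    simp at this
  -- i < length
  have hlt : i < p.length := by
    by_contra h
    have : i = p.length := by omega
    subst this
    rw [Walk.getVert_length] at hadj
    have hrp : (Walk.cons hadj p.reverse).IsPath :=
      (Walk.cons_isPath_iff _ _).2 ⟨hpath.reverse, by rwa [Walk.support_reverse, List.mem_reverse]⟩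
    have := hmax u a _ hrp
    simp at this
  -- non-adjacency of u with neighbours on the path
  have hnw : ¬ G.Adj (p.getVert (i-1)) u := by
    intro hadj'
    obtain ⟨q, hq, hql, -⟩ := splice p hpath i h0 hi hu hadj' hadj
    have := hmax a b q hq
    omega
  have hnx : ¬ G.Adj (p.getVert (i+1)) u := by
    intro hadj'
    have e1 : p.reverse.getVert (p.length - i) = p.getVert i := by
      rw [Walk.getVert_reverse]; congr 1; omega
    have e2 : p.reverse.getVert (p.length - i - 1) = p.getVert (i+1) := by
      rw [Walk.getVert_reverse]; congr 1; omega
    obtain ⟨q, hq, hql, -⟩ := splice p.reverse hpath.reverse (p.length - i)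
      (by omega) (by rw [Walk.length_reverse]; omega)
      (by rwa [Walk.support_reverse, List.mem_reverse])
      (by rwa [e2]) (by rwa [e1])
    have := hmax b a q hq
    rw [Walk.length_reverse] at hql
    omega
  -- distinctness
  have hinj := getVert_inj hpath
  have hwx : p.getVert (i-1) ≠ p.getVert (i+1) := fun he => by
    have := hinj (i-1) (i+1) (by omega) (by omega) he; omega
  have hvw : p.getVert i ≠ p.getVert (i-1) := fun he => by
    have := hinj i (i-1) (by omega) (by omega) he; omega
  have hvx : p.getVert i ≠ p.getVert (i+1) := fun he => by
    have := hinj i (i+1) (by omega) (by omega) he; omega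
  have hmem : ∀ j, j ≤ p.length → p.getVert j ∈ p.support := fun j hj =>
    Walk.mem_support_iff_exists_getVert.2 ⟨j, rfl, hj⟩
  have huv : u ≠ p.getVert i := fun he => hu (he ▸ hmem i hi)
  have huw : u ≠ p.getVert (i-1) := fun he => hu (he ▸ hmem _ (by omega))
  have hux : u ≠ p.getVert (i+1) := fun he => hu (he ▸ hmem _ (by omega))
  -- adjacencies along the path
  have havw : G.Adj (p.getVert i) (p.getVert (i-1)) := by
    have := p.adj_getVert_succ (i := i-1) (by omega)
    rw [show i-1+1 = i by omega] at this
    exact this.symm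
  have havx : G.Adj (p.getVert i) (p.getVert (i+1)) := p.adj_getVert_succ hlt
  refine ⟨h0, hlt, ?_⟩
  by_contra hcon
  refine hfree.elim ⟨⟨Sum.elim (fun _ => p.getVert i) ![u, p.getVert (i-1), p.getVert (i+1)], ?_⟩, ?_⟩
  · rintro (z | z) (z' | z') h <;>
      simp only [Sum.elim_inl, Sum.elim_inr] at h
    · simp [Fin.eq_zero z, Fin.eq_zero z']
    · exfalso
      fin_cases z' <;>
        simp only [Matrix.cons_val_zero, Matrix.cons_val_one, Matrix.head_cons,
          Matrix.cons_val_two, Matrix.tail_cons] at h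
      · exact huv h.symm
      · exact hvw h
      · exact hvx h
    · exfalso
      fin_cases z <;>
        simp only [Matrix.cons_val_zero, Matrix.cons_val_one, Matrix.head_cons,
          Matrix.cons_val_two, Matrix.tail_cons] at h
      · exact huv h
      · exact hvw h.symm
      · exact hvx h.symm
    · fin_cases z <;> fin_cases z' <;>
        simp only [Matrix.cons_val_zero, Matrix.cons_val_one, Matrix.head_cons,
          Matrix.cons_val_two, Matrix.tail_cons] at h <;>
        first
          | rfl
          | exact absurd h huw
          | exact absurd h hux
          | exact absurd h hwx
          | exact absurd h.symm huw
          | exact absurd h.symm hux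
          | exact absurd h.symm hwx
  · rintro (z | z) (z' | z') <;>
      simp only [Function.Embedding.coeFn_mk, Sum.elim_inl, Sum.elim_inr,
        claw, completeBipartiteGraph_adj, Sum.isLeft_inl, Sum.isRight_inr,
        Sum.isRight_inl, Sum.isLeft_inr, and_true, true_and, and_false, false_and,
        or_false, false_or, Bool.false_eq_true, true_or, or_true, or_self, iff_true, iff_false]
    · exact G.irrefl
    · fin_cases z' <;>
        simp only [Matrix.cons_val_zero, Matrix.cons_val_one, Matrix.head_cons,
          Matrix.cons_val_two, Matrix.tail_cons]
      · exact hadj.symm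
      · exact havw
      · exact havx
    · fin_cases z <;>
        simp only [Matrix.cons_val_zero, Matrix.cons_val_one, Matrix.head_cons,
          Matrix.cons_val_two, Matrix.tail_cons]
      · exact hadj
      · exact havw.symm
      · exact havx.symm
    · intro h
      fin_cases z <;> fin_cases z' <;>
        simp only [Matrix.cons_val_zero, Matrix.cons_val_one, Matrix.head_cons,
          Matrix.cons_val_two, Matrix.tail_cons] at h <;>
        first
          | exact G.irrefl h
          | exact hnw h.symm
          | exact hnx h.symm
          | exact hnw h
          | exact hnx h
          | exact hcon h
          | exact hcon h.symm
end

section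
/- Let G be a claw-free graph, let P = p_1 p_2 … p_k be a longest path of G, and let u be a vertex not on P adjacent to p_i with 1 < i < k. If u has a neighbor v that is also not on P, then the four vertices {u, v, p_{i-1}, p_{i+1}} induce a 2P_2 in G (the only edges among them are uv and p_{i-1}p_{i+1}). -/
open SimpleGraph

lemma claw_free_adj {V : Type*} {G : SimpleGraph V} (hfree : _root_.Free claw G)
    {c x y z : V} (hcx : G.Adj c x) (hcy : G.Adj c y) (hcz : G.Adj c z)
    (hxy : ¬ G.Adj x y) (hxz : ¬ G.Adj x z)
    (hxyne : x ≠ y) (hxzne : x ≠ z) (hyzne : y ≠ z) : G.Adj y z := by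
  by_contra hyz
  have hcxne := hcx.ne
  have hcyne := hcy.ne
  have hczne := hcz.ne
  have hxc := hcx.symm
  have hyc := hcy.symm
  have hzc := hcz.symm
  have hyx : ¬ G.Adj y x := fun h => hxy h.symm
  have hzx : ¬ G.Adj z x := fun h => hxz h.symm
  have hzy : ¬ G.Adj z y := fun h => hyz h.symm
  refine hfree.false ?_
  refine ⟨⟨Sum.elim (fun _ => c) (![x, y, z]), ?_⟩, ?_⟩
  · rintro (a | a) (b | b) hab <;> simp only [Sum.elim_inl, Sum.elim_inr] at hab
    · simp [Subsingleton.elim a b]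
    · exfalso; fin_cases b <;> simp_all
    · exfalso; fin_cases a <;> simp_all
    · fin_cases a <;> fin_cases b <;> simp_all
  · rintro (a | a) (b | b) <;>
      fin_cases a <;> fin_cases b <;>
      (simp only [DFunLike.coe]) <;> simp_all [claw, G.irrefl]

namespace SimpleGraph.Walk
variable {V : Type*} {G : SimpleGraph V}

/-- take first n darts of a walk -/
def wtake {u v : V} : (p : G.Walk u v) → (n : ℕ) → G.Walk u (p.getVert n)
  | p, 0 => Walk.nil.copy rfl (getVert_zero p).symm
  | .nil, _+1 => .nil
  | .cons h q, n+1 => Walk.cons h (q.wtake n)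

theorem wtake_append_drop {u v : V} (p : G.Walk u v) (n : ℕ) :
    (p.wtake n).append (p.drop n) = p := by
  induction p generalizing n with
  | nil => cases n <;> rfl
  | cons h q ih =>
    cases n with
    | zero => rfl
    | succ n =>
      show Walk.cons h ((q.wtake n).append ((q.drop n).copy rfl rfl)) = _
      rw [Walk.copy_rfl_rfl, ih]

theorem length_wtake {u v : V} (p : G.Walk u v) {n : ℕ} (hn : n ≤ p.length) :
    (p.wtake n).length = n := by
  induction p generalizing n with
  | nil => simp at hn; subst hn; rfl
  | cons h q ih =>
    cases n with
    | zero => rfl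
    | succ n =>
      have : n ≤ q.length := by simpa using hn
      show (Walk.cons h (q.wtake n)).length = n + 1
      rw [Walk.length_cons, ih this]

theorem getVert_drop' {u v : V} (p : G.Walk u v) (n m : ℕ) :
    (p.drop n).getVert m = p.getVert (n + m) := by
  induction p generalizing n with
  | nil => cases n <;> simp [Walk.drop, Walk.getVert]
  | cons h q ih =>
    cases n with
    | zero => simp [Walk.drop]
    | succ n =>
      show ((q.drop n).copy rfl rfl).getVert m = _
      rw [Walk.getVert_copy, ih, Nat.succ_add, Walk.getVert_cons_succ]

theorem length_drop' {u v : V} (p : G.Walk u v) {n : ℕ} (hn : n ≤ p.length) :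
    (p.drop n).length = p.length - n := by
  have := congrArg Walk.length (p.wtake_append_drop n)
  rw [Walk.length_append, length_wtake p hn] at this
  omega

theorem getVert_mem_support' {u v : V} (p : G.Walk u v) (n : ℕ) :
    p.getVert n ∈ p.support := by
  rcases le_or_gt n p.length with h | h
  · exact mem_support_iff_exists_getVert.2 ⟨n, rfl, h⟩
  · rw [p.getVert_of_length_le h.le]; exact Walk.end_mem_support p

theorem IsPath.getVert_inj {u v : V} {p : G.Walk u v} (hp : p.IsPath) :
    ∀ {n m : ℕ}, n ≤ p.length → m ≤ p.length → p.getVert n = p.getVert m → n = m := by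
  induction p with
  | nil => intro n m hn hm _; simp at hn hm; omega
  | cons h q ih =>
    rw [Walk.cons_isPath_iff] at hp
    intro n m hn hm he
    match n, m with
    | 0, 0 => rfl
    | 0, m+1 =>
      exfalso
      rw [Walk.getVert_zero, Walk.getVert_cons_succ] at he
      exact hp.2 (he ▸ q.getVert_mem_support' m)
    | n+1, 0 =>
      exfalso
      rw [Walk.getVert_zero, Walk.getVert_cons_succ] at he
      exact hp.2 (he ▸ q.getVert_mem_support' n)
    | n+1, m+1 =>
      rw [Walk.getVert_cons_succ, Walk.getVert_cons_succ] at he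
      simp only [Walk.length_cons, Nat.add_le_add_iff_right] at hn hm
      exact congrArg Nat.succ (ih hp.1 hn hm he)

end SimpleGraph.Walk


/-- In a claw-free graph, if `u ∉ p` is adjacent to the internal vertex `p.getVert i`
of a longest path `p` and `u` has a neighbour `v ∉ p`, then
`{u, v, p.getVert (i-1), p.getVert (i+1)}` induces a `2P_2`: the only edges among
these four vertices are `uv` and the edge between the two path vertices. -/
theorem stmt_3 {V : Type} [Fintype V] (G : SimpleGraph V) (hfree : _root_.Free claw G)
    {a b : V} (p : G.Walk a b) (hp : IsLongestPath G p)
    (u : V) (hu : u ∉ p.support) (i : ℕ) (hi0 : 0 < i) (hik : i < p.length)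
    (hadj : G.Adj u (p.getVert i))
    (v : V) (hv : v ∉ p.support) (huv : G.Adj u v) :
    G.Adj (p.getVert (i - 1)) (p.getVert (i + 1)) ∧
    ¬ G.Adj u (p.getVert (i - 1)) ∧ ¬ G.Adj u (p.getVert (i + 1)) ∧
    ¬ G.Adj v (p.getVert (i - 1)) ∧ ¬ G.Adj v (p.getVert (i + 1)) := by
  classical
  obtain ⟨hpath, hlong⟩ := hp
  have hnodup : p.support.Nodup := hpath.support_nodup
  have hi1 : i - 1 + 1 = i := by omega
  have h1 : G.Adj (p.getVert (i-1)) (p.getVert i) := by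
    have := p.adj_getVert_succ (i := i-1) (by omega)
    rwa [hi1] at this
  have h2 : G.Adj (p.getVert i) (p.getVert (i+1)) := p.adj_getVert_succ hik
  set t := p.wtake (i-1) with ht
  set e := p.drop (i-1) with he
  have hspec : t.append e = p := p.wtake_append_drop (i-1)
  have htlen : t.length = i - 1 := p.length_wtake (by omega)
  have hlenspec : t.length + e.length = p.length := by
    conv_rhs => rw [← hspec]
    rw [Walk.length_append]
  have helen : e.length = p.length - (i-1) := p.length_drop' (by omega)
  have hene : ¬ e.Nil := by rw [Walk.not_nil_iff_lt_length]; omega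
  have heg1 : e.getVert 1 = p.getVert i := by rw [he, p.getVert_drop', hi1]
  set d := e.tail.copy heg1 rfl with hd
  have hesup : e.support = p.getVert (i-1) :: d.support := by
    rw [hd, Walk.support_copy]
    exact (e.cons_support_tail hene).symm
  have hdlen : d.length + 1 = e.length := by
    rw [hd, Walk.length_copy]
    exact Walk.length_tail_add_one hene
  have hdg1 : d.getVert 1 = p.getVert (i+1) := by
    rw [hd, Walk.getVert_copy, Walk.getVert_tail e, he, p.getVert_drop']
    congr 1
    omega
  have hdne : ¬ d.Nil := by rw [Walk.not_nil_iff_lt_length]; omega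
  set d2 := d.tail.copy hdg1 rfl with hd2
  have hdsup : d.support = p.getVert i :: d2.support := by
    rw [hd2, Walk.support_copy d.tail hdg1 rfl]
    exact (d.cons_support_tail hdne).symm
  have hd2len : d2.length + 1 = d.length := by
    rw [hd2, Walk.length_copy d.tail hdg1 rfl]
    exact Walk.length_tail_add_one hdne
  have hpsup : p.support = t.support ++ d.support := by
    conv_lhs => rw [← hspec]
    rw [Walk.support_append, hesup, List.tail_cons]
  have hmemm : p.getVert (i-1) ∈ p.support := p.getVert_mem_support' _
  have hmemp : p.getVert (i+1) ∈ p.support := p.getVert_mem_support' _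
  -- u is not adjacent to the predecessor
  have hum : ¬ G.Adj u (p.getVert (i-1)) := by
    intro hum
    set q := t.append (Walk.cons hum.symm (Walk.cons hadj d)) with hq
    have hqsup : q.support = t.support ++ (u :: d.support) := by
      rw [hq, Walk.support_append, Walk.support_cons, Walk.support_cons, List.tail_cons]
    have hqperm : q.support.Perm (u :: p.support) := by
      rw [hqsup, hpsup]
      exact List.perm_middle
    have hqpath : q.IsPath :=
      Walk.IsPath.mk' (hqperm.nodup_iff.2 (by simp [List.nodup_cons, hnodup, hu]))
    have hlq := hlong _ _ q hqpath
    rw [hq] at hlq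
    simp only [Walk.length_append, Walk.length_cons] at hlq
    omega
  -- u is not adjacent to the successor
  have hup : ¬ G.Adj u (p.getVert (i+1)) := by
    intro hup
    set q := t.append (Walk.cons h1 (Walk.cons hadj.symm (Walk.cons hup d2))) with hq
    have hqsup : q.support = t.support ++ (p.getVert i :: u :: d2.support) := by
      rw [hq, Walk.support_append]
      simp [Walk.support_cons]
    have hqperm : q.support.Perm (u :: p.support) := by
      rw [hqsup, hpsup, hdsup]
      have h := List.perm_middle (a := u) (l₁ := t.support ++ [p.getVert i])
        (l₂ := d2.support)
      simpa using h
    have hqpath : q.IsPath :=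
      Walk.IsPath.mk' (hqperm.nodup_iff.2 (by simp [List.nodup_cons, hnodup, hu]))
    have hlq := hlong _ _ q hqpath
    rw [hq] at hlq
    simp only [Walk.length_append, Walk.length_cons] at hlq
    omega
  -- v is not adjacent to the predecessor
  have hvm : ¬ G.Adj v (p.getVert (i-1)) := by
    intro hvm
    set q := d.reverse.append
      (Walk.cons hadj.symm (Walk.cons huv (Walk.cons hvm t.reverse))) with hq
    have hqsup : q.support = d.support.reverse ++ (u :: v :: t.support.reverse) := by
      rw [hq, Walk.support_append]
      simp [Walk.support_cons, Walk.support_reverse]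
    have hqperm : q.support.Perm (u :: v :: p.support) := by
      rw [hqsup, hpsup]
      refine List.perm_middle.trans (List.Perm.cons u ?_)
      refine List.perm_middle.trans (List.Perm.cons v ?_)
      exact (d.support.reverse_perm.append t.support.reverse_perm).trans
        List.perm_append_comm
    have hqpath : q.IsPath :=
      Walk.IsPath.mk' (hqperm.nodup_iff.2
        (by simp [List.nodup_cons, hnodup, hu, hv, huv.ne]))
    have hlq := hlong _ _ q hqpath
    rw [hq] at hlq
    simp only [Walk.length_append, Walk.length_cons, Walk.length_reverse] at hlq
    omega
  -- v is not adjacent to the successor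
  have hvp : ¬ G.Adj v (p.getVert (i+1)) := by
    intro hvp
    set q := t.append
      (Walk.cons h1 (Walk.cons hadj.symm (Walk.cons huv (Walk.cons hvp d2)))) with hq
    have hqsup : q.support = t.support ++ (p.getVert i :: u :: v :: d2.support) := by
      rw [hq, Walk.support_append]
      simp [Walk.support_cons]
    have hqperm : q.support.Perm (u :: v :: p.support) := by
      rw [hqsup, hpsup, hdsup]
      have h : ((t.support ++ [p.getVert i]) ++ u :: v :: d2.support).Perm
          (u :: v :: ((t.support ++ [p.getVert i]) ++ d2.support)) :=
        List.perm_middle.trans (List.Perm.cons u List.perm_middle)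
      simpa using h
    have hqpath : q.IsPath :=
      Walk.IsPath.mk' (hqperm.nodup_iff.2
        (by simp [List.nodup_cons, hnodup, hu, hv, huv.ne]))
    have hlq := hlong _ _ q hqpath
    rw [hq] at hlq
    simp only [Walk.length_append, Walk.length_cons] at hlq
    omega
  -- distinctness and claw-freeness give the missing edge
  have hne1 : u ≠ p.getVert (i-1) := fun h => hu (h ▸ hmemm)
  have hne2 : u ≠ p.getVert (i+1) := fun h => hu (h ▸ hmemp)
  have hne3 : p.getVert (i-1) ≠ p.getVert (i+1) := by
    intro h
    have := hpath.getVert_inj (by omega : i - 1 ≤ p.length)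
      (by omega : i + 1 ≤ p.length) h
    omega
  have hmm : G.Adj (p.getVert (i-1)) (p.getVert (i+1)) :=
    claw_free_adj hfree hadj.symm h1.symm h2 hum hup hne1 hne2 hne3
  exact ⟨hmm, hum, hup, hvm, hvp⟩
end

section
/- Let G be a connected (claw, P_3 + 2P_1)-free graph containing four vertices x, y, z, w that induce a P_3 + P_1, where x y z is the three-vertex path (edges xy and yz) and w is isolated in the induced subgraph. Then y is a Gallai vertex of G. -/
open SimpleGraph

set_option linter.unusedSectionVars false

section Aux
variable {V : Type} [DecidableEq V] {G : SimpleGraph V}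

/-- extending a longest path at its start is impossible -/
lemma stmt5aux_ext_start {a b u : V} (p : G.Walk a b) (hp : p.IsPath)
    (hl : ∀ (s t : V) (q : G.Walk s t), q.IsPath → q.length ≤ p.length)
    (hu : u ∉ p.support) (h : G.Adj u a) : False := by
  have h2 : (Walk.cons h p).IsPath := hp.cons hu
  have := hl _ _ _ h2
  simp [Walk.length_cons] at this

lemma stmt5aux_exists_cross {s t : V} (W : G.Walk s t) (L : List V) (hs : s ∉ L) (ht : t ∈ L) :
    ∃ u c, G.Adj u c ∧ u ∉ L ∧ c ∈ L := by
  induction W with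
  | nil => exact absurd ht hs
  | @cons u v t h q ih =>
    by_cases hv : v ∈ L
    · exact ⟨u, v, h, hs, hv⟩
    · exact ih hv ht

/-- a longest path avoiding some vertex cannot have adjacent endpoints -/
lemma stmt5aux_cycle_contra {a b y : V} (p : G.Walk a b) (hp : p.IsPath)
    (hl : ∀ (s t : V) (q : G.Walk s t), q.IsPath → q.length ≤ p.length)
    (hy : y ∉ p.support) (hG : G.Connected) (hba : G.Adj b a) : False := by
  obtain ⟨W⟩ := hG.preconnected y a
  obtain ⟨u, c, huc, hu, hc⟩ := stmt5aux_exists_cross W p.support hy p.start_mem_support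
  by_cases hca : c = a
  · exact stmt5aux_ext_start p hp hl hu (hca ▸ huc)
  · have hspec := p.take_spec hc
    set q1 := p.takeUntil c hc with hq1def
    set q2 := p.dropUntil c hc with hq2def
    obtain ⟨e, hce, s, hs_eq⟩ := Walk.exists_eq_cons_of_ne hca q1.reverse
    have hq1s : q1.support = s.support.reverse ++ [c] := by
      have h0 : q1.support.reverse = c :: s.support := by
        rw [← Walk.support_reverse, hs_eq, Walk.support_cons]
      have := congrArg List.reverse h0
      simpa using this
    have hps : p.support = s.support.reverse ++ q2.support := by
      conv_lhs => rw [← hspec]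
      rw [Walk.support_append, hq1s, List.append_assoc]
      congr 1
      exact (q2.support_eq_cons).symm
    have hq1l : q1.length = s.length + 1 := by
      have : q1.reverse.length = s.length + 1 := by rw [hs_eq, Walk.length_cons]
      rwa [Walk.length_reverse] at this
    have hpl : p.length = s.length + 1 + q2.length := by
      have := congrArg Walk.length hspec
      rw [Walk.length_append, hq1l] at this
      omega
    set W2 : G.Walk u e := Walk.cons huc (q2.append (Walk.cons hba s.reverse)) with hW2
    have hW2s : W2.support = u :: (q2.support ++ s.support.reverse) := by
      simp [hW2, Walk.support_cons, Walk.support_append, Walk.support_reverse]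
    have hnd : (s.support.reverse ++ q2.support).Nodup := by
      rw [← hps]; exact (Walk.isPath_def p).mp hp
    have hW2p : W2.IsPath := by
      rw [Walk.isPath_def, hW2s]
      rw [List.nodup_cons]
      constructor
      · intro hmem
        apply hu
        rw [hps]
        rcases List.mem_append.mp hmem with h' | h'
        · exact List.mem_append.mpr (Or.inr h')
        · exact List.mem_append.mpr (Or.inl h')
      · exact (List.perm_append_comm.nodup_iff).mpr hnd
    have := hl _ _ W2 hW2p
    have hW2l : W2.length = q2.length + s.length + 2 := by
      simp [hW2, Walk.length_cons, Walk.length_append, Walk.length_reverse]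
      omega
    omega

end Aux

section Key
variable {V : Type} [DecidableEq V] {G : SimpleGraph V}

lemma stmt5aux_claw_embed (h1 : _root_.Free claw G)
    {c l1 l2 l3 : V} (hc1 : G.Adj c l1) (hc2 : G.Adj c l2) (hc3 : G.Adj c l3)
    (h12 : ¬ G.Adj l1 l2) (h13 : ¬ G.Adj l1 l3) (h23 : ¬ G.Adj l2 l3)
    (n12 : l1 ≠ l2) (n13 : l1 ≠ l3) (n23 : l2 ≠ l3) : False := by
  have hn1 : c ≠ l1 := G.ne_of_adj hc1
  have hn2 : c ≠ l2 := G.ne_of_adj hc2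
  have hn3 : c ≠ l3 := G.ne_of_adj hc3
  refine h1.false ⟨⟨fun v => Sum.elim (fun _ => c) (![l1, l2, l3]) v, ?_⟩, ?_⟩
  · rintro (i | i) (j | j) h <;> simp_all <;> fin_cases i <;> fin_cases j <;> simp_all
  · intro i j
    show G.Adj (Sum.elim (fun _ => c) ![l1, l2, l3] i) (Sum.elim (fun _ => c) ![l1, l2, l3] j) ↔ _
    rcases i with i | i <;> rcases j with j | j <;>
      first
      | (fin_cases i <;> fin_cases j <;>
          simp_all [claw, G.adj_symm, adj_comm])
      | (fin_cases i <;> simp_all [claw])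

/-- KEY: a longest path avoiding y cannot have its start adjacent to a
support-vertex that is a neighbour of y. -/
lemma stmt5aux_key {a b c y : V} (p : G.Walk a b) (hp : p.IsPath)
    (hl : ∀ (s t : V) (q : G.Walk s t), q.IsPath → q.length ≤ p.length)
    (h1 : _root_.Free claw G) (hy : y ∉ p.support)
    (hc : c ∈ p.support) (hyc : G.Adj y c) (hac : G.Adj a c) : False := by
  have hya : ¬ G.Adj y a := fun h => stmt5aux_ext_start p hp hl hy h
  have hl' : ∀ (s t : V) (q : G.Walk s t), q.IsPath → q.length ≤ p.reverse.length := by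
    intro s t q hq; rw [Walk.length_reverse]; exact hl s t q hq
  have hyrev : y ∉ p.reverse.support := by rwa [Walk.support_reverse, List.mem_reverse]
  have hyb : ¬ G.Adj y b := fun h => stmt5aux_ext_start p.reverse hp.reverse hl' hyrev h
  have hca : c ≠ a := fun h => hya (h ▸ hyc)
  have hcb : c ≠ b := fun h => hyb (h ▸ hyc)
  have hspec := p.take_spec hc
  set q1 := p.takeUntil c hc with hq1def
  set q2 := p.dropUntil c hc with hq2def
  obtain ⟨d, hcd, r, hq2⟩ := Walk.exists_eq_cons_of_ne hcb q2
  have hps : p.support = q1.support ++ r.support := by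
    conv_lhs => rw [← hspec]
    rw [Walk.support_append, hq2, Walk.support_cons, List.tail_cons]
  have hnd : (q1.support ++ r.support).Nodup := by
    rw [← hps]; exact (Walk.isPath_def p).mp hp
  have hyq1 : y ∉ q1.support := fun h => hy (hps ▸ List.mem_append.mpr (Or.inl h))
  have hyr : y ∉ r.support := fun h => hy (hps ▸ List.mem_append.mpr (Or.inr h))
  have hpl : p.length = q1.length + r.length + 1 := by
    have := congrArg Walk.length hspec
    rw [Walk.length_append, hq2, Walk.length_cons] at this
    omega
  obtain ⟨hq1n, hrn, hdisj⟩ := List.nodup_append.mp hnd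
  -- y is not adjacent to d
  have hyd : ¬ G.Adj y d := by
    intro h
    set W2 : G.Walk a b := q1.append (Walk.cons hyc.symm (Walk.cons h r)) with hW2
    have hW2p : W2.IsPath := by
      rw [Walk.isPath_def, hW2, Walk.support_append, Walk.support_cons, Walk.support_cons,
        List.tail_cons, List.nodup_append]
      refine ⟨hq1n, ?_, ?_⟩
      · rw [List.nodup_cons]; exact ⟨hyr, hrn⟩
      · intro t ht
        intro u hmem
        rcases List.mem_cons.mp hmem with he | hr'
        · exact fun htu => hyq1 (by rw [← he, ← htu]; exact ht)
        · exact hdisj t ht u hr'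
    have := hl _ _ W2 hW2p
    rw [hW2, Walk.length_append, Walk.length_cons, Walk.length_cons] at this
    omega
  have hyna : y ≠ a := fun h => hy (h ▸ p.start_mem_support)
  have hynd : y ≠ d := fun h => hyr (h ▸ r.start_mem_support)
  have hand : a ≠ d := by
    intro h
    exact hdisj _ q1.start_mem_support _ r.start_mem_support h
  have had : G.Adj a d := by
    by_contra hnad
    exact stmt5aux_claw_embed h1 hyc.symm hac.symm hcd hya hyd hnad hyna hynd hand
  -- final longer path
  set W3 : G.Walk y b := Walk.cons hyc (q1.reverse.append (Walk.cons had r)) with hW3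
  have hW3p : W3.IsPath := by
    rw [Walk.isPath_def, hW3, Walk.support_cons, Walk.support_append, Walk.support_cons,
      List.tail_cons, Walk.support_reverse, List.nodup_cons]
    constructor
    · intro hmem
      rcases List.mem_append.mp hmem with h' | h'
      · exact hyq1 (List.mem_reverse.mp h')
      · exact hyr h'
    · rw [List.nodup_append]
      refine ⟨List.nodup_reverse.mpr hq1n, hrn, ?_⟩
      intro t ht
      exact hdisj t (List.mem_reverse.mp ht)
  have := hl _ _ W3 hW3p
  rw [hW3, Walk.length_cons, Walk.length_append, Walk.length_cons, Walk.length_reverse] at this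
  omega
end Key

lemma stmt5aux_p3_2p1_embed {V : Type} {G : SimpleGraph V} (h2 : _root_.Free P3_2P1 G)
    {a0 a1 a2 a3 a4 : V}
    (e01 : G.Adj a0 a1) (e12 : G.Adj a1 a2)
    (n02 : ¬ G.Adj a0 a2) (n03 : ¬ G.Adj a0 a3) (n04 : ¬ G.Adj a0 a4)
    (n13 : ¬ G.Adj a1 a3) (n14 : ¬ G.Adj a1 a4)
    (n23 : ¬ G.Adj a2 a3) (n24 : ¬ G.Adj a2 a4) (n34 : ¬ G.Adj a3 a4)
    (d02 : a0 ≠ a2) (d03 : a0 ≠ a3) (d04 : a0 ≠ a4)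
    (d13 : a1 ≠ a3) (d14 : a1 ≠ a4)
    (d23 : a2 ≠ a3) (d24 : a2 ≠ a4) (d34 : a3 ≠ a4) : False := by
  have d01 : a0 ≠ a1 := G.ne_of_adj e01
  have d12 : a1 ≠ a2 := G.ne_of_adj e12
  refine h2.false ⟨⟨fun v => ![a0, a1, a2, a3, a4] v, ?_⟩, ?_⟩
  · intro i j h
    fin_cases i <;> fin_cases j <;> simp_all
  · intro i j
    show G.Adj (![a0, a1, a2, a3, a4] i) (![a0, a1, a2, a3, a4] j) ↔ _
    fin_cases i <;> fin_cases j <;>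
      simp_all [P3_2P1, G.adj_symm, adj_comm, Sym2.eq, Sym2.rel_iff']


/-- If a connected `(claw, P_3 + 2P_1)`-free graph contains vertices `x, y, z, w`
inducing a `P_3 + P_1` (path `x y z` plus isolated vertex `w`), then `y` is a
Gallai vertex. -/
theorem stmt_5 {V : Type} [Fintype V] (G : SimpleGraph V) (hG : G.Connected)
    (h1 : _root_.Free claw G) (h2 : _root_.Free P3_2P1 G)
    (x y z w : V) (hxz : x ≠ z) (hwx : w ≠ x) (hwy : w ≠ y) (hwz : w ≠ z)
    (hxy : G.Adj x y) (hyz : G.Adj y z)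
    (hnxz : ¬ G.Adj x z) (hnxw : ¬ G.Adj x w) (hnyw : ¬ G.Adj y w) (hnzw : ¬ G.Adj z w) :
    IsGallaiVertex G y := by
  classical
  intro a b p hlp
  by_contra hy
  obtain ⟨hp, hl⟩ := hlp
  -- the path x-y-z shows p.length ≥ 2
  have pxyz : (Walk.cons hxy (Walk.cons hyz Walk.nil)).IsPath := by
    rw [Walk.isPath_def]
    simp [G.ne_of_adj hxy, G.ne_of_adj hyz, hxz]
  have hlen2 : 2 ≤ p.length := by
    have := hl _ _ _ pxyz
    simpa using this
  have hl' : ∀ (s t : V) (q : G.Walk s t), q.IsPath → q.length ≤ p.reverse.length := by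
    intro s t q hq; rw [Walk.length_reverse]; exact hl s t q hq
  have hyrev : y ∉ p.reverse.support := by rwa [Walk.support_reverse, List.mem_reverse]
  have hya : ¬ G.Adj y a := fun h => stmt5aux_ext_start p hp hl hy h
  have hyb : ¬ G.Adj y b := fun h => stmt5aux_ext_start p.reverse hp.reverse hl' hyrev h
  have hmema : ∀ u, G.Adj a u → u ∈ p.support := by
    intro u h; by_contra hu; exact stmt5aux_ext_start p hp hl hu h.symm
  have hmemb : ∀ u, G.Adj b u → u ∈ p.support := by
    intro u h; by_contra hu
    exact stmt5aux_ext_start p.reverse hp.reverse hl'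
      (by rwa [Walk.support_reverse, List.mem_reverse]) h.symm
  have hax : ¬ G.Adj a x := fun h => stmt5aux_key p hp hl h1 hy (hmema x h) hxy.symm h
  have haz : ¬ G.Adj a z := fun h => stmt5aux_key p hp hl h1 hy (hmema z h) hyz h
  have hbx : ¬ G.Adj b x := fun h =>
    stmt5aux_key p.reverse hp.reverse hl' h1 hyrev
      (by rw [Walk.support_reverse, List.mem_reverse]; exact hmemb x h) hxy.symm h
  have hbz : ¬ G.Adj b z := fun h =>
    stmt5aux_key p.reverse hp.reverse hl' h1 hyrev
      (by rw [Walk.support_reverse, List.mem_reverse]; exact hmemb z h) hyz h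
  have hanx : a ≠ x := fun h => hya (by rw [h]; exact hxy.symm)
  have hanz : a ≠ z := fun h => hya (by rw [h]; exact hyz)
  have hbnx : b ≠ x := fun h => hyb (by rw [h]; exact hxy.symm)
  have hbnz : b ≠ z := fun h => hyb (by rw [h]; exact hyz)
  have hany : a ≠ y := fun h => hy (h ▸ p.start_mem_support)
  have hbny : b ≠ y := fun h => hy (h ▸ p.end_mem_support)
  have hab : a ≠ b := by
    intro h
    subst h
    cases p with
    | nil => simp at hlen2
    | cons hadj q =>
      have hnd := (Walk.isPath_def _).mp hp
      rw [Walk.support_cons, List.nodup_cons] at hnd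
      exact hnd.1 q.end_mem_support
  have hnab : ¬ G.Adj a b := fun h => stmt5aux_cycle_contra p hp hl hy hG h.symm
  have hclsa : G.Adj a w ∨ a = w := by
    by_contra hcon
    push_neg at hcon
    exact stmt5aux_p3_2p1_embed h2 hxy hyz hnxz hnxw (fun h => hax h.symm) hnyw hya hnzw
      (fun h => haz h.symm) (fun h => hcon.1 h.symm)
      hxz hwx.symm hanx.symm hwy.symm hany.symm hwz.symm hanz.symm (Ne.symm hcon.2)
  have hclsb : G.Adj b w ∨ b = w := by
    by_contra hcon
    push_neg at hcon
    exact stmt5aux_p3_2p1_embed h2 hxy hyz hnxz hnxw (fun h => hbx h.symm) hnyw hyb hnzw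
      (fun h => hbz h.symm) (fun h => hcon.1 h.symm)
      hxz hwx.symm hbnx.symm hwy.symm hbny.symm hwz.symm hbnz.symm (Ne.symm hcon.2)
  rcases hclsa with haw | haw <;> rcases hclsb with hbw | hbw
  · exact stmt5aux_p3_2p1_embed h2 haw hbw.symm hnab hax haz
      (fun h => hnxw h.symm) (fun h => hnzw h.symm) hbx hbz hnxz
      hab hanx hanz hwx hwz hbnx hbnz hxz
  · exact hnab (hbw ▸ haw)
  · exact hnab ((haw ▸ hbw).symm)
  · exact hab (haw.trans hbw.symm)
end

section
/- Every connected (claw, 2P_2 + P_1)-free graph has a Gallai vertex, i.e. a vertex belonging to every longest path. -/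
open SimpleGraph

set_option linter.unusedSectionVars false

section GallaiWork

variable {V : Type} [Fintype V] {G : SimpleGraph V}

/-- A path presented as a function on an initial segment of `ℕ`. -/
def IsPathFun (G : SimpleGraph V) (m : ℕ) (f : ℕ → V) : Prop :=
  (∀ i, i < m → ∀ j, j < m → f i = f j → i = j) ∧
  (∀ i, i + 1 < m → G.Adj (f i) (f (i + 1)))

lemma exists_walk_of_chain :
    ∀ (l : List V) (h : l ≠ []), l.IsChain G.Adj → ∃ (y : V) (p : G.Walk (l.head h) y), p.support = l := by
  intro l
  induction l with
  | nil => simp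
  | cons a t ih =>
    intro _ hc
    cases t with
    | nil => exact ⟨a, Walk.nil, rfl⟩
    | cons b t' =>
      rw [List.isChain_cons_cons] at hc
      obtain ⟨y, p, hp⟩ := ih (by simp) hc.2
      exact ⟨y, Walk.cons hc.1 p, by change a :: p.support = _; rw [hp]⟩

/-- From a path-function, get a genuine path (as a walk). -/
lemma exists_walk_of_pathFun {m : ℕ} {f : ℕ → V} (hm : 0 < m) (hf : IsPathFun G m f) :
    ∃ (x y : V) (p : G.Walk x y), p.IsPath ∧ p.length + 1 = m := by
  classical
  set l : List V := List.ofFn (fun i : Fin m => f i) with hl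
  have hlen : l.length = m := by simp [hl]
  have hne : l ≠ [] := by
    intro h; rw [h] at hlen; simp at hlen; omega
  have hchain : l.IsChain G.Adj := by
    rw [hl, List.isChain_ofFn]
    intro i hi
    exact hf.2 i (by simpa using hi)
  have hnodup : l.Nodup := by
    rw [hl]
    rw [List.nodup_ofFn]
    intro i j hij
    exact Fin.ext (hf.1 i i.2 j j.2 hij)
  obtain ⟨y, p, hp⟩ := exists_walk_of_chain l hne hchain
  refine ⟨_, y, p, ?_, ?_⟩
  · rw [Walk.isPath_def, hp]; exact hnodup
  · have := p.length_support
    rw [hp, hlen] at this; omega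

/-- From a path (walk), get a path-function given by its support. -/
lemma pathFun_of_walk {x y : V} [Inhabited V] (p : G.Walk x y) (hp : p.IsPath) :
    IsPathFun G (p.length + 1) (fun i => p.support.getD i default) := by
  have hlen : p.support.length = p.length + 1 := p.length_support
  have hnd : p.support.Nodup := (Walk.isPath_def p).1 hp
  constructor
  · intro i hi j hj hij
    simp only at hij
    have h1 : i < p.support.length := by omega
    have h2 : j < p.support.length := by omega
    rw [List.getD_eq_getElem p.support default h1, List.getD_eq_getElem p.support default h2] at hij
    exact (List.Nodup.getElem_inj_iff hnd).1 hij
  · intro i hi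
    have hc := p.isChain_adj_support
    rw [List.isChain_iff_getElem] at hc
    have h1 : i < p.support.length := by omega
    have h2 : i + 1 < p.support.length := by omega
    have := hc i (by omega)
    simp only
    rw [List.getD_eq_getElem p.support default h1, List.getD_eq_getElem p.support default h2]
    simpa [List.get_eq_getElem] using this

namespace GallaiAux
variable {V : Type} [Fintype V] {G : SimpleGraph V}


lemma claw_config (h1 : _root_.Free claw G) {c a b d : V}
    (hca : G.Adj c a) (hcb : G.Adj c b) (hcd : G.Adj c d)
    (hab : ¬ G.Adj a b) (had : ¬ G.Adj a d) (hbd : ¬ G.Adj b d)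
    (nab : a ≠ b) (nad : a ≠ d) (nbd : b ≠ d) : False := by
  refine h1.elim ?_
  have nca : c ≠ a := hca.ne
  have ncb : c ≠ b := hcb.ne
  have ncd : c ≠ d := hcd.ne
  refine ⟨⟨fun x => Sum.elim (fun _ => c) (fun j => ![a, b, d] j) x, ?_⟩, ?_⟩
  · rintro (i | i) (j | j) hij
    · simp [Subsingleton.elim i j]
    · fin_cases j <;> simp_all
    · fin_cases i <;> simp_all
    · fin_cases i <;> fin_cases j <;> simp_all
  · rintro (i | i) (j | j) <;>
      simp only [claw, completeBipartiteGraph, Sum.elim_inl, Sum.elim_inr, completeBipartiteGraph_adj] <;>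
      constructor <;> intro h
    · exact absurd h (G.loopless.irrefl c)
    · simp at h
    · simp
    · fin_cases j <;> simpa using ‹_›
    · simp
    · fin_cases i <;> simp <;> [exact hca.symm; exact hcb.symm; exact hcd.symm]
    · change G.Adj (![a, b, d] i) (![a, b, d] j) at h
      fin_cases i <;> fin_cases j <;> simp_all [G.adj_comm]
    · simp at h

lemma twoP2P1_adj_iff (x y : Fin 5) :
    twoP2_P1.Adj x y ↔ ((x = 0 ∧ y = 1) ∨ (x = 1 ∧ y = 0) ∨ (x = 2 ∧ y = 3) ∨ (x = 3 ∧ y = 2)) := by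
  fin_cases x <;> fin_cases y <;> simp [twoP2_P1, fromEdgeSet_adj, Sym2.eq_iff] <;> decide

lemma twoP2P1_config (h2 : _root_.Free twoP2_P1 G) {a b c d e : V}
    (hab : G.Adj a b) (hcd : G.Adj c d)
    (hac : ¬ G.Adj a c) (had : ¬ G.Adj a d) (hbc : ¬ G.Adj b c) (hbd : ¬ G.Adj b d)
    (hae : ¬ G.Adj a e) (hbe : ¬ G.Adj b e) (hce : ¬ G.Adj c e) (hde : ¬ G.Adj d e)
    (nac : a ≠ c) (nad : a ≠ d) (nae : a ≠ e) (nbc : b ≠ c) (nbd : b ≠ d) (nbe : b ≠ e)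
    (nce : c ≠ e) (nde : d ≠ e) : False := by
  refine h2.elim ?_
  have nab : a ≠ b := hab.ne
  have ncd : c ≠ d := hcd.ne
  refine ⟨⟨fun x => ![a, b, c, d, e] x, ?_⟩, ?_⟩
  · intro i j hij
    fin_cases i <;> fin_cases j <;> simp_all
  · intro i j
    show G.Adj (![a, b, c, d, e] i) (![a, b, c, d, e] j) ↔ twoP2_P1.Adj i j
    rw [twoP2P1_adj_iff]
    fin_cases i <;> fin_cases j <;>
      simp_all [G.adj_comm] <;> omega

section Core


variable {k : ℕ} {f : ℕ → V} {w : V}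

/-- `w` does not occur among the first `k` values of `f`. -/
def FreshFor (k : ℕ) (f : ℕ → V) (w : V) : Prop := ∀ i, i < k → f i ≠ w

lemma rev_pathFun (hf : IsPathFun G k f) : IsPathFun G k (fun i => f (k - 1 - i)) := by
  constructor
  · intro i hi j hj hij
    have := hf.1 (k-1-i) (by omega) (k-1-j) (by omega) hij
    omega
  · intro i hi
    have e1 : k - 1 - i = (k - 2 - i) + 1 := by omega
    have e2 : k - 1 - (i+1) = k - 2 - i := by omega
    simp only [e1, e2]
    exact (hf.2 (k-2-i) (by omega)).symm

lemma rev_fresh (hw : FreshFor k f w) : FreshFor k (fun i => f (k - 1 - i)) w := by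
  intro i hi
  exact hw (k-1-i) (by omega)

/-- L1: an outside vertex is not adjacent to the first vertex of a longest path. -/
lemma L1 (hmax : ∀ (m : ℕ) (g : ℕ → V), IsPathFun G m g → m ≤ k)
    (hf : IsPathFun G k f) (hw : FreshFor k f w) (ha : G.Adj w (f 0)) : False := by
  have : IsPathFun G (k+1) (fun i => if i = 0 then w else f (i-1)) := by
    constructor
    · intro i hi j hj hij
      simp only at hij
      split_ifs at hij with h1 h2 h2
      · omega
      · exact absurd hij.symm (hw (j-1) (by omega))
      · exact absurd hij (hw (i-1) (by omega))
      · have := hf.1 (i-1) (by omega) (j-1) (by omega) hij; omega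
    · intro i hi
      simp only
      by_cases h1 : i = 0
      · subst h1; simpa using ha
      · rw [if_neg h1, if_neg (by omega : ¬ i + 1 = 0)]
        have e : i + 1 - 1 = (i - 1) + 1 := by omega
        rw [e]
        exact hf.2 (i-1) (by omega)
  have := hmax (k+1) _ this
  omega

/-- L2: an outside vertex is not adjacent to two consecutive vertices of a longest path. -/
lemma L2 (hmax : ∀ (m : ℕ) (g : ℕ → V), IsPathFun G m g → m ≤ k)
    (hf : IsPathFun G k f) (hw : FreshFor k f w) {m : ℕ} (hm : m + 1 < k)
    (ha : G.Adj w (f m)) (hb : G.Adj w (f (m+1))) : False := by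
  have : IsPathFun G (k+1) (fun i => if i ≤ m then f i else if i = m + 1 then w else f (i-1)) := by
    constructor
    · intro i hi j hj hij
      simp only at hij
      split_ifs at hij with h1 h2 h2 h3 h4 h4
      · exact hf.1 i (by omega) j (by omega) hij
      · exact absurd hij (hw i (by omega))
      · have := hf.1 i (by omega) (j-1) (by omega) hij; omega
      · exact absurd hij.symm (hw j (by omega))
      · omega
      · exact absurd hij.symm (hw (j-1) (by omega))
      · have := hf.1 (i-1) (by omega) j (by omega) hij; omega
      · exact absurd hij (hw (i-1) (by omega))
      · have := hf.1 (i-1) (by omega) (j-1) (by omega) hij; omega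
    · intro i hi
      simp only
      by_cases h1 : i ≤ m
      · by_cases h2 : i + 1 ≤ m
        · rw [if_pos h1, if_pos h2]; exact hf.2 i (by omega)
        · have e : i = m := by omega
          rw [if_pos h1, if_neg h2, if_pos (by omega : i + 1 = m + 1), e]
          exact ha.symm
      · by_cases h3 : i = m + 1
        · rw [if_neg h1, if_pos h3, if_neg (by omega : ¬ i + 1 ≤ m),
            if_neg (by omega : ¬ i + 1 = m + 1)]
          have e : i + 1 - 1 = m + 1 := by omega
          rw [e]; exact hb
        · rw [if_neg h1, if_neg h3, if_neg (by omega : ¬ i + 1 ≤ m),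
            if_neg (by omega : ¬ i + 1 = m + 1)]
          have e : i + 1 - 1 = (i - 1) + 1 := by omega
          rw [e]; exact hf.2 (i-1) (by omega)
  have := hmax (k+1) _ this
  omega


/-- L9 (general): if `w` is outside, `w ~ f m`, and `f m ~ f 0`, contradiction. -/
lemma L9 (hmax : ∀ (m : ℕ) (g : ℕ → V), IsPathFun G m g → m ≤ k)
    (h1claw : _root_.Free claw G)
    (hf : IsPathFun G k f) (hw : FreshFor k f w) {m : ℕ} (hm1 : 1 ≤ m) (hmk : m + 2 ≤ k)
    (ha : G.Adj w (f m)) (h0 : G.Adj (f m) (f 0)) : False := by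
  have hwm1 : ¬ G.Adj w (f (m-1)) := by
    intro hcon
    refine L2 hmax hf hw (m := m-1) (by omega) hcon ?_
    rw [(by omega : m - 1 + 1 = m)]; exact ha
  have hwm2 : ¬ G.Adj w (f (m+1)) := fun hcon => L2 hmax hf hw (by omega) ha hcon
  have chord : G.Adj (f (m-1)) (f (m+1)) := by
    by_contra hch
    have hfm : G.Adj (f m) (f (m-1)) := by
      have := hf.2 (m-1) (by omega)
      rw [(by omega : m - 1 + 1 = m)] at this
      exact this.symm
    refine claw_config h1claw ha.symm hfm (hf.2 m (by omega)) hwm1 hwm2 hch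
      (Ne.symm (hw (m-1) (by omega))) (Ne.symm (hw (m+1) (by omega))) ?_
    intro h
    have := hf.1 (m-1) (by omega) (m+1) (by omega) h
    omega
  have : IsPathFun G (k+1)
      (fun i => if i = 0 then w else if i = 1 then f m else if i ≤ m + 1 then f (i-2) else f (i-1)) := by
    constructor
    · intro i hi j hj hij
      simp only at hij
      split_ifs at hij <;>
        first
          | omega
          | (exact absurd hij (hw _ (by omega)))
          | (exact absurd hij.symm (hw _ (by omega)))
          | (have := hf.1 _ (by omega) _ (by omega) hij; omega)
    · intro i hi
      simp only
      by_cases e0 : i = 0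
      · subst e0
        rw [if_pos rfl, if_neg (by omega : ¬ (0:ℕ) + 1 = 0), if_pos rfl]
        exact ha
      · by_cases e1 : i = 1
        · subst e1
          rw [if_neg (by omega : ¬ (1:ℕ) = 0), if_pos rfl, if_neg (by omega : ¬ (1:ℕ)+1 = 0),
            if_neg (by omega : ¬ (1:ℕ)+1 = 1), if_pos (by omega : (1:ℕ)+1 ≤ m+1)]
          exact h0
        · by_cases e2 : i + 1 ≤ m + 1
          · rw [if_neg e0, if_neg e1, if_pos (by omega), if_neg (by omega : ¬ i + 1 = 0),
              if_neg (by omega : ¬ i + 1 = 1), if_pos e2,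
              (by omega : i + 1 - 2 = (i - 2) + 1)]
            exact hf.2 (i-2) (by omega)
          · by_cases e3 : i = m + 1
            · rw [if_neg e0, if_neg e1, if_pos (by omega : i ≤ m + 1), if_neg (by omega : ¬ i + 1 = 0),
                if_neg (by omega : ¬ i + 1 = 1), if_neg e2,
                (by omega : i - 2 = m - 1), (by omega : i + 1 - 1 = m + 1)]
              exact chord
            · rw [if_neg e0, if_neg e1, if_neg (by omega : ¬ i ≤ m + 1), if_neg (by omega : ¬ i + 1 = 0),
                if_neg (by omega : ¬ i + 1 = 1), if_neg e2,
                (by omega : i + 1 - 1 = (i - 1) + 1)]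
              exact hf.2 (i-1) (by omega)
  exact absurd (hmax _ _ this) (by omega)

/-- L4: an outside vertex is not adjacent to the second vertex of a longest path. -/
lemma L4 (hmax : ∀ (m : ℕ) (g : ℕ → V), IsPathFun G m g → m ≤ k)
    (h1claw : _root_.Free claw G)
    (hf : IsPathFun G k f) (hw : FreshFor k f w) (hk : 1 < k) (ha : G.Adj w (f 1)) : False := by
  rcases eq_or_lt_of_le (Nat.succ_le_of_lt hk) with h | h
  · refine L1 hmax (rev_pathFun hf) (rev_fresh hw) ?_
    simpa [(by omega : k - 1 - 0 = 1)] using ha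
  · exact L9 hmax h1claw hf hw (le_refl 1) (by omega) ha (hf.2 0 (by omega)).symm

/-- L1 mirrored. -/
lemma L1' (hmax : ∀ (m : ℕ) (g : ℕ → V), IsPathFun G m g → m ≤ k)
    (hf : IsPathFun G k f) (hw : FreshFor k f w) (ha : G.Adj w (f (k-1))) : False := by
  refine L1 hmax (rev_pathFun hf) (rev_fresh hw) ?_
  simpa using ha

/-- L4 mirrored. -/
lemma L4' (hmax : ∀ (m : ℕ) (g : ℕ → V), IsPathFun G m g → m ≤ k)
    (h1claw : _root_.Free claw G)
    (hf : IsPathFun G k f) (hw : FreshFor k f w) (hk : 1 < k) (ha : G.Adj w (f (k-2))) : False := by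
  refine L4 hmax h1claw (rev_pathFun hf) (rev_fresh hw) hk ?_
  simpa [(by omega : k - 1 - 1 = k - 2)] using ha

/-- L9 mirrored. -/
lemma L9' (hmax : ∀ (m : ℕ) (g : ℕ → V), IsPathFun G m g → m ≤ k)
    (h1claw : _root_.Free claw G)
    (hf : IsPathFun G k f) (hw : FreshFor k f w) {m : ℕ} (hm1 : 1 ≤ m) (hmk : m + 2 ≤ k)
    (ha : G.Adj w (f m)) (h0 : G.Adj (f m) (f (k-1))) : False := by
  refine L9 hmax h1claw (rev_pathFun hf) (rev_fresh hw) (m := k - 1 - m)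
    (by omega) (by omega) ?_ ?_
  · simpa [(by omega : k - 1 - (k - 1 - m) = m)] using ha
  · simpa [(by omega : k - 1 - (k - 1 - m) = m)] using h0


lemma cross_edge {S : Set V} : ∀ {a b : V} (p : G.Walk a b), a ∉ S → b ∈ S →
    ∃ w y, w ∉ S ∧ y ∈ S ∧ G.Adj w y := by
  intro a b p
  induction p with
  | nil => intro h1 h2; exact absurd h2 h1
  | @cons u v' b h q ih =>
    intro h1 h2
    by_cases hv : v' ∈ S
    · exact ⟨u, v', h1, hv, h⟩
    · exact ih hv h2

/-- Attachment: some outside vertex is adjacent to `f m` with `2 ≤ m ≤ k-3`. -/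
lemma attach (hG : G.Connected) (hkn : k < Fintype.card V)
    (hmax : ∀ (m : ℕ) (g : ℕ → V), IsPathFun G m g → m ≤ k)
    (h1claw : _root_.Free claw G)
    (hf : IsPathFun G k f) :
    ∃ (w : V) (m : ℕ), FreshFor k f w ∧ 2 ≤ m ∧ m + 3 ≤ k ∧ G.Adj w (f m) := by
  have hne : Nonempty V := hG.nonempty
  have hk1 : 1 ≤ k := by
    refine hmax 1 (fun _ => Classical.arbitrary V) ⟨?_, ?_⟩
    · intro i hi j hj _; omega
    · intro i hi; omega
  set S : Set V := {v | ∃ i, i < k ∧ f i = v} with hS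
  have hu : ∃ u, u ∉ S := by
    by_contra hcon
    push_neg at hcon
    have hsurj : Function.Surjective (fun i : Fin k => f i) := by
      intro v
      obtain ⟨i, hi, hfi⟩ := hcon v
      exact ⟨⟨i, hi⟩, hfi⟩
    have := Fintype.card_le_of_surjective _ hsurj
    simp at this
    omega
  obtain ⟨u, hu⟩ := hu
  have hf0 : f 0 ∈ S := ⟨0, by omega, rfl⟩
  obtain ⟨p⟩ := hG.preconnected u (f 0)
  obtain ⟨w, y, hwS, hyS, hadj⟩ := cross_edge p hu hf0
  obtain ⟨m, hm, rfl⟩ := hyS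
  have hw : FreshFor k f w := by
    intro i hi hcon
    exact hwS ⟨i, hi, hcon⟩
  have h0 : m ≠ 0 := by
    rintro rfl
    exact L1 hmax hf hw hadj
  have hk2 : 2 ≤ k := by omega
  have hlast : m ≠ k - 1 := by
    rintro rfl
    exact L1' hmax hf hw hadj
  have h1 : m ≠ 1 := by
    rintro rfl
    exact L4 hmax h1claw hf hw (by omega) hadj
  have hk4 : 4 ≤ k := by omega
  have hlast2 : m ≠ k - 2 := by
    rintro rfl
    exact L4' hmax h1claw hf hw (by omega) hadj
  exact ⟨w, m, hw, by omega, by omega, hadj⟩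

/-- L6: the two ends of a longest path are nonadjacent. -/
lemma L6 (hG : G.Connected) (hkn : k < Fintype.card V)
    (hmax : ∀ (m : ℕ) (g : ℕ → V), IsPathFun G m g → m ≤ k)
    (h1claw : _root_.Free claw G)
    (hf : IsPathFun G k f) (hadj : G.Adj (f 0) (f (k-1))) : False := by
  obtain ⟨w, m, hw, hm2, hm3, ha⟩ := attach hG hkn hmax h1claw hf
  have : IsPathFun G (k+1)
      (fun i => if i = 0 then w else if i ≤ m + 1 then f (m+1-i) else f (k+m+1-i)) := by
    constructor
    · intro i hi j hj hij
      simp only at hij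
      split_ifs at hij <;>
        first
          | omega
          | (exact absurd hij (hw _ (by omega)))
          | (exact absurd hij.symm (hw _ (by omega)))
          | (have := hf.1 _ (by omega) _ (by omega) hij; omega)
    · intro i hi
      simp only
      by_cases e0 : i = 0
      · subst e0
        rw [if_pos rfl, if_neg (by omega : ¬ (0:ℕ) + 1 = 0), if_pos (by omega : (0:ℕ)+1 ≤ m+1),
          (by omega : m + 1 - (0 + 1) = m)]
        exact ha
      · by_cases e1 : i + 1 ≤ m + 1
        · rw [if_neg e0, if_pos (by omega : i ≤ m + 1), if_neg (by omega : ¬ i + 1 = 0), if_pos e1,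
            (by omega : m + 1 - i = (m + 1 - (i+1)) + 1)]
          exact (hf.2 (m + 1 - (i+1)) (by omega)).symm
        · by_cases e2 : i = m + 1
          · rw [if_neg e0, if_pos (by omega : i ≤ m + 1), if_neg (by omega : ¬ i + 1 = 0), if_neg e1,
              (by omega : m + 1 - i = 0), (by omega : k + m + 1 - (i+1) = k - 1)]
            exact hadj
          · rw [if_neg e0, if_neg (by omega : ¬ i ≤ m + 1), if_neg (by omega : ¬ i + 1 = 0), if_neg e1,
              (by omega : k + m + 1 - i = (k + m + 1 - (i+1)) + 1)]
            exact (hf.2 (k + m + 1 - (i+1)) (by omega)).symm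
  exact absurd (hmax _ _ this) (by omega)


/-- L11: the second vertex of a longest path is not adjacent to the last. -/
lemma L11 (hG : G.Connected) (hkn : k < Fintype.card V)
    (hmax : ∀ (m : ℕ) (g : ℕ → V), IsPathFun G m g → m ≤ k)
    (h1claw : _root_.Free claw G) (h2free : _root_.Free twoP2_P1 G)
    (hf : IsPathFun G k f) (hadj : G.Adj (f 1) (f (k-1))) : False := by
  obtain ⟨w, α, hw, hα2, hα3, hwa⟩ := attach hG hkn hmax h1claw hf
  have hk5 : 5 ≤ k := by omega
  have h02 : ¬ G.Adj (f 0) (f (k-1)) := fun h => L6 hG hkn hmax h1claw hf h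
  by_cases hS : G.Adj (f 0) (f 2)
  · set Sf : ℕ → V := fun i => if i = 0 then f 1 else if i = 1 then f 0 else f i with hSdef
    have hS0 : Sf 0 = f 1 := by simp [hSdef]
    have hSlast : Sf (k-1) = f (k-1) := by
      simp only [hSdef]
      rw [if_neg (by omega : ¬ k - 1 = 0), if_neg (by omega : ¬ k - 1 = 1)]
    have hSfun : IsPathFun G k Sf := by
      simp only [hSdef]
      constructor
      · intro i hi j hj hij
        simp only at hij
        split_ifs at hij <;>
          first
            | omega
            | (have := hf.1 _ (by omega) _ (by omega) hij; omega)
      · intro i hi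
        simp only
        by_cases e0 : i = 0
        · subst e0; simpa using (hf.2 0 (by omega)).symm
        · by_cases e1 : i = 1
          · subst e1
            rw [if_neg (by omega : ¬ (1:ℕ) = 0), if_pos rfl, if_neg (by omega : ¬ (1:ℕ) + 1 = 0),
              if_neg (by omega : ¬ (1:ℕ) + 1 = 1)]
            exact hS
          · rw [if_neg e0, if_neg e1, if_neg (by omega : ¬ i + 1 = 0), if_neg (by omega : ¬ i + 1 = 1)]
            exact hf.2 i (by omega)
    refine L6 hG hkn hmax h1claw hSfun ?_
    rw [hS0, hSlast]
    exact hadj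
  · have h2k : G.Adj (f 2) (f (k-1)) := by
      by_contra hcon
      refine claw_config h1claw (c := f 1) (a := f 0) (b := f 2) (d := f (k-1))
        (hf.2 0 (by omega)).symm (hf.2 1 (by omega)) hadj hS h02 hcon ?_ ?_ ?_ <;>
        (intro h; have := hf.1 _ (by omega) _ (by omega) h; omega)
    set Y : ℕ → V := fun i => if i ≤ k - 4 then f (k-2-i) else if i = k - 3 then f (k-1)
      else if i = k - 2 then f 1 else f 0 with hYdef
    have hYval : ∀ i, i ≤ k - 4 → Y i = f (k-2-i) := by
      intro i hi; simp only [hYdef, if_pos hi]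
    have hY : IsPathFun G k Y := by
      constructor
      · intro i hi j hj hij
        simp only [hYdef] at hij
        split_ifs at hij <;>
          first
            | omega
            | (have := hf.1 _ (by omega) _ (by omega) hij; omega)
      · intro i hi
        simp only [hYdef]
        by_cases e0 : i + 1 ≤ k - 4
        · rw [if_pos (by omega : i ≤ k - 4), if_pos e0,
            (by omega : k - 2 - i = (k - 2 - (i+1)) + 1)]
          exact (hf.2 (k - 2 - (i+1)) (by omega)).symm
        · by_cases e1 : i + 1 = k - 3
          · rw [if_pos (by omega : i ≤ k - 4), if_neg e0, if_pos e1,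
              (by omega : k - 2 - i = 2)]
            exact h2k
          · by_cases e2 : i + 1 = k - 2
            · rw [if_neg (by omega : ¬ i ≤ k - 4), if_pos (by omega : i = k - 3), if_neg e0,
                if_neg e1, if_pos e2]
              exact hadj.symm
            · rw [if_neg (by omega : ¬ i ≤ k - 4), if_neg (by omega : ¬ i = k - 3),
                if_pos (by omega : i = k - 2), if_neg e0, if_neg e1, if_neg e2]
              exact (hf.2 0 (by omega)).symm
    have hwY : FreshFor k Y w := by
      intro i hi
      simp only [hYdef]
      split_ifs <;> exact hw _ (by omega)
    by_cases hαk3 : α = k - 3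
    · refine L4 hmax h1claw hY hwY (by omega) ?_
      have : Y 1 = f (k - 3) := by rw [hYval 1 (by omega), (by omega : k - 2 - 1 = k - 3)]
      rw [this, ← hαk3]
      exact hwa
    · have hbα : ¬ G.Adj (f α) (f (k-2)) := by
        intro hcon
        refine L9 hmax h1claw hY hwY (m := k - 2 - α) (by omega) (by omega) ?_ ?_
        · rw [hYval (k-2-α) (by omega), (by omega : k - 2 - (k - 2 - α) = α)]
          exact hwa
        · rw [hYval (k-2-α) (by omega), (by omega : k - 2 - (k - 2 - α) = α),
            hYval 0 (by omega), (by omega : k - 2 - 0 = k - 2)]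
          exact hcon
      have hY6 : ¬ G.Adj (f (k-2)) (f 0) := by
        intro hcon
        refine L6 hG hkn hmax h1claw hY ?_
        rw [hYval 0 (by omega), (by omega : k - 2 - 0 = k - 2)]
        have : Y (k-1) = f 0 := by
          simp only [hYdef]
          rw [if_neg (by omega : ¬ k - 1 ≤ k - 4), if_neg (by omega : ¬ k - 1 = k - 3),
            if_neg (by omega : ¬ k - 1 = k - 2)]
        rw [this]
        exact hcon
      have hlastedge : G.Adj (f (k-1)) (f (k-2)) := by
        have := hf.2 (k-2) (by omega)
        rw [(by omega : k - 2 + 1 = k - 1)] at this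
        exact this.symm
      refine twoP2P1_config h2free (a := f (k-1)) (b := f (k-2)) (c := w) (d := f α) (e := f 0)
        hlastedge hwa
        (fun h => L1' hmax hf hw h.symm)
        (fun h => L9' hmax h1claw hf hw (m := α) (by omega) (by omega) hwa h.symm)
        (fun h => L4' hmax h1claw hf hw (by omega) h.symm)
        (fun h => hbα h.symm)
        (fun h => h02 h.symm)
        hY6
        (fun h => L1 hmax hf hw h)
        (fun h => L9 hmax h1claw hf hw (by omega) (by omega) hwa h)
        ?_ ?_ ?_ ?_ ?_ ?_ ?_ ?_
      · exact hw (k-1) (by omega)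
      · intro h; have := hf.1 _ (by omega) _ (by omega) h; omega
      · intro h; have := hf.1 _ (by omega) _ (by omega) h; omega
      · exact hw (k-2) (by omega)
      · intro h; have := hf.1 _ (by omega) _ (by omega) h; omega
      · intro h; have := hf.1 _ (by omega) _ (by omega) h; omega
      · exact Ne.symm (hw 0 (by omega))
      · intro h; have := hf.1 _ (by omega) _ (by omega) h; omega

/-- L7: two outside vertices are nonadjacent. -/
lemma L7 (hG : G.Connected) (hkn : k < Fintype.card V)
    (hmax : ∀ (m : ℕ) (g : ℕ → V), IsPathFun G m g → m ≤ k)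
    (h1claw : _root_.Free claw G) (h2free : _root_.Free twoP2_P1 G)
    (hf : IsPathFun G k f) {w x : V} (hw : FreshFor k f w) (hx : FreshFor k f x)
    (hadj : G.Adj w x) : False := by
  obtain ⟨w', α, hw', hα2, hα3, _⟩ := attach hG hkn hmax h1claw hf
  have hk5 : 5 ≤ k := by omega
  refine twoP2P1_config h2free (a := w) (b := x) (c := f 0) (d := f 1) (e := f (k-1))
    hadj (hf.2 0 (by omega))
    (fun h => L1 hmax hf hw h)
    (fun h => L4 hmax h1claw hf hw (by omega) h)
    (fun h => L1 hmax hf hx h)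
    (fun h => L4 hmax h1claw hf hx (by omega) h)
    (fun h => L1' hmax hf hw h)
    (fun h => L1' hmax hf hx h)
    (fun h => L6 hG hkn hmax h1claw hf h)
    (fun h => L11 hG hkn hmax h1claw h2free hf h)
    ?_ ?_ ?_ ?_ ?_ ?_ ?_ ?_
  · exact Ne.symm (hw 0 (by omega))
  · exact Ne.symm (hw 1 (by omega))
  · exact Ne.symm (hw (k-1) (by omega))
  · exact Ne.symm (hx 0 (by omega))
  · exact Ne.symm (hx 1 (by omega))
  · exact Ne.symm (hx (k-1) (by omega))
  · intro h; have := hf.1 _ (by omega) _ (by omega) h; omega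
  · intro h; have := hf.1 _ (by omega) _ (by omega) h; omega


/-- L8: no outside vertex has two neighbours on a longest path. -/
lemma L8 (hG : G.Connected) (hkn : k < Fintype.card V)
    (hmax : ∀ (m : ℕ) (g : ℕ → V), IsPathFun G m g → m ≤ k)
    (h1claw : _root_.Free claw G) (h2free : _root_.Free twoP2_P1 G)
    (hf : IsPathFun G k f) {v : V} (hv : FreshFor k f v) {a b : ℕ}
    (hab : a < b) (hbk : b < k) (h1a : G.Adj v (f a)) (h1b : G.Adj v (f b)) : False := by
  have ha0 : a ≠ 0 := by rintro rfl; exact L1 hmax hf hv h1a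
  have hb1 : b ≠ k - 1 := by
    rintro rfl; exact L1' hmax hf hv h1b
  have hk2 : 1 < k := by omega
  have ha1 : a ≠ 1 := by rintro rfl; exact L4 hmax h1claw hf hv hk2 h1a
  have hb2 : b ≠ k - 2 := by
    rintro rfl; exact L4' hmax h1claw hf hv hk2 h1b
  have hba : b ≠ a + 1 := by
    rintro rfl; exact L2 hmax hf hv (by omega) h1a h1b
  have ha2 : 2 ≤ a := by omega
  have hab2 : a + 2 ≤ b := by omega
  have hbk3 : b + 3 ≤ k := by omega
  have hE1 : G.Adj (f 1) (f a) := by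
    by_contra hE1
    refine twoP2P1_config h2free (a := f 0) (b := f 1) (c := v) (d := f a) (e := f (k-1))
      (hf.2 0 (by omega)) h1a
      (fun h => L1 hmax hf hv h.symm)
      (fun h => L9 hmax h1claw hf hv (m := a) (by omega) (by omega) h1a h.symm)
      (fun h => L4 hmax h1claw hf hv hk2 h.symm)
      (fun h => hE1 h)
      (fun h => L6 hG hkn hmax h1claw hf h)
      (fun h => L11 hG hkn hmax h1claw h2free hf h)
      (fun h => L1' hmax hf hv h)
      (fun h => L9' hmax h1claw hf hv (m := a) (by omega) (by omega) h1a h)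
      ?_ ?_ ?_ ?_ ?_ ?_ ?_ ?_
    · exact hv 0 (by omega)
    · intro h; have := hf.1 _ (by omega) _ (by omega) h; omega
    · intro h; have := hf.1 _ (by omega) _ (by omega) h; omega
    · exact hv 1 (by omega)
    · intro h; have := hf.1 _ (by omega) _ (by omega) h; omega
    · intro h; have := hf.1 _ (by omega) _ (by omega) h; omega
    · exact Ne.symm (hv (k-1) (by omega))
    · intro h; have := hf.1 _ (by omega) _ (by omega) h; omega
  have hE2 : G.Adj (f 1) (f b) := by
    by_contra hE2
    refine twoP2P1_config h2free (a := f 0) (b := f 1) (c := v) (d := f b) (e := f (k-1))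
      (hf.2 0 (by omega)) h1b
      (fun h => L1 hmax hf hv h.symm)
      (fun h => L9 hmax h1claw hf hv (m := b) (by omega) (by omega) h1b h.symm)
      (fun h => L4 hmax h1claw hf hv hk2 h.symm)
      (fun h => hE2 h)
      (fun h => L6 hG hkn hmax h1claw hf h)
      (fun h => L11 hG hkn hmax h1claw h2free hf h)
      (fun h => L1' hmax hf hv h)
      (fun h => L9' hmax h1claw hf hv (m := b) (by omega) (by omega) h1b h)
      ?_ ?_ ?_ ?_ ?_ ?_ ?_ ?_
    · exact hv 0 (by omega)
    · intro h; have := hf.1 _ (by omega) _ (by omega) h; omega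
    · intro h; have := hf.1 _ (by omega) _ (by omega) h; omega
    · exact hv 1 (by omega)
    · intro h; have := hf.1 _ (by omega) _ (by omega) h; omega
    · intro h; have := hf.1 _ (by omega) _ (by omega) h; omega
    · exact Ne.symm (hv (k-1) (by omega))
    · intro h; have := hf.1 _ (by omega) _ (by omega) h; omega
  have rot : ∀ c : ℕ, 2 ≤ c → c + 3 ≤ k → G.Adj v (f c) → ¬ G.Adj (f 0) (f (c+1)) := by
    intro c hc2 hc3 hvc hcon
    set Rf : ℕ → V := fun i => if i ≤ c then f (c - i) else f i with hRdef
    have hR : IsPathFun G k Rf := by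
      simp only [hRdef]
      constructor
      · intro i hi j hj hij
        simp only at hij
        split_ifs at hij <;>
          first
            | omega
            | (have := hf.1 _ (by omega) _ (by omega) hij; omega)
      · intro i hi
        simp only
        by_cases e0 : i + 1 ≤ c
        · rw [if_pos (by omega : i ≤ c), if_pos e0, (by omega : c - i = (c - (i+1)) + 1)]
          exact (hf.2 (c - (i+1)) (by omega)).symm
        · by_cases e1 : i = c
          · rw [if_pos (by omega : i ≤ c), if_neg e0, (by omega : c - i = 0), e1]
            exact hcon
          · rw [if_neg (by omega : ¬ i ≤ c), if_neg e0]
            exact hf.2 i (by omega)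
    have hvR : FreshFor k Rf v := by
      intro i hi
      simp only [hRdef]
      split_ifs <;> exact hv _ (by omega)
    refine L1 hmax hR hvR ?_
    have : Rf 0 = f c := by simp [hRdef]
    rw [this]
    exact hvc
  have hN1 : ¬ G.Adj (f 0) (f (a+1)) := rot a (by omega) (by omega) h1a
  have hN2 : ¬ G.Adj (f 0) (f (b+1)) := rot b (by omega) (by omega) h1b
  have hE3 : G.Adj (f 1) (f (a+1)) := by
    by_contra hcon
    refine claw_config h1claw (c := f a) (a := v) (b := f 1) (d := f (a+1))
      h1a.symm hE1.symm (hf.2 a (by omega))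
      (fun h => L4 hmax h1claw hf hv hk2 h)
      (fun h => L2 hmax hf hv (by omega) h1a h)
      hcon ?_ ?_ ?_
    · exact Ne.symm (hv 1 (by omega))
    · exact Ne.symm (hv (a+1) (by omega))
    · intro h; have := hf.1 _ (by omega) _ (by omega) h; omega
  have hE4 : G.Adj (f 1) (f (b+1)) := by
    by_contra hcon
    refine claw_config h1claw (c := f b) (a := v) (b := f 1) (d := f (b+1))
      h1b.symm hE2.symm (hf.2 b (by omega))
      (fun h => L4 hmax h1claw hf hv hk2 h)
      (fun h => L2 hmax hf hv (by omega) h1b h)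
      hcon ?_ ?_ ?_
    · exact Ne.symm (hv 1 (by omega))
    · exact Ne.symm (hv (b+1) (by omega))
    · intro h; have := hf.1 _ (by omega) _ (by omega) h; omega
  have hE5 : G.Adj (f (a+1)) (f (b+1)) := by
    by_contra hcon
    refine claw_config h1claw (c := f 1) (a := f 0) (b := f (a+1)) (d := f (b+1))
      (hf.2 0 (by omega)).symm hE3 hE4 hN1 hN2 hcon ?_ ?_ ?_ <;>
      (intro h; have := hf.1 _ (by omega) _ (by omega) h; omega)
  have : IsPathFun G (k+1)
      (fun i => if i ≤ a then f i else if i = a + 1 then v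
        else if i ≤ b + 1 then f (a+b+2-i) else f (i-1)) := by
    constructor
    · intro i hi j hj hij
      simp only at hij
      split_ifs at hij <;>
        first
          | omega
          | (exact absurd hij (hv _ (by omega)))
          | (exact absurd hij.symm (hv _ (by omega)))
          | (have := hf.1 _ (by omega) _ (by omega) hij; omega)
    · intro i hi
      simp only
      by_cases e0 : i + 1 ≤ a
      · rw [if_pos (by omega : i ≤ a), if_pos e0]
        exact hf.2 i (by omega)
      · by_cases e1 : i = a
        · rw [if_pos (by omega : i ≤ a), if_neg e0, if_pos (by omega : i + 1 = a + 1), e1]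
          exact h1a.symm
        · by_cases e2 : i = a + 1
          · rw [if_neg (by omega : ¬ i ≤ a), if_pos e2, if_neg (by omega : ¬ i + 1 ≤ a),
              if_neg (by omega : ¬ i + 1 = a + 1), if_pos (by omega : i + 1 ≤ b + 1),
              (by omega : a + b + 2 - (i+1) = b)]
            exact h1b
          · by_cases e3 : i + 1 ≤ b + 1
            · rw [if_neg (by omega : ¬ i ≤ a), if_neg e2, if_pos (by omega : i ≤ b + 1),
                if_neg (by omega : ¬ i + 1 ≤ a), if_neg (by omega : ¬ i + 1 = a + 1), if_pos e3,
                (by omega : a + b + 2 - i = (a + b + 2 - (i+1)) + 1)]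
              exact (hf.2 (a + b + 2 - (i+1)) (by omega)).symm
            · by_cases e4 : i = b + 1
              · rw [if_neg (by omega : ¬ i ≤ a), if_neg e2, if_pos (by omega : i ≤ b + 1),
                  if_neg (by omega : ¬ i + 1 ≤ a), if_neg (by omega : ¬ i + 1 = a + 1), if_neg e3,
                  (by omega : a + b + 2 - i = a + 1), (by omega : i + 1 - 1 = b + 1)]
                exact hE5
              · rw [if_neg (by omega : ¬ i ≤ a), if_neg e2, if_neg (by omega : ¬ i ≤ b + 1),
                  if_neg (by omega : ¬ i + 1 ≤ a), if_neg (by omega : ¬ i + 1 = a + 1), if_neg e3,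
                  (by omega : i + 1 - 1 = (i - 1) + 1)]
                exact hf.2 (i-1) (by omega)
  exact absurd (hmax _ _ this) (by omega)


lemma mem_list_iff_getD [Inhabited V] (l : List V) (v : V) :
    v ∈ l ↔ ∃ i, i < l.length ∧ l.getD i default = v := by
  rw [List.mem_iff_getElem]
  constructor
  · rintro ⟨i, hi, h⟩
    exact ⟨i, hi, by rwa [List.getD_eq_getElem l default hi]⟩
  · rintro ⟨i, hi, h⟩
    exact ⟨i, hi, by rwa [List.getD_eq_getElem l default hi] at h⟩

end Core
end GallaiAux
end GallaiWork

/-- Every connected `(claw, 2P_2 + P_1)`-free graph has a Gallai vertex. -/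
theorem stmt_7 {V : Type} [Fintype V] (G : SimpleGraph V) (hG : G.Connected)
    (h1 : _root_.Free claw G) (h2 : _root_.Free twoP2_P1 G) :
    ∃ v : V, IsGallaiVertex G v := by
  classical
  have hne : Nonempty V := hG.nonempty
  inhabit V
  set P : ℕ → Prop := fun m => ∃ (x y : V) (p : G.Walk x y), p.IsPath ∧ p.length = m with hP
  haveI : DecidablePred P := Classical.decPred P
  have hP0 : P 0 := ⟨default, default, Walk.nil, Walk.IsPath.nil, rfl⟩
  have hbound : ∀ m, P m → m ≤ Fintype.card V := by
    rintro m ⟨x, y, p, hp, rfl⟩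
    exact le_of_lt hp.length_lt
  set best := Nat.findGreatest P (Fintype.card V) with hbest
  have hbestP : P best := Nat.findGreatest_spec (Nat.zero_le _) hP0
  have hbestmax : ∀ m, P m → m ≤ best := fun m hm =>
    Nat.le_findGreatest (hbound m hm) hm
  obtain ⟨x₀, y₀, p₀, hp₀, hlen₀⟩ := hbestP
  set k := best + 1 with hk
  have hmaxFun : ∀ (m : ℕ) (g : ℕ → V), IsPathFun G m g → m ≤ k := by
    intro m g hg
    rcases Nat.eq_zero_or_pos m with h | h
    · omega
    · obtain ⟨x, y, p, hp, hplen⟩ := exists_walk_of_pathFun h hg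
      have := hbestmax p.length ⟨x, y, p, hp, rfl⟩
      omega
  -- the length of every longest path is `best`
  have hlongest_len : ∀ {x y : V} (p : G.Walk x y), IsLongestPath G p → p.length = best := by
    intro x y p hp
    have h1' : best ≤ p.length := by
      have := hp.2 x₀ y₀ p₀ hp₀
      omega
    have h2' : p.length ≤ best := hbestmax p.length ⟨x, y, p, hp.1, rfl⟩
    omega
  by_cases hkn : k < Fintype.card V
  · -- non-traceable case
    set F : ℕ → V := fun i => p₀.support.getD i default with hF
    have hFfun : IsPathFun G k F := by
      have := pathFun_of_walk p₀ hp₀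
      rwa [hlen₀] at this
    obtain ⟨w₁, m₁, _, hm₁2, hm₁3, _⟩ := GallaiAux.attach hG hkn hmaxFun h1 hFfun
    have hk5 : 5 ≤ k := by omega
    refine ⟨F 1, ?_⟩
    intro x y p hp
    set gF : ℕ → V := fun i => p.support.getD i default with hg
    have hglen : p.length = best := hlongest_len p hp
    have hgfun : IsPathFun G k gF := by
      have := pathFun_of_walk p hp.1
      rwa [hglen] at this
    have hsuplen : p.support.length = k := by
      rw [p.length_support, hglen]
    by_contra hvout
    have hfresh : GallaiAux.FreshFor k gF (F 1) := by
      intro i hi hcon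
      exact hvout ((GallaiAux.mem_list_iff_getD p.support (F 1)).2 ⟨i, by omega, hcon⟩)
    have hmem : ∀ u : V, u ∈ p.support ↔ ∃ i, i < k ∧ gF i = u := by
      intro u
      rw [GallaiAux.mem_list_iff_getD p.support u, hsuplen]
    have h01 : G.Adj (F 0) (F 1) := hFfun.2 0 (by omega)
    have h12 : G.Adj (F 1) (F 2) := hFfun.2 1 (by omega)
    have hmem0 : F 0 ∈ p.support := by
      by_contra hcon
      have hfresh0 : GallaiAux.FreshFor k gF (F 0) := by
        intro i hi hcon'
        exact hcon ((GallaiAux.mem_list_iff_getD p.support (F 0)).2 ⟨i, by omega, hcon'⟩)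
      exact GallaiAux.L7 hG hkn hmaxFun h1 h2 hgfun hfresh hfresh0 h01.symm
    have hmem2 : F 2 ∈ p.support := by
      by_contra hcon
      have hfresh2 : GallaiAux.FreshFor k gF (F 2) := by
        intro i hi hcon'
        exact hcon ((GallaiAux.mem_list_iff_getD p.support (F 2)).2 ⟨i, by omega, hcon'⟩)
      exact GallaiAux.L7 hG hkn hmaxFun h1 h2 hgfun hfresh hfresh2 h12
    obtain ⟨a, hak, haval⟩ := (hmem (F 0)).1 hmem0
    obtain ⟨b, hbk, hbval⟩ := (hmem (F 2)).1 hmem2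
    have hadja : G.Adj (F 1) (gF a) := by rw [haval]; exact h01.symm
    have hadjb : G.Adj (F 1) (gF b) := by rw [hbval]; exact h12
    have hne' : a ≠ b := by
      intro hcon
      rw [hcon, hbval] at haval
      have := hFfun.1 2 (by omega) 0 (by omega) haval
      omega
    rcases lt_or_gt_of_ne hne' with hl | hl
    · exact GallaiAux.L8 hG hkn hmaxFun h1 h2 hgfun hfresh hl hbk hadja hadjb
    · exact GallaiAux.L8 hG hkn hmaxFun h1 h2 hgfun hfresh hl hak hadjb hadja
  · -- traceable case: every longest path is Hamiltonian
    have hkcard : k = Fintype.card V := by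
      have := hp₀.length_lt
      omega
    refine ⟨x₀, ?_⟩
    intro x y p hp
    have hglen : p.length = best := hlongest_len p hp
    have hnd : p.support.Nodup := (Walk.isPath_def p).1 hp.1
    have hlen : p.support.length = Fintype.card V := by
      rw [p.length_support, hglen]; omega
    have : p.support.toFinset = Finset.univ := by
      apply Finset.eq_univ_of_card
      rw [List.toFinset_card_of_nodup hnd, hlen]
    have : x₀ ∈ p.support.toFinset := by rw [this]; exact Finset.mem_univ _
    simpa using this
end

section
/- Let G be a connected (claw, P_2 + 3P_1)-free graph containing three cut vertices x, y, z that induce a triangle in G. Then each of x, y, and z is a Gallai vertex of G. -/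
open SimpleGraph

namespace GallaiAux

variable {V : Type} {G : SimpleGraph V}

def Avoid (G : SimpleGraph V) (x a b : V) : Prop := ∃ W : G.Walk a b, x ∉ W.support

lemma avoid_refl {x a : V} (h : a ≠ x) : Avoid G x a a := ⟨Walk.nil, by simp [h.symm]⟩

lemma Avoid.symm {x a b : V} : Avoid G x a b → Avoid G x b a := by
  rintro ⟨W, h⟩
  exact ⟨W.reverse, by simpa [Walk.support_reverse] using h⟩

lemma Avoid.trans {x a b c : V} : Avoid G x a b → Avoid G x b c → Avoid G x a c := by
  rintro ⟨W, h⟩ ⟨U, hU⟩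
  exact ⟨W.append U, by rw [Walk.mem_support_append_iff]; tauto⟩

lemma avoid_of_adj {x a b : V} (ha : a ≠ x) (hb : b ≠ x) (h : G.Adj a b) : Avoid G x a b :=
  ⟨Walk.cons h Walk.nil, by simp [ha.symm, hb.symm, eq_comm]⟩

lemma length_takeUntil_lt [DecidableEq V] {a b u : V} (W : G.Walk a b) (h : u ∈ W.support)
    (hu : u ≠ b) : (W.takeUntil u h).length < W.length := by
  have hl := congr_arg Walk.length (W.take_spec h)
  rw [Walk.length_append] at hl
  have : (W.dropUntil u h).length ≠ 0 := fun h0 => hu (Walk.eq_of_length_eq_zero h0)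
  omega

lemma avoid_or [DecidableEq V] (hG : G.Preconnected) (s t v : V) (hvs : v ≠ s) (hst : s ≠ t) :
    Avoid G s v t ∨ Avoid G t v s := by
  suffices H : ∀ n (v : V), v ≠ s → ∀ (W : G.Walk v t), W.length ≤ n →
      Avoid G s v t ∨ Avoid G t v s by
    obtain ⟨W⟩ := hG v t
    exact H W.length v hvs W le_rfl
  intro n
  induction n with
  | zero =>
    intro v hvs W hW
    by_cases hsW : s ∈ W.support
    · cases W with
      | nil => simp at hsW; exact absurd hsW.symm hvs
      | cons h q => simp [Walk.length_cons] at hW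
    · exact Or.inl ⟨W, hsW⟩
  | succ n ih =>
    intro v hvs W hW
    by_cases hsW : s ∈ W.support
    · by_cases htT : t ∈ (W.takeUntil s hsW).support
      · have hlt : ((W.takeUntil s hsW).takeUntil t htT).length < W.length :=
          lt_of_le_of_lt (Walk.length_takeUntil_le _ _) (length_takeUntil_lt _ _ hst)
        exact ih v hvs _ (Nat.lt_succ_iff.mp (lt_of_lt_of_le hlt hW))
      · exact Or.inr ⟨W.takeUntil s hsW, htT⟩
    · exact Or.inl ⟨W, hsW⟩

lemma reachable_induce_of_avoid {x : V} :
    ∀ {a b : V} (W : G.Walk a b), x ∉ W.support → ∀ (ha : a ≠ x) (hb : b ≠ x),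
      (G.induce {v | v ≠ x}).Reachable ⟨a, ha⟩ ⟨b, hb⟩ := by
  intro a b W
  induction W with
  | nil => intro _ ha hb; rfl
  | @cons a c b h q ih =>
    intro hx ha hb
    simp only [Walk.support_cons, List.mem_cons] at hx
    push_neg at hx
    have hc : c ≠ x := by
      intro hcx
      exact hx.2 (hcx ▸ q.start_mem_support)
    have hadj : (G.induce {v | v ≠ x}).Adj ⟨a, ha⟩ ⟨c, hc⟩ := by
      simpa using h
    exact hadj.reachable.trans (ih hx.2 hc hb)

lemma exists_pendant {x : V} (hc : ¬ (G.induce {v | v ≠ x}).Preconnected) (t : V) (ht : t ≠ x) :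
    ∃ v, v ≠ x ∧ ¬ Avoid G x v t := by
  by_contra hcon
  push_neg at hcon
  apply hc
  rintro ⟨a, ha⟩ ⟨b, hb⟩
  obtain ⟨Wa, hWa⟩ := hcon a ha
  obtain ⟨Wb, hWb⟩ := hcon b hb
  have h1 := reachable_induce_of_avoid Wa hWa ha ht
  have h2 := reachable_induce_of_avoid Wb hWb hb ht
  exact h1.trans h2.symm

lemma walk_in {S : Set V} {y : V} (cl : ∀ v ∈ S, ∀ w, G.Adj v w → w = y ∨ w ∈ S) :
    ∀ {s e : V} (W : G.Walk s e), s ∈ S → y ∉ W.support → e ∈ S := by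
  intro s e W
  induction W with
  | nil => exact fun h _ => h
  | @cons a c b h q ih =>
    intro hs hy
    simp only [Walk.support_cons, List.mem_cons] at hy
    push_neg at hy
    rcases cl a hs c h with rfl | hcS
    · exact absurd q.start_mem_support hy.2
    · exact ih hcS hy.2

lemma five (h2 : _root_.Free P2_3P1 G) (v0 v1 v2 v3 v4 : V)
    (h01 : G.Adj v0 v1)
    (d23 : v2 ≠ v3) (d24 : v2 ≠ v4) (d34 : v3 ≠ v4)
    (n02 : ¬G.Adj v0 v2) (n03 : ¬G.Adj v0 v3) (n04 : ¬G.Adj v0 v4)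
    (n12 : ¬G.Adj v1 v2) (n13 : ¬G.Adj v1 v3) (n14 : ¬G.Adj v1 v4)
    (n23 : ¬G.Adj v2 v3) (n24 : ¬G.Adj v2 v4) (n34 : ¬G.Adj v3 v4) : False := by
  have d01 : v0 ≠ v1 := h01.ne
  have d02 : v0 ≠ v2 := fun h => n12 (h ▸ h01.symm)
  have d03 : v0 ≠ v3 := fun h => n13 (h ▸ h01.symm)
  have d04 : v0 ≠ v4 := fun h => n14 (h ▸ h01.symm)
  have d12 : v1 ≠ v2 := fun h => n02 (h ▸ h01)
  have d13 : v1 ≠ v3 := fun h => n03 (h ▸ h01)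
  have d14 : v1 ≠ v4 := fun h => n04 (h ▸ h01)
  let f : Fin 5 → V := ![v0, v1, v2, v3, v4]
  have hinj : Function.Injective f := by
    intro i j hij
    fin_cases i <;> fin_cases j <;> first
      | rfl
      | (exfalso; simp only [f] at hij;
         first
          | exact d01 hij | exact d02 hij | exact d03 hij | exact d04 hij
          | exact d12 hij | exact d13 hij | exact d14 hij
          | exact d23 hij | exact d24 hij | exact d34 hij
          | exact d01 hij.symm | exact d02 hij.symm | exact d03 hij.symm | exact d04 hij.symm
          | exact d12 hij.symm | exact d13 hij.symm | exact d14 hij.symm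
          | exact d23 hij.symm | exact d24 hij.symm | exact d34 hij.symm)
  refine h2.elim ⟨⟨f, hinj⟩, ?_⟩
  intro i j
  show G.Adj (f i) (f j) ↔ P2_3P1.Adj i j
  fin_cases i <;> fin_cases j <;>
    simp only [f, P2_3P1, fromEdgeSet_adj, Set.mem_singleton_iff, Sym2.eq, Sym2.rel_iff',
      Matrix.cons_val_zero, Matrix.cons_val_one, Matrix.head_cons, Prod.mk.injEq, Prod.swap_prod_mk] <;>
    first
      | (constructor
         · intro h; exfalso; first
             | exact G.loopless.irrefl _ h
             | exact n02 h | exact n03 h | exact n04 h | exact n12 h | exact n13 h | exact n14 h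
             | exact n23 h | exact n24 h | exact n34 h
             | exact n02 h.symm | exact n03 h.symm | exact n04 h.symm | exact n12 h.symm
             | exact n13 h.symm | exact n14 h.symm | exact n23 h.symm | exact n24 h.symm
             | exact n34 h.symm
         · intro h; exfalso; revert h; decide)
      | (constructor
         · intro _; decide
         · intro _; first | exact h01 | exact h01.symm)

lemma claw_free (h1 : _root_.Free claw G) (c a b d : V)
    (hca : G.Adj c a) (hcb : G.Adj c b) (hcd : G.Adj c d)
    (dab : a ≠ b) (dad : a ≠ d) (dbd : b ≠ d)
    (nab : ¬G.Adj a b) (nad : ¬G.Adj a d) (nbd : ¬G.Adj b d) : False := by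
  let f : Fin 1 ⊕ Fin 3 → V := Sum.elim (fun _ => c) ![a, b, d]
  have hinj : Function.Injective f := by
    rintro (i | i) (j | j) hij
    · exact congrArg Sum.inl (Subsingleton.elim i j)
    · exfalso; fin_cases j <;>
        first | exact hca.ne hij | exact hcb.ne hij | exact hcd.ne hij
    · exfalso; fin_cases i <;>
        first | exact hca.ne hij.symm | exact hcb.ne hij.symm | exact hcd.ne hij.symm
    · fin_cases i <;> fin_cases j <;>
        (first | rfl | exact absurd hij dab | exact absurd hij dad | exact absurd hij dbd | exact absurd hij.symm dab | exact absurd hij.symm dad | exact absurd hij.symm dbd)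
  refine h1.elim ⟨⟨f, hinj⟩, ?_⟩
  rintro (i | i) (j | j)
  · exact iff_of_false (G.loopless.irrefl c) (by simp [claw])
  · refine iff_of_true ?_ (by simp [claw])
    fin_cases j
    · exact hca
    · exact hcb
    · exact hcd
  · refine iff_of_true ?_ (by simp [claw])
    fin_cases i
    · exact hca.symm
    · exact hcb.symm
    · exact hcd.symm
  · refine iff_of_false ?_ (by simp [claw])
    fin_cases i <;> fin_cases j <;>
      (first | exact G.loopless.irrefl _ | exact nab | exact nad | exact nbd | exact fun h => nab h.symm | exact fun h => nad h.symm | exact fun h => nbd h.symm)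

lemma rotate_contra [DecidableEq V] (hG : G.Connected) {u w : V} (P : G.Walk u w)
    (hP : P.IsPath)
    (hlong : ∀ (a b : V) (q : G.Walk a b), q.IsPath → q.length ≤ P.length)
    (huw : G.Adj w u) (x : V) (hx : x ∉ P.support) : False := by
  set c : G.Walk u u := P.append (Walk.cons huw Walk.nil) with hc
  have hcsup : c.support = P.support ++ [u] := by
    rw [hc, Walk.support_append]; simp
  have hctail : c.support.tail = P.support.tail ++ [u] := by
    rw [hcsup, P.support_eq_cons]; simp
  have hctail_nodup : c.support.tail.Nodup := by
    have hn : P.support.Nodup := hP.2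
    rw [P.support_eq_cons, List.nodup_cons] at hn
    rw [hctail]
    refine List.Nodup.append hn.2 (List.nodup_singleton u) ?_
    intro t ht hmem
    simp only [List.mem_singleton] at hmem
    exact hn.1 (hmem ▸ ht)
  have hclen : c.length = P.length + 1 := by
    rw [hc, Walk.length_append]; simp
  obtain ⟨W⟩ := hG.preconnected u x
  obtain ⟨d, _, hdf, hds⟩ := W.exists_boundary_dart {v | v ∈ P.support} P.start_mem_support hx
  have hpc : d.fst ∈ c.support := by
    rw [hcsup]
    exact List.mem_append.mpr (Or.inl hdf)
  set c' := c.rotate _ hpc with hc'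
  have hc'len : c'.length = P.length + 1 := by
    rw [hc', Walk.rotate, Walk.length_append, ← hclen]
    have := congr_arg Walk.length (c.take_spec hpc)
    rw [Walk.length_append] at this
    omega
  have hc'tail : c'.support.tail.Nodup :=
    (List.IsRotated.nodup_iff (Walk.support_rotate c _ hpc)).mpr hctail_nodup
  have hc'mem : ∀ t ∈ c'.support.tail, t ∈ P.support := by
    intro t ht
    have := (Walk.support_rotate c _ hpc).mem_iff.mp ht
    rw [hctail] at this
    rcases List.mem_append.mp this with h | h
    · exact List.mem_of_mem_tail h
    · simp only [List.mem_singleton] at h; exact h ▸ P.start_mem_support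
  clear_value c'
  cases c' with
  | nil => simp at hc'len
  | cons hadj e =>
    have hesup : e.support.Nodup := by simpa using hc'tail
    have heP : e.IsPath := (Walk.isPath_def _).mpr hesup
    have hqe : d.snd ∉ e.reverse.support := by
      rw [Walk.support_reverse, List.mem_reverse]
      intro hmem
      exact hds (hc'mem _ (by simpa using hmem))
    have hQ : (Walk.cons d.adj.symm e.reverse).IsPath :=
      (Walk.cons_isPath_iff _ _).mpr ⟨heP.reverse, hqe⟩
    have := hlong _ _ _ hQ
    simp only [Walk.length_cons, Walk.length_reverse] at this
    simp only [Walk.length_cons] at hc'len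
    omega

lemma pend [DecidableEq V] (hG : G.Connected) (h2 : _root_.Free P2_3P1 G)
    {S : Set V} {e1 e2 t x : V}
    (hedge : G.Adj e1 e2)
    (ne1 : ∀ v ∈ S, ¬G.Adj e1 v) (ne2 : ∀ v ∈ S, ¬G.Adj e2 v)
    (nt1 : ¬G.Adj e1 t) (nt2 : ¬G.Adj e2 t) (ntS : ∀ v ∈ S, ¬G.Adj v t) (htS : t ∉ S)
    {u w : V} (P : G.Walk u w) (hP : P.IsPath)
    (hlong : ∀ (a b : V) (q : G.Walk a b), q.IsPath → q.length ≤ P.length)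
    (hn : 1 ≤ P.length) (hx : x ∉ P.support)
    (hu : u ∈ S) (hw : w ∈ S) : False := by
  have huw : u ≠ w := by
    rintro rfl
    have := Walk.isPath_iff_eq_nil.mp hP
    subst this
    simp at hn
  by_cases hadj : G.Adj w u
  · exact rotate_contra hG P hP hlong hadj x hx
  · exact five h2 e1 e2 u w t hedge huw (fun h => htS (h ▸ hu)) (fun h => htS (h ▸ hw))
      (ne1 u hu) (ne1 w hw) nt1 (ne2 u hu) (ne2 w hw) nt2
      (fun h => hadj h.symm) (ntS u hu) (ntS w hw)

lemma prepend_contra {x y z c : V}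
    (hxy : G.Adj x y) (hzx : G.Adj z x) (hcz : G.Adj c z)
    {w : V} (P : G.Walk y w) (hP : P.IsPath)
    (hlong : ∀ (a b : V) (q : G.Walk a b), q.IsPath → q.length ≤ P.length)
    (hxP : x ∉ P.support) (hzP : z ∉ P.support) (hcP : c ∉ P.support)
    (dzc : z ≠ c) (dxc : x ≠ c) : False := by
  have hQ : (Walk.cons hcz (Walk.cons hzx (Walk.cons hxy P))).IsPath := by
    refine Walk.IsPath.cons (Walk.IsPath.cons (Walk.IsPath.cons hP hxP) ?_) ?_
    · simp only [Walk.support_cons, List.mem_cons]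
      push_neg
      exact ⟨hzx.ne, hzP⟩
    · simp only [Walk.support_cons, List.mem_cons]
      push_neg
      exact ⟨dzc.symm, fun h => dxc h.symm, hcP⟩
  have := hlong _ _ _ hQ
  simp only [Walk.length_cons] at this
  omega

lemma IIC [DecidableEq V] (h1 : _root_.Free claw G) (h2 : _root_.Free P2_3P1 G)
    {x y z a b c : V} {Sx Sy Sz : Set V}
    (hxy : G.Adj x y) (hxz : G.Adj x z)
    (ha : a ∈ Sx) (hb : b ∈ Sy) (hby : G.Adj b y) (hc : c ∈ Sz)
    (clx : ∀ v ∈ Sx, ∀ w, G.Adj v w → w = x ∨ w ∈ Sx)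
    (cly : ∀ v ∈ Sy, ∀ w, G.Adj v w → w = y ∨ w ∈ Sy)
    (clz : ∀ v ∈ Sz, ∀ w, G.Adj v w → w = z ∨ w ∈ Sz)
    (hxSy : x ∉ Sy) (hySz : y ∉ Sz) (hzSy : z ∉ Sy)
    (hyz_ne : y ≠ z)
    (nab : ¬G.Adj a b) (nac : ¬G.Adj a c) (nbc : ¬G.Adj b c)
    (dab : a ≠ b) (dac : a ≠ c) (dbc : b ≠ c)
    {u w : V} (T : G.Walk u y) (D : G.Walk y w)
    (hP : (T.append D).IsPath)
    (hlong : ∀ (a' b' : V) (q : G.Walk a' b'), q.IsPath → q.length ≤ (T.append D).length)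
    (hzD : z ∈ D.support)
    (hsupx : ∀ v ∈ (T.append D).support, v ≠ x ∧ v ∉ Sx) : False := by
  have hxP : x ∉ (T.append D).support := fun h => (hsupx x h).1 rfl
  have hnodup : ((T.append D).support).Nodup := hP.2
  have hsupeq : (T.append D).support = T.support ++ D.support.tail := Walk.support_append T D
  have hnodup' : (T.support ++ D.support.tail).Nodup := hsupeq ▸ hnodup
  have hyDt : y ∉ D.support.tail := by
    rcases List.nodup_append'.mp hnodup' with ⟨_, _, hdisj⟩
    exact fun h => hdisj T.end_mem_support h
  cases D with
  | nil => simp only [Walk.support_nil, List.mem_singleton] at hzD; exact hyz_ne hzD.symm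
  | @cons _ s _ h_ys D₂ =>
    have hDtail : (Walk.cons h_ys D₂).support.tail = D₂.support := by simp
    have hyD₂ : y ∉ D₂.support := hDtail ▸ hyDt
    have horig : (T.support ++ D₂.support).Nodup := hDtail ▸ hnodup'
    have hsmem : s ∈ (T.append (Walk.cons h_ys D₂)).support := by
      rw [Walk.mem_support_append_iff]
      exact Or.inr (by simp)
    have hsy : s ≠ y := fun h => hyD₂ (h ▸ D₂.start_mem_support)
    have hxT : x ∉ T.support := fun h => hxP (by rw [Walk.mem_support_append_iff]; exact Or.inl h)
    have hxD₂ : x ∉ D₂.support := fun h =>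
      hxP (by rw [Walk.mem_support_append_iff]; exact Or.inr (by simp [h]))
    by_cases hsz : s = z
    · subst hsz
      set Q := T.append (Walk.cons hxy.symm (Walk.cons hxz D₂)) with hQ
      have hQsup : Q.support = T.support ++ (x :: D₂.support) := by
        rw [hQ, Walk.support_append]; simp
      have hQpath : Q.IsPath := by
        rw [Walk.isPath_def, hQsup, List.nodup_middle, List.nodup_cons]
        constructor
        · intro hmem
          rcases List.mem_append.mp hmem with h | h
          · exact hxT h
          · exact hxD₂ h
        · exact horig
      have hle := hlong _ _ Q hQpath
      rw [hQ] at hle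
      simp only [Walk.length_append, Walk.length_cons] at hle
      omega
    · have hzD₂ : z ∈ D₂.support := by
        simp only [Walk.support_cons, List.mem_cons] at hzD
        rcases hzD with h | h
        · exact absurd h.symm hyz_ne
        · exact h
      have hsfacts := hsupx s hsmem
      have hsSz : s ∉ Sz := by
        intro hmem
        rcases clz s hmem y h_ys.symm with h | h
        · exact hyz_ne h
        · exact hySz h
      have hsSy : s ∉ Sy := by
        intro hmem
        obtain ⟨d, hdW, hdf, hds⟩ :=
          (D₂.takeUntil z hzD₂).exists_boundary_dart Sy hmem hzSy
        rcases cly d.fst hdf d.snd d.adj with h | h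
        · exact hyD₂ (D₂.support_takeUntil_subset hzD₂
            (h ▸ Walk.dart_snd_mem_support_of_mem_darts _ hdW))
        · exact hds h
      cases D₂ with
      | nil => simp only [Walk.support_nil, List.mem_singleton] at hzD₂; exact hsz hzD₂.symm
      | @cons _ s₂ _ h_ss₂ D₃ =>
        have hs₂D₃ : s₂ ∈ (Walk.cons h_ss₂ D₃).support := by simp
        by_cases hs₂z : s₂ = z
        · subst hs₂z
          have hxs : G.Adj x s := by
            by_contra hxs
            refine claw_free h1 y x s b hxy.symm h_ys hby.symm ?_ ?_ ?_ hxs ?_ ?_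
            · exact fun h => hsfacts.1 h.symm
            · exact fun h => hxSy (h ▸ hb)
            · exact fun h => hsSy (h ▸ hb)
            · intro hadj
              rcases cly b hb x hadj.symm with h | h
              · exact hxy.ne h
              · exact hxSy h
            · intro hadj
              rcases cly b hb s hadj.symm with h | h
              · exact hsy h
              · exact hsSy h
          set Q := T.append (Walk.cons h_ys (Walk.cons hxs.symm (Walk.cons hxz D₃))) with hQ
          have hQsup : Q.support = (T.support ++ [s]) ++ (x :: D₃.support) := by
            rw [hQ, Walk.support_append]; simp
          have horig2 : ((T.support ++ [s]) ++ D₃.support).Nodup := by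
            have : (T.support ++ [s]) ++ D₃.support = T.support ++ (s :: D₃.support) := by simp
            rw [this]
            simpa using horig
          have hQpath : Q.IsPath := by
            rw [Walk.isPath_def, hQsup, List.nodup_middle, List.nodup_cons]
            refine ⟨?_, horig2⟩
            intro hmem
            rcases List.mem_append.mp hmem with h | h
            · rcases List.mem_append.mp h with h | h
              · exact hxT h
              · simp only [List.mem_singleton] at h
                exact hsfacts.1 h.symm
            · exact hxD₂ (by simp [h])
          have hle := hlong _ _ Q hQpath
          rw [hQ] at hle
          simp only [Walk.length_append, Walk.length_cons] at hle
          omega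
        · have hs₂mem : s₂ ∈ (T.append (Walk.cons h_ys (Walk.cons h_ss₂ D₃))).support := by
            rw [Walk.mem_support_append_iff]
            exact Or.inr (by simp)
          have hs₂facts := hsupx s₂ hs₂mem
          have hs₂y : s₂ ≠ y := fun h => hyD₂ (h ▸ hs₂D₃)
          have hs₂Sy : s₂ ∉ Sy := by
            intro hm
            rcases cly s₂ hm s h_ss₂.symm with h | h
            · exact hsy h
            · exact hsSy h
          have hs₂Sz : s₂ ∉ Sz := by
            intro hm
            rcases clz s₂ hm s h_ss₂.symm with h | h
            · exact hsz h
            · exact hsSz h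
          refine five h2 s s₂ a b c h_ss₂ dab dac dbc ?_ ?_ ?_ ?_ ?_ ?_ nab nac nbc
          · exact fun h => (by rcases clx a ha s h.symm with h' | h'
                               exacts [hsfacts.1 h', hsfacts.2 h'])
          · exact fun h => (by rcases cly b hb s h.symm with h' | h'
                               exacts [hsy h', hsSy h'])
          · exact fun h => (by rcases clz c hc s h.symm with h' | h'
                               exacts [hsz h', hsSz h'])
          · exact fun h => (by rcases clx a ha s₂ h.symm with h' | h'
                               exacts [hs₂facts.1 h', hs₂facts.2 h'])
          · exact fun h => (by rcases cly b hb s₂ h.symm with h' | h'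
                               exacts [hs₂y h', hs₂Sy h'])
          · exact fun h => (by rcases clz c hc s₂ h.symm with h' | h'
                               exacts [hs₂z h', hs₂Sz h'])

lemma IIB_half [DecidableEq V] (h1 : _root_.Free claw G) (h2 : _root_.Free P2_3P1 G)
    {x y z a b c : V} {Sx Sy Sz : Set V}
    (hxy : G.Adj x y) (hxz : G.Adj x z) (hcz_adj : G.Adj c z)
    (ha : a ∈ Sx) (hb : b ∈ Sy) (hby : G.Adj b y) (hc : c ∈ Sz)
    (clx : ∀ v ∈ Sx, ∀ t, G.Adj v t → t = x ∨ t ∈ Sx)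
    (cly : ∀ v ∈ Sy, ∀ t, G.Adj v t → t = y ∨ t ∈ Sy)
    (clz : ∀ v ∈ Sz, ∀ t, G.Adj v t → t = z ∨ t ∈ Sz)
    (hxSy : x ∉ Sy) (hySz : y ∉ Sz) (hzSy : z ∉ Sy) (hxSz : x ∉ Sz) (hzSz : z ∉ Sz)
    (hyz_ne : y ≠ z)
    (nab : ¬G.Adj a b) (nac : ¬G.Adj a c) (nbc : ¬G.Adj b c)
    (dab : a ≠ b) (dac : a ≠ c) (dbc : b ≠ c)
    {u w : V} (P : G.Walk u w) (hP : P.IsPath)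
    (hlong : ∀ (a' b' : V) (q : G.Walk a' b'), q.IsPath → q.length ≤ P.length)
    (hyP : y ∈ P.support) (hzP : z ∉ P.support) (hxP : x ∉ P.support)
    (hsupx : ∀ v ∈ P.support, v ∉ Sx) (hsupz : ∀ v ∈ P.support, v ∉ Sz) :
    w = y ∨ w ∈ Sy := by
  obtain ⟨T, D, rfl⟩ := Walk.mem_support_iff_exists_append.mp hyP
  have hnodup : ((T.append D).support).Nodup := hP.2
  have hnodup' : (T.support ++ D.support.tail).Nodup := by
    rwa [Walk.support_append] at hnodup
  have hyDt : y ∉ D.support.tail := by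
    rcases List.nodup_append'.mp hnodup' with ⟨_, _, hdisj⟩
    exact fun h => hdisj T.end_mem_support h
  have hxT : x ∉ T.support := fun h => hxP (by rw [Walk.mem_support_append_iff]; exact Or.inl h)
  cases D with
  | nil => exact Or.inl rfl
  | @cons _ s _ h_ys D₂ =>
    have hyD₂ : y ∉ D₂.support := by simpa using hyDt
    have hsy : s ≠ y := fun h => hyD₂ (h ▸ D₂.start_mem_support)
    have hsmem : s ∈ (T.append (Walk.cons h_ys D₂)).support := by
      rw [Walk.mem_support_append_iff]; exact Or.inr (by simp)
    have hsx : s ≠ x := fun h => hxP (h ▸ hsmem)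
    have hsz : s ≠ z := fun h => hzP (h ▸ hsmem)
    have hsSx : s ∉ Sx := hsupx s hsmem
    have hsSz : s ∉ Sz := hsupz s hsmem
    by_cases hsSy : s ∈ Sy
    · exact Or.inr (walk_in cly D₂ hsSy hyD₂)
    · exfalso
      cases D₂ with
      | nil =>
        -- w = s is the endpoint; get adj x s via claw, then extend by x, z, c
        have hxs : G.Adj x w := by
          by_contra hxs
          refine claw_free h1 y x w b hxy.symm h_ys hby.symm (Ne.symm hsx) ?_ ?_ hxs ?_ ?_
          · intro h
            exact hxSy (h ▸ hb)
          · intro h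
            exact hsSy (h ▸ hb)
          · intro hadj
            rcases cly b hb x hadj.symm with h | h
            · exact hxy.ne h
            · exact hxSy h
          · intro hadj
            rcases cly b hb w hadj.symm with h | h
            · exact hsy h
            · exact hsSy h
        have hcP : c ∉ (T.append (Walk.cons h_ys Walk.nil)).support :=
          fun h => hsupz c h hc
        have hzT : z ∉ T.support :=
          fun h => hzP (by rw [Walk.mem_support_append_iff]; exact Or.inl h)
        set Q := (T.append (Walk.cons h_ys Walk.nil)).append
          (Walk.cons hxs.symm (Walk.cons hxz (Walk.cons hcz_adj.symm Walk.nil))) with hQ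
        have hQpath : Q.IsPath := by
          rw [Walk.isPath_def, hQ, Walk.support_append]
          simp only [Walk.support_cons, Walk.support_nil, List.tail_cons]
          refine List.Nodup.append hnodup ?_ ?_
          · have hxc : x ≠ c := fun h => hxSz (by rw [h]; exact hc)
            have hzc : z ≠ c := fun h => hzSz (by rw [h]; exact hc)
            simp [List.nodup_cons, hxz.ne, hxc, hzc]
          · intro t ht hmem
            simp only [List.mem_cons, List.mem_singleton, List.not_mem_nil, or_false] at hmem
            rcases hmem with rfl | rfl | rfl
            · exact hxP ht
            · exact hzP ht
            · exact hcP ht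
        have hle := hlong _ _ Q hQpath
        rw [hQ] at hle
        simp only [Walk.length_append, Walk.length_cons, Walk.length_nil] at hle
        omega
      | @cons _ s₂ _ h_ss₂ D₃ =>
        have hs₂mem : s₂ ∈ (T.append (Walk.cons h_ys (Walk.cons h_ss₂ D₃))).support := by
          rw [Walk.mem_support_append_iff]; exact Or.inr (by simp)
        have hs₂y : s₂ ≠ y := by
          intro h
          apply hyD₂
          rw [← h]
          simp
        have hs₂x : s₂ ≠ x := fun h => hxP (h ▸ hs₂mem)
        have hs₂z : s₂ ≠ z := fun h => hzP (h ▸ hs₂mem)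
        have hs₂Sx : s₂ ∉ Sx := hsupx s₂ hs₂mem
        have hs₂Sz : s₂ ∉ Sz := hsupz s₂ hs₂mem
        have hs₂Sy : s₂ ∉ Sy := by
          intro hm
          rcases cly s₂ hm s h_ss₂.symm with h | h
          · exact hsy h
          · exact hsSy h
        refine five h2 s s₂ a b c h_ss₂ dab dac dbc ?_ ?_ ?_ ?_ ?_ ?_ nab nac nbc
        · exact fun h => (by rcases clx a ha s h.symm with h' | h'
                             exacts [hsx h', hsSx h'])
        · exact fun h => (by rcases cly b hb s h.symm with h' | h'
                             exacts [hsy h', hsSy h'])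
        · exact fun h => (by rcases clz c hc s h.symm with h' | h'
                             exacts [hsz h', hsSz h'])
        · exact fun h => (by rcases clx a ha s₂ h.symm with h' | h'
                             exacts [hs₂x h', hs₂Sx h'])
        · exact fun h => (by rcases cly b hb s₂ h.symm with h' | h'
                             exacts [hs₂y h', hs₂Sy h'])
        · exact fun h => (by rcases clz c hc s₂ h.symm with h' | h'
                             exacts [hs₂z h', hs₂Sz h'])

lemma gallai_x (G : SimpleGraph V) (hG : G.Connected)
    (h1 : _root_.Free claw G) (h2 : _root_.Free P2_3P1 G)
    (x y z : V) (hxy : G.Adj x y) (hyz : G.Adj y z) (hxz : G.Adj x z)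
    (hcx : IsCutVertex G x) (hcy : IsCutVertex G y) (hcz : IsCutVertex G z) :
    IsGallaiVertex G x := by
  classical
  intro u0 w0 P hLP
  obtain ⟨hPath, hlong⟩ := hLP
  by_contra hxP
  have dxy : x ≠ y := hxy.ne
  have dxz : x ≠ z := hxz.ne
  have dyz : y ≠ z := hyz.ne
  set Sx : Set V := {v | v ≠ x ∧ ¬ Avoid G x v y} with hSxdef
  set Sy : Set V := {v | v ≠ y ∧ ¬ Avoid G y v x} with hSydef
  set Sz : Set V := {v | v ≠ z ∧ ¬ Avoid G z v x} with hSzdef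
  have clx : ∀ v ∈ Sx, ∀ t, G.Adj v t → t = x ∨ t ∈ Sx := by
    intro v hv t hadj
    by_cases htx : t = x
    · exact Or.inl htx
    · exact Or.inr ⟨htx, fun hav => hv.2 ((avoid_of_adj hv.1 htx hadj).trans hav)⟩
  have cly : ∀ v ∈ Sy, ∀ t, G.Adj v t → t = y ∨ t ∈ Sy := by
    intro v hv t hadj
    by_cases hty : t = y
    · exact Or.inl hty
    · exact Or.inr ⟨hty, fun hav => hv.2 ((avoid_of_adj hv.1 hty hadj).trans hav)⟩
  have clz : ∀ v ∈ Sz, ∀ t, G.Adj v t → t = z ∨ t ∈ Sz := by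
    intro v hv t hadj
    by_cases htz : t = z
    · exact Or.inl htz
    · exact Or.inr ⟨htz, fun hav => hv.2 ((avoid_of_adj hv.1 htz hadj).trans hav)⟩
  have hySx : y ∉ Sx := fun h => h.2 (avoid_refl dxy.symm)
  have hzSx : z ∉ Sx := fun h => h.2 (avoid_of_adj dxz.symm dxy.symm hyz.symm)
  have hxSx : x ∉ Sx := fun h => h.1 rfl
  have hxSy : x ∉ Sy := fun h => h.2 (avoid_refl dxy)
  have hzSy : z ∉ Sy := fun h => h.2 (avoid_of_adj dyz.symm dxy hxz.symm)
  have hySy : y ∉ Sy := fun h => h.1 rfl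
  have hxSz : x ∉ Sz := fun h => h.2 (avoid_refl dxz)
  have hySz : y ∉ Sz := fun h => h.2 (avoid_of_adj dyz dxz hxy.symm)
  have hzSz : z ∉ Sz := fun h => h.1 rfl
  have dSxSy : ∀ v, v ∈ Sx → v ∈ Sy → False := by
    intro v h h'
    rcases avoid_or hG.preconnected x y v h.1 dxy with hav | hav
    · exact h.2 hav
    · exact h'.2 hav
  have dSxSz : ∀ v, v ∈ Sx → v ∈ Sz → False := by
    intro v h h'
    rcases avoid_or hG.preconnected x z v h.1 dxz with hav | hav
    · exact h.2 (hav.trans (avoid_of_adj dxz.symm dxy.symm hyz.symm))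
    · exact h'.2 hav
  have dSySz : ∀ v, v ∈ Sy → v ∈ Sz → False := by
    intro v h h'
    rcases avoid_or hG.preconnected y z v h.1 dyz with hav | hav
    · exact h.2 (hav.trans (avoid_of_adj dyz.symm dxy hxz.symm))
    · exact h'.2 (hav.trans (avoid_of_adj dyz dxz hxy.symm))
  obtain ⟨a, hax, haav⟩ := exists_pendant hcx y dxy.symm
  have ha : a ∈ Sx := ⟨hax, haav⟩
  obtain ⟨b0, hb0y, hb0av⟩ := exists_pendant hcy x dxy
  have hb0 : b0 ∈ Sy := ⟨hb0y, hb0av⟩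
  obtain ⟨c0, hc0z, hc0av⟩ := exists_pendant hcz x dxz
  have hc0 : c0 ∈ Sz := ⟨hc0z, hc0av⟩
  have hbex : ∃ b, b ∈ Sy ∧ G.Adj b y := by
    obtain ⟨W⟩ := hG.preconnected b0 y
    obtain ⟨d, _, hdf, hds⟩ := W.exists_boundary_dart Sy hb0 hySy
    rcases cly d.fst hdf d.snd d.adj with h | h
    · exact ⟨d.fst, hdf, h ▸ d.adj⟩
    · exact absurd h hds
  obtain ⟨b, hb, hby⟩ := hbex
  have hcex : ∃ c, c ∈ Sz ∧ G.Adj c z := by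
    obtain ⟨W⟩ := hG.preconnected c0 z
    obtain ⟨d, _, hdf, hds⟩ := W.exists_boundary_dart Sz hc0 hzSz
    rcases clz d.fst hdf d.snd d.adj with h | h
    · exact ⟨d.fst, hdf, h ▸ d.adj⟩
    · exact absurd h hds
  obtain ⟨c, hc, hcz_adj⟩ := hcex
  have nab : ¬G.Adj a b := by
    intro h
    rcases clx a ha b h with h' | h'
    · exact hxSy (h' ▸ hb)
    · exact dSxSy b h' hb
  have nac : ¬G.Adj a c := by
    intro h
    rcases clx a ha c h with h' | h'
    · exact hxSz (h' ▸ hc)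
    · exact dSxSz c h' hc
  have nbc : ¬G.Adj b c := by
    intro h
    rcases cly b hb c h with h' | h'
    · exact hySz (h' ▸ hc)
    · exact dSySz c h' hc
  have dab : a ≠ b := fun h => dSxSy a ha (by rw [h]; exact hb)
  have dac : a ≠ c := fun h => dSxSz a ha (by rw [h]; exact hc)
  have dbc : b ≠ c := fun h => dSySz b hb (by rw [h]; exact hc)
  have hn1 : 1 ≤ P.length := by
    have hp1 : (Walk.cons hxy Walk.nil).IsPath := by
      simp [Walk.cons_isPath_iff, dxy]
    have := hlong _ _ _ hp1
    simpa using this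
  have hu0P := P.start_mem_support
  have hw0P := P.end_mem_support
  have hmut : ∀ t, t ∉ P.support → ∀ v ∈ P.support, ∀ v' ∈ P.support, Avoid G t v v' := by
    intro t ht v hv v' hv'
    have h1' : Avoid G t v u0 := by
      refine ⟨(P.takeUntil v hv).reverse, ?_⟩
      rw [Walk.support_reverse, List.mem_reverse]
      exact fun hmem => ht (P.support_takeUntil_subset hv hmem)
    have h2' : Avoid G t v' u0 := by
      refine ⟨(P.takeUntil v' hv').reverse, ?_⟩
      rw [Walk.support_reverse, List.mem_reverse]
      exact fun hmem => ht (P.support_takeUntil_subset hv' hmem)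
    exact h1'.trans h2'.symm
  by_cases hAx : Avoid G x u0 y
  swap
  · -- P is inside the pendant component of x
    have hPSx : ∀ v ∈ P.support, v ∈ Sx := by
      intro v hv
      exact ⟨fun h => hxP (h ▸ hv), fun hav => hAx ((hmut x hxP u0 hu0P v hv).trans hav)⟩
    refine pend (t := b) hG h2 hcz_adj.symm ?_ ?_ ?_ ?_ ?_ ?_ P hPath hlong hn1 hxP
      (hPSx u0 hu0P) (hPSx w0 hw0P)
    · intro v hv hadj
      rcases clx v hv z hadj.symm with h' | h'
      · exact dxz h'.symm
      · exact hzSx h'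
    · intro v hv hadj
      rcases clz c hc v hadj with h' | h'
      · exact hzSx (h' ▸ hv)
      · exact dSxSz v hv h'
    · intro hadj
      rcases cly b hb z hadj.symm with h' | h'
      · exact dyz h'.symm
      · exact hzSy h'
    · exact fun h => nbc h.symm
    · intro v hv hadj
      rcases clx v hv b hadj with h' | h'
      · exact hxSy (h' ▸ hb)
      · exact dSxSy b h' hb
    · exact fun h => dSxSy b h hb
  · have hPSxn : ∀ v ∈ P.support, v ∉ Sx := fun v hv hmem =>
      hmem.2 ((hmut x hxP v hv u0 hu0P).trans hAx)
    by_cases hyP : y ∈ P.support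
    · by_cases hzP : z ∈ P.support
      · -- Case II.C : both y and z on P
        obtain ⟨T, D, rfl⟩ := Walk.mem_support_iff_exists_append.mp hyP
        have hsupx' : ∀ v ∈ (T.append D).support, v ≠ x ∧ v ∉ Sx := fun v hv =>
          ⟨fun h => hxP (h ▸ hv), hPSxn v hv⟩
        rcases (Walk.mem_support_append_iff T D).mp hzP with hzT | hzD
        · obtain ⟨T2, D2, rfl⟩ := Walk.mem_support_iff_exists_append.mp hzT
          have hassoc := Walk.append_assoc T2 D2 D
          rw [← hassoc] at hPath hlong hsupx'
          exact IIC h1 h2 hxz hxy ha hc hcz_adj hb clx clz cly hxSz hzSy hySz dyz.symm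
            nac nab (fun h => nbc h.symm) dac dab dbc.symm T2 (D2.append D) hPath hlong
            (by rw [Walk.mem_support_append_iff]; exact Or.inl D2.end_mem_support) hsupx'
        · exact IIC h1 h2 hxy hxz ha hb hby hc clx cly clz hxSy hySz hzSy dyz
            nab nac nbc dab dac dbc T D hPath hlong hzD hsupx'
      · -- Case II.B : y on P, z not on P
        have hPSzn : ∀ v ∈ P.support, v ∉ Sz := fun v hv hmem =>
          hmem.2 ((hmut z hzP v hv y hyP).trans (avoid_of_adj dyz dxz hxy.symm))
        have hlongr : ∀ (a' b' : V) (q : G.Walk a' b'), q.IsPath → q.length ≤ P.reverse.length := by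
          intro a' b' q hq
          rw [Walk.length_reverse]
          exact hlong _ _ q hq
        have hhalf1 := IIB_half h1 h2 hxy hxz hcz_adj ha hb hby hc clx cly clz
          hxSy hySz hzSy hxSz hzSz dyz nab nac nbc dab dac dbc P hPath hlong
          hyP hzP hxP hPSxn hPSzn
        have hhalf2 := IIB_half h1 h2 hxy hxz hcz_adj ha hb hby hc clx cly clz
          hxSy hySz hzSy hxSz hzSz dyz nab nac nbc dab dac dbc P.reverse hPath.reverse hlongr
          (by rwa [Walk.support_reverse, List.mem_reverse])
          (by rwa [Walk.support_reverse, List.mem_reverse])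
          (by rwa [Walk.support_reverse, List.mem_reverse])
          (fun v hv => hPSxn v (by rwa [Walk.support_reverse, List.mem_reverse] at hv))
          (fun v hv => hPSzn v (by rwa [Walk.support_reverse, List.mem_reverse] at hv))
        rcases hhalf2 with rfl | huS
        · exact prepend_contra hxy hxz.symm hcz_adj P hPath hlong hxP hzP
            (fun h => hPSzn c h hc)
            (fun h => hzSz (by rw [h]; exact hc)) (fun h => hxSz (by rw [h]; exact hc))
        · rcases hhalf1 with rfl | hwS
          · exact prepend_contra hxy hxz.symm hcz_adj P.reverse hPath.reverse hlongr
              (by rwa [Walk.support_reverse, List.mem_reverse])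
              (by rwa [Walk.support_reverse, List.mem_reverse])
              (fun h => hPSzn c (by rwa [Walk.support_reverse, List.mem_reverse] at h) hc)
              (fun h => hzSz (by rw [h]; exact hc)) (fun h => hxSz (by rw [h]; exact hc))
          · refine pend (t := a) hG h2 hcz_adj.symm ?_ ?_ ?_ ?_ ?_ ?_ P hPath hlong hn1 hxP huS hwS
            · intro v hv hadj
              rcases cly v hv z hadj.symm with h' | h'
              · exact dyz h'.symm
              · exact hzSy h'
            · intro v hv hadj
              rcases clz c hc v hadj with h' | h'
              · exact hzSy (h' ▸ hv)
              · exact dSySz v hv h'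
            · intro hadj
              rcases clx a ha z hadj.symm with h' | h'
              · exact dxz h'.symm
              · exact hzSx h'
            · exact fun h => nac h.symm
            · intro v hv hadj
              rcases clx a ha v hadj.symm with h' | h'
              · exact hxSy (h' ▸ hv)
              · exact dSxSy v h' hv
            · exact fun h => dSxSy a ha h
    · by_cases hzP : z ∈ P.support
      · -- Case II.B' : z on P, y not on P (swapped roles)
        have hPSyn : ∀ v ∈ P.support, v ∉ Sy := fun v hv hmem =>
          hmem.2 ((hmut y hyP v hv z hzP).trans (avoid_of_adj dyz.symm dxy hxz.symm))
        have hlongr : ∀ (a' b' : V) (q : G.Walk a' b'), q.IsPath → q.length ≤ P.reverse.length := by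
          intro a' b' q hq
          rw [Walk.length_reverse]
          exact hlong _ _ q hq
        have hhalf1 := IIB_half h1 h2 hxz hxy hby ha hc hcz_adj hb clx clz cly
          hxSz hzSy hySz hxSy hySy dyz.symm nac nab (fun h => nbc h.symm) dac dab dbc.symm
          P hPath hlong hzP hyP hxP hPSxn hPSyn
        have hhalf2 := IIB_half h1 h2 hxz hxy hby ha hc hcz_adj hb clx clz cly
          hxSz hzSy hySz hxSy hySy dyz.symm nac nab (fun h => nbc h.symm) dac dab dbc.symm
          P.reverse hPath.reverse hlongr
          (by rwa [Walk.support_reverse, List.mem_reverse])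
          (by rwa [Walk.support_reverse, List.mem_reverse])
          (by rwa [Walk.support_reverse, List.mem_reverse])
          (fun v hv => hPSxn v (by rwa [Walk.support_reverse, List.mem_reverse] at hv))
          (fun v hv => hPSyn v (by rwa [Walk.support_reverse, List.mem_reverse] at hv))
        rcases hhalf2 with rfl | huS
        · exact prepend_contra hxz hxy.symm hby P hPath hlong hxP hyP
            (fun h => hPSyn b h hb)
            (fun h => hySy (by rw [h]; exact hb)) (fun h => hxSy (by rw [h]; exact hb))
        · rcases hhalf1 with rfl | hwS
          · exact prepend_contra hxz hxy.symm hby P.reverse hPath.reverse hlongr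
              (by rwa [Walk.support_reverse, List.mem_reverse])
              (by rwa [Walk.support_reverse, List.mem_reverse])
              (fun h => hPSyn b (by rwa [Walk.support_reverse, List.mem_reverse] at h) hb)
              (fun h => hySy (by rw [h]; exact hb)) (fun h => hxSy (by rw [h]; exact hb))
          · refine pend (t := a) hG h2 hby.symm ?_ ?_ ?_ ?_ ?_ ?_ P hPath hlong hn1 hxP huS hwS
            · intro v hv hadj
              rcases clz v hv y hadj.symm with h' | h'
              · exact dyz h'
              · exact hySz h'
            · intro v hv hadj
              rcases cly b hb v hadj with h' | h'
              · exact hySz (h' ▸ hv)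
              · exact dSySz v h' hv
            · intro hadj
              rcases clx a ha y hadj.symm with h' | h'
              · exact dxy h'.symm
              · exact hySx h'
            · exact fun h => nab h.symm
            · intro v hv hadj
              rcases clx a ha v hadj.symm with h' | h'
              · exact hxSz (h' ▸ hv)
              · exact dSxSz v h' hv
            · exact fun h => dSxSz a ha h
      · -- Case II.A : neither y nor z on P
        by_cases hAy : Avoid G y u0 x
        · by_cases hAz : Avoid G z u0 x
          · have hPSyn : ∀ v ∈ P.support, v ∉ Sy := fun v hv hmem =>
              hmem.2 ((hmut y hyP v hv u0 hu0P).trans hAy)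
            have hPSzn : ∀ v ∈ P.support, v ∉ Sz := fun v hv hmem =>
              hmem.2 ((hmut z hzP v hv u0 hu0P).trans hAz)
            cases P with
            | nil => simp at hn1
            | @cons _ s _ hadjP Q =>
              have hsmem : s ∈ (Walk.cons hadjP Q).support := by simp
              have hu0mem : u0 ∈ (Walk.cons hadjP Q).support := by simp
              refine five h2 u0 s a b c hadjP dab dac dbc ?_ ?_ ?_ ?_ ?_ ?_ nab nac nbc
              · intro h
                rcases clx a ha u0 h.symm with h' | h'
                · exact hxP (h' ▸ hu0mem)
                · exact hPSxn u0 hu0mem h'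
              · intro h
                rcases cly b hb u0 h.symm with h' | h'
                · exact hyP (h' ▸ hu0mem)
                · exact hPSyn u0 hu0mem h'
              · intro h
                rcases clz c hc u0 h.symm with h' | h'
                · exact hzP (h' ▸ hu0mem)
                · exact hPSzn u0 hu0mem h'
              · intro h
                rcases clx a ha s h.symm with h' | h'
                · exact hxP (h' ▸ hsmem)
                · exact hPSxn s hsmem h'
              · intro h
                rcases cly b hb s h.symm with h' | h'
                · exact hyP (h' ▸ hsmem)
                · exact hPSyn s hsmem h'
              · intro h
                rcases clz c hc s h.symm with h' | h'
                · exact hzP (h' ▸ hsmem)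
                · exact hPSzn s hsmem h'
          · -- P inside pendant of z
            have hPSz : ∀ v ∈ P.support, v ∈ Sz := by
              intro v hv
              exact ⟨fun h => hzP (h ▸ hv), fun hav => hAz ((hmut z hzP u0 hu0P v hv).trans hav)⟩
            refine pend (t := a) hG h2 hby.symm ?_ ?_ ?_ ?_ ?_ ?_ P hPath hlong hn1 hxP
              (hPSz u0 hu0P) (hPSz w0 hw0P)
            · intro v hv hadj
              rcases clz v hv y hadj.symm with h' | h'
              · exact dyz h'
              · exact hySz h'
            · intro v hv hadj
              rcases cly b hb v hadj with h' | h'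
              · exact hySz (h' ▸ hv)
              · exact dSySz v h' hv
            · intro hadj
              rcases clx a ha y hadj.symm with h' | h'
              · exact dxy h'.symm
              · exact hySx h'
            · exact fun h => nab h.symm
            · intro v hv hadj
              rcases clx a ha v hadj.symm with h' | h'
              · exact hxSz (h' ▸ hv)
              · exact dSxSz v h' hv
            · exact fun h => dSxSz a ha h
        · -- P inside pendant of y
          have hPSy : ∀ v ∈ P.support, v ∈ Sy := by
            intro v hv
            exact ⟨fun h => hyP (h ▸ hv), fun hav => hAy ((hmut y hyP u0 hu0P v hv).trans hav)⟩
          refine pend (t := a) hG h2 hcz_adj.symm ?_ ?_ ?_ ?_ ?_ ?_ P hPath hlong hn1 hxP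
            (hPSy u0 hu0P) (hPSy w0 hw0P)
          · intro v hv hadj
            rcases cly v hv z hadj.symm with h' | h'
            · exact dyz h'.symm
            · exact hzSy h'
          · intro v hv hadj
            rcases clz c hc v hadj with h' | h'
            · exact hzSy (h' ▸ hv)
            · exact dSySz v hv h'
          · intro hadj
            rcases clx a ha z hadj.symm with h' | h'
            · exact dxz h'.symm
            · exact hzSx h'
          · exact fun h => nac h.symm
          · intro v hv hadj
            rcases clx a ha v hadj.symm with h' | h'
            · exact hxSy (h' ▸ hv)
            · exact dSxSy v h' hv
          · exact fun h => dSxSy a ha h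

end GallaiAux

/-- If a connected `(claw, P_2 + 3P_1)`-free graph has three cut vertices `x, y, z`
inducing a triangle, then each of them is a Gallai vertex. -/


theorem stmt_9 {V : Type} [Fintype V] (G : SimpleGraph V) (hG : G.Connected)
    (h1 : _root_.Free claw G) (h2 : _root_.Free P2_3P1 G)
    (x y z : V) (hxy : G.Adj x y) (hyz : G.Adj y z) (hxz : G.Adj x z)
    (hcx : IsCutVertex G x) (hcy : IsCutVertex G y) (hcz : IsCutVertex G z) :
    IsGallaiVertex G x ∧ IsGallaiVertex G y ∧ IsGallaiVertex G z := by
  refine ⟨?_, ?_, ?_⟩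
  · exact GallaiAux.gallai_x G hG h1 h2 x y z hxy hyz hxz hcx hcy hcz
  · exact GallaiAux.gallai_x G hG h1 h2 y x z hxy.symm hxz hyz hcy hcx hcz
  · exact GallaiAux.gallai_x G hG h1 h2 z y x hyz.symm hxy.symm hxz.symm hcz hcy hcx
end

section
/- Let G be a (P_5, triangle)-free graph. Then every connected component of G is either a 5-ring or a bipartite graph. -/
open SimpleGraph

section Aux
variable {V : Type} {G : SimpleGraph V}

lemma tri_free (h2 : _root_.Free (⊤ : SimpleGraph (Fin 3)) G) {a b c : V}
    (hab : G.Adj a b) (hbc : G.Adj b c) (hac : G.Adj a c) : False := by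
  apply h2.false
  refine ⟨⟨![a,b,c], ?_⟩, ?_⟩
  · intro i j hij
    fin_cases i <;> fin_cases j <;> simp_all <;>
      first
        | rfl
        | exact absurd hij hab.ne | exact absurd hij hac.ne | exact absurd hij hbc.ne
        | exact absurd hij.symm hab.ne | exact absurd hij.symm hac.ne
        | exact absurd hij.symm hbc.ne
  · intro i j
    change G.Adj (![a,b,c] i) (![a,b,c] j) ↔ _
    fin_cases i <;> fin_cases j <;>
      simp [hab, hbc, hac, hab.symm, hbc.symm, hac.symm, hab.ne, hbc.ne, hac.ne,
        hab.ne', hbc.ne', hac.ne']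

lemma p5_free (h1 : _root_.Free (pathGraph 5) G) {a b c d e : V}
    (nac : a ≠ c) (nad : a ≠ d) (nae : a ≠ e) (nbd : b ≠ d) (nbe : b ≠ e) (nce : c ≠ e)
    (hab : G.Adj a b) (hbc : G.Adj b c) (hcd : G.Adj c d) (hde : G.Adj d e)
    (hac : ¬G.Adj a c) (had : ¬G.Adj a d) (hae : ¬G.Adj a e)
    (hbd : ¬G.Adj b d) (hbe : ¬G.Adj b e) (hce : ¬G.Adj c e) : False := by
  apply h1.false
  refine ⟨⟨![a,b,c,d,e], ?_⟩, ?_⟩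
  · intro i j hij
    fin_cases i <;> fin_cases j <;> simp_all <;>
      first
        | rfl
        | exact absurd hij hab.ne | exact absurd hij hbc.ne | exact absurd hij hcd.ne
        | exact absurd hij hde.ne
        | exact absurd hij.symm hab.ne | exact absurd hij.symm hbc.ne
        | exact absurd hij.symm hcd.ne | exact absurd hij.symm hde.ne
  · have hca : ¬G.Adj c a := fun h => hac h.symm
    have hda : ¬G.Adj d a := fun h => had h.symm
    have hea : ¬G.Adj e a := fun h => hae h.symm
    have hdb : ¬G.Adj d b := fun h => hbd h.symm
    have heb : ¬G.Adj e b := fun h => hbe h.symm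
    have hec : ¬G.Adj e c := fun h => hce h.symm
    intro i j
    change G.Adj (![a,b,c,d,e] i) (![a,b,c,d,e] j) ↔ _
    fin_cases i <;> fin_cases j <;>
      simp [pathGraph_adj, hab, hbc, hcd, hde, hab.symm, hbc.symm, hcd.symm, hde.symm,
        hac, had, hae, hbd, hbe, hce, hca, hda, hea, hdb, heb, hec] <;> omega

lemma c5_of_odd (h1 : _root_.Free (pathGraph 5) G) (h2 : _root_.Free (⊤ : SimpleGraph (Fin 3)) G) :
    ∀ n : ℕ, n % 2 = 1 → ∀ g : ℕ → V, g 0 = g n → (∀ i, i < n → G.Adj (g i) (g (i+1))) →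
    ∃ f : Fin 5 → V, (∀ i, ∃ k, k ≤ n ∧ f i = g k) ∧ (∀ i : Fin 5, G.Adj (f i) (f (i+1))) := by
  intro n
  induction n using Nat.strong_induction_on with
  | _ n ih =>
  intro hodd g hclosed hadj
  -- helper: recurse to a shorter odd closed walk with vertices among g-values
  have recurse : ∀ m : ℕ, m < n → m % 2 = 1 → ∀ h : ℕ → V, h 0 = h m →
      (∀ i, i < m → G.Adj (h i) (h (i+1))) → (∀ k, k ≤ m → ∃ t, t ≤ n ∧ h k = g t) →
      ∃ f : Fin 5 → V, (∀ i, ∃ k, k ≤ n ∧ f i = g k) ∧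
        (∀ i : Fin 5, G.Adj (f i) (f (i+1))) := by
    intro m hm hodd' h hc ha hsub
    obtain ⟨f, hfmem, hfadj⟩ := ih m hm hodd' h hc ha
    refine ⟨f, fun i => ?_, hfadj⟩
    obtain ⟨k, hk, he⟩ := hfmem i
    obtain ⟨t, ht, he'⟩ := hsub k hk
    exact ⟨t, ht, he ▸ he'⟩
  rcases Nat.lt_or_ge n 7 with h7 | h7
  · -- n = 1, 3 or 5
    have hn : n = 1 ∨ n = 3 ∨ n = 5 := by omega
    rcases hn with rfl | rfl | rfl
    · have h := hadj 0 (by omega)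
      rw [show (0:ℕ)+1 = 1 from rfl, ← hclosed] at h
      exact (G.irrefl h).elim
    · have h := hadj 2 (by omega)
      rw [show (2:ℕ)+1 = 3 from rfl, ← hclosed] at h
      exact (tri_free h2 (hadj 0 (by omega)) (hadj 1 (by omega)) h.symm).elim
    · refine ⟨fun i => g i.val, fun i => ⟨i.val, by omega, rfl⟩, fun i => ?_⟩
      fin_cases i
      · exact hadj 0 (by omega)
      · exact hadj 1 (by omega)
      · exact hadj 2 (by omega)
      · exact hadj 3 (by omega)
      · show G.Adj (g 4) (g 0)
        rw [hclosed]
        exact hadj 4 (by omega)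
  · by_cases hrep : ∃ a b, a < b ∧ b ≤ n ∧ ¬(a = 0 ∧ b = n) ∧ g a = g b
    · obtain ⟨a, b, hab, hbn, hnz, heq⟩ := hrep
      by_cases hb : b = n
      · -- use the pair (0, a) instead; a ≥ 1, g a = g 0
        have ha0 : 1 ≤ a := by omega
        have han : a < n := by omega
        have hga : g a = g 0 := by rw [heq, hb, ← hclosed]
        rcases Nat.even_or_odd a with hev | hodd'
        · -- odd part: n - a,  walk k ↦ g (a + k)
          refine recurse (n - a) (by omega) (by rcases hev with ⟨t, ht⟩; omega)
            (fun k => g (a + k)) ?_ (fun i hi => ?_) (fun k hk => ⟨a + k, by omega, rfl⟩)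
          · show g (a + 0) = g (a + (n - a))
            rw [show a + 0 = a by rfl, show a + (n - a) = n by omega, hga, hclosed]
          · have := hadj (a + i) (by omega)
            rwa [show a + i + 1 = a + (i + 1) by omega] at this
        · -- odd part: a, walk g itself
          exact recurse a (by omega) (by rcases hodd' with ⟨t, ht⟩; omega) g
            (by rw [hga]) (fun i hi => hadj i (by omega)) (fun k hk => ⟨k, by omega, rfl⟩)
      · -- b < n
        have hbn' : b < n := by omega
        rcases Nat.even_or_odd (b - a) with hev | hodd'
        · -- odd part: n - (b - a), piecewise walk
          set m := n - (b - a) with hm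
          refine recurse m (by omega) (by rcases hev with ⟨t, ht⟩; omega)
            (fun k => if k ≤ a then g k else g (k + (b - a))) ?_ (fun i hi => ?_)
            (fun k hk => ?_)
          · show (if 0 ≤ a then g 0 else _) = (if m ≤ a then g m else g (m + (b - a)))
            rw [if_pos (Nat.zero_le a), if_neg (by omega),
              show m + (b - a) = n by omega, hclosed]
          · rcases Nat.lt_trichotomy i a with hia | hia | hia
            · rw [if_pos (by omega), if_pos (by omega)]
              exact hadj i (by omega)
            · rw [if_pos (by omega), if_neg (by omega),
                show i + 1 + (b - a) = b + 1 by omega, hia, heq]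
              exact hadj b (by omega)
            · rw [if_neg (by omega), if_neg (by omega)]
              have := hadj (i + (b - a)) (by omega)
              rwa [show i + (b - a) + 1 = i + 1 + (b - a) by omega] at this
          · by_cases hka : k ≤ a
            · exact ⟨k, by omega, by rw [if_pos hka]⟩
            · exact ⟨k + (b - a), by omega, by rw [if_neg hka]⟩
        · -- odd part: b - a, walk k ↦ g (a + k)
          refine recurse (b - a) (by omega) (by rcases hodd' with ⟨t, ht⟩; omega)
            (fun k => g (a + k)) ?_ (fun i hi => ?_) (fun k hk => ⟨a + k, by omega, rfl⟩)
          · show g (a + 0) = g (a + (b - a))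
            rw [show a + (b - a) = b by omega, show a + 0 = a by rfl, heq]
          · have := hadj (a + i) (by omega)
            rwa [show a + i + 1 = a + (i + 1) by omega] at this
    · push_neg at hrep
      by_cases hch : ∃ a b, a + 2 ≤ b ∧ b ≤ 4 ∧ G.Adj (g a) (g b)
      · obtain ⟨a, b, h2ab, hb4, hc⟩ := hch
        rcases Nat.even_or_odd (b - a + 1) with hev | hodd'
        · -- odd part: n - b + a + 1, piecewise walk through the chord
          set m := n - b + a + 1 with hm
          refine recurse m (by omega) (by rcases hev with ⟨t, ht⟩; rcases hodd with _; omega)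
            (fun k => if k ≤ a then g k else g (k + b - a - 1)) ?_ (fun i hi => ?_)
            (fun k hk => ?_)
          · show (if 0 ≤ a then g 0 else _) = (if m ≤ a then g m else g (m + b - a - 1))
            rw [if_pos (Nat.zero_le a), if_neg (by omega),
              show m + b - a - 1 = n by omega, hclosed]
          · rcases Nat.lt_trichotomy i a with hia | hia | hia
            · rw [if_pos (by omega), if_pos (by omega)]
              exact hadj i (by omega)
            · rw [if_pos (by omega), if_neg (by omega),
                show i + 1 + b - a - 1 = b by omega, hia]
              exact hc
            · rw [if_neg (by omega), if_neg (by omega)]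
              have := hadj (i + b - a - 1) (by omega)
              rwa [show i + b - a - 1 + 1 = i + 1 + b - a - 1 by omega] at this
          · by_cases hka : k ≤ a
            · exact ⟨k, by omega, by rw [if_pos hka]⟩
            · exact ⟨k + b - a - 1, by omega, by rw [if_neg hka]⟩
        · -- odd part: b - a + 1, cycle through the chord
          refine recurse (b - a + 1) (by omega) (by rcases hodd' with ⟨t, ht⟩; omega)
            (fun k => if k ≤ b - a then g (a + k) else g a) ?_ (fun i hi => ?_)
            (fun k hk => ?_)
          · rw [if_pos (Nat.zero_le _), if_neg (by omega), Nat.add_zero]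
          · rcases Nat.lt_or_ge i (b - a) with hib | hib
            · rw [if_pos (by omega), if_pos (by omega)]
              have := hadj (a + i) (by omega)
              rwa [show a + i + 1 = a + (i + 1) by omega] at this
            · have : i = b - a := by omega
              subst this
              rw [if_pos le_rfl, if_neg (by omega), show a + (b - a) = b by omega]
              exact hc.symm
          · by_cases hkb : k ≤ b - a
            · exact ⟨a + k, by omega, by rw [if_pos hkb]⟩
            · exact ⟨a, by omega, by rw [if_neg hkb]⟩
      · -- no repeats, no chords: g 0 .. g 4 is an induced P5, contradiction
        push_neg at hch
        have inj : ∀ a b, a < b → b ≤ 4 → g a ≠ g b := fun a b h h4 he =>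
          (hrep a b h (by omega)) (by omega) he
        have nadj : ∀ a b, a + 2 ≤ b → b ≤ 4 → ¬G.Adj (g a) (g b) := fun a b h h4 =>
          hch a b h h4
        exact (p5_free h1 (inj 0 2 (by omega) (by omega)) (inj 0 3 (by omega) (by omega))
          (inj 0 4 (by omega) (by omega)) (inj 1 3 (by omega) (by omega))
          (inj 1 4 (by omega) (by omega)) (inj 2 4 (by omega) (by omega))
          (hadj 0 (by omega)) (hadj 1 (by omega)) (hadj 2 (by omega)) (hadj 3 (by omega))
          (nadj 0 2 (by omega) (by omega)) (nadj 0 3 (by omega) (by omega))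
          (nadj 0 4 (by omega) (by omega)) (nadj 1 3 (by omega) (by omega))
          (nadj 1 4 (by omega) (by omega)) (nadj 2 4 (by omega) (by omega))).elim

lemma ring5 (h1 : _root_.Free (pathGraph 5) G) (h2 : _root_.Free (⊤ : SimpleGraph (Fin 3)) G)
    (c : G.ConnectedComponent) (f : Fin 5 → V) (hfc : ∀ i, f i ∈ c.supp)
    (hadj : ∀ i : Fin 5, G.Adj (f i) (f (i + 1))) : Is5Ring (G.induce c.supp) := by
  classical
  -- index arithmetic facts
  have i11 : ∀ t : Fin 5, t+1+1 = t+2 := by decide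
  have i21 : ∀ t : Fin 5, t+2+1 = t+3 := by decide
  have i31 : ∀ t : Fin 5, t+3+1 = t+4 := by decide
  have i41 : ∀ t : Fin 5, t+4+1 = t := by decide
  have i14 : ∀ t : Fin 5, t+1+4 = t := by decide
  have i24 : ∀ t : Fin 5, t+2+4 = t+1 := by decide
  have i34 : ∀ t : Fin 5, t+3+4 = t+2 := by decide
  have i44 : ∀ t : Fin 5, t+4+4 = t+3 := by decide
  have i12 : ∀ t : Fin 5, t+1+2 = t+3 := by decide
  have i22 : ∀ t : Fin 5, t+2+2 = t+4 := by decide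
  have i32 : ∀ t : Fin 5, t+3+2 = t := by decide
  have i42 : ∀ t : Fin 5, t+4+2 = t+1 := by decide
  have i13 : ∀ t : Fin 5, t+1+3 = t+4 := by decide
  have i23 : ∀ t : Fin 5, t+2+3 = t := by decide
  have i33 : ∀ t : Fin 5, t+3+3 = t+1 := by decide
  have i43 : ∀ t : Fin 5, t+4+3 = t+2 := by decide
  -- adjacency on the cycle
  have A : ∀ t s : Fin 5, s = t + 1 ∨ t = s + 1 → G.Adj (f t) (f s) := by
    rintro t s (rfl | rfl)
    · exact hadj t
    · exact (hadj s).symm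
  have N2 : ∀ t : Fin 5, ¬ G.Adj (f t) (f (t+2)) := by
    intro t h
    exact tri_free h2 (hadj t) (by rw [← i11 t]; exact hadj (t+1)) h
  have N : ∀ t s : Fin 5, s = t + 2 ∨ t = s + 2 → ¬ G.Adj (f t) (f s) := by
    rintro t s (rfl | rfl)
    · exact N2 t
    · exact fun h => N2 s h.symm
  have inj2 : ∀ t : Fin 5, f t ≠ f (t+2) := by
    intro t h
    refine tri_free h2 (A (t+2) (t+3) (Or.inl (i21 t).symm))
      (A (t+3) (t+4) (Or.inl (i31 t).symm)) ?_
    have h4 : G.Adj (f (t+4)) (f t) := A (t+4) t (Or.inl (i41 t).symm)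
    rw [h] at h4
    exact h4.symm
  have NJ : ∀ t s : Fin 5, t ≠ s → f t ≠ f s := by
    have c5 : ∀ t s : Fin 5, t = s ∨ s = t+1 ∨ s = t+2 ∨ s = t+3 ∨ s = t+4 := by decide
    intro t s hts
    rcases c5 t s with h | rfl | rfl | rfl | rfl
    · exact absurd h hts
    · exact (A t (t+1) (Or.inl rfl)).ne
    · exact inj2 t
    · exact fun h => inj2 (t+3) (by rw [i32 t]; exact h.symm)
    · exact fun h => (A (t+4) t (Or.inl (i41 t).symm)).ne h.symm
  -- the classes
  set S' : Fin 5 → Set V := fun i => {v | G.Adj v (f (i+4)) ∧ G.Adj v (f (i+1))} with hS'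
  have prof : ∀ i : Fin 5, ∀ v ∈ S' i,
      ¬G.Adj v (f i) ∧ ¬G.Adj v (f (i+2)) ∧ ¬G.Adj v (f (i+3)) := by
    rintro i v ⟨h4, h1'⟩
    refine ⟨fun h => tri_free h2 h (hadj i) h1', fun h => ?_, fun h => ?_⟩
    · exact tri_free h2 h1' (by rw [← i11 i]; exact hadj (i+1)) h
    · exact tri_free h2 h (by rw [← i31 i]; exact hadj (i+3)) h4
  have fmem : ∀ i : Fin 5, f i ∈ S' i := fun i => ⟨A i (i+4) (Or.inr (i41 i).symm), hadj i⟩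
  have disj : ∀ i j : Fin 5, i ≠ j → ∀ v : V, v ∈ S' i → v ∈ S' j → False := by
    have c5 : ∀ t s : Fin 5, t = s ∨ s = t+1 ∨ s = t+2 ∨ s = t+3 ∨ s = t+4 := by decide
    intro i j hij v hvi hvj
    rcases c5 i j with h | rfl | rfl | rfl | rfl
    · exact hij h
    · have hb : G.Adj v (f i) := by have h := hvj.1; rwa [i14 i] at h
      exact (prof i v hvi).1 hb
    · have hb : G.Adj v (f (i+3)) := by have h := hvj.2; rwa [i21 i] at h
      exact tri_free h2 hb (A (i+3) (i+4) (Or.inl (i31 i).symm)) hvi.1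
    · have hb : G.Adj v (f (i+2)) := by have h := hvj.1; rwa [i34 i] at h
      exact tri_free h2 hvi.2 (A (i+1) (i+2) (Or.inl (i11 i).symm)) hb
    · have hb : G.Adj v (f i) := by have h := hvj.2; rwa [i41 i] at h
      exact (prof i v hvi).1 hb
  have d13 : ∀ t : Fin 5, t+1 ≠ t+3 := by decide
  have d24 : ∀ t : Fin 5, t+2 ≠ t+4 := by decide
  have d20 : ∀ t : Fin 5, t+2 ≠ t := by decide
  have d30 : ∀ t : Fin 5, t+3 ≠ t := by decide
  have mkS : ∀ (j : Fin 5) (u : V), G.Adj u (f (j+4)) → G.Adj u (f (j+1)) → u ∈ S' j :=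
    fun j u h4 h1 => ⟨h4, h1⟩
  have step : ∀ i : Fin 5, ∀ v ∈ S' i, ∀ u, G.Adj u v → ∃ j, u ∈ S' j := by
    intro i v hv u huv
    obtain ⟨h4, h1'⟩ := hv
    obtain ⟨hni, hni2, hni3⟩ := prof i v ⟨h4, h1'⟩
    by_cases hcyc : ∃ t, G.Adj u (f t)
    · obtain ⟨t, ht⟩ := hcyc
      by_cases hA : G.Adj u (f (t+2))
      · refine ⟨t+1, mkS (t+1) u ?_ ?_⟩
        · rw [i14 t]; exact ht
        · rw [i11 t]; exact hA
      · by_cases hB : G.Adj u (f (t+3))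
        · refine ⟨t+4, mkS (t+4) u ?_ ?_⟩
          · rw [i44 t]; exact hB
          · rw [i41 t]; exact ht
        · have hC : ¬G.Adj u (f (t+1)) := fun h => tri_free h2 ht (hadj t) h
          have hD : ¬G.Adj u (f (t+4)) := fun h =>
            tri_free h2 h (A (t+4) t (Or.inl (i41 t).symm)) ht
          have e23 : G.Adj (f (t+2)) (f (t+3)) := A _ _ (Or.inl (i21 t).symm)
          have e34 : G.Adj (f (t+3)) (f (t+4)) := A _ _ (Or.inl (i31 t).symm)
          have e40 : G.Adj (f (t+4)) (f t) := A _ _ (Or.inl (i41 t).symm)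
          have nac : f (t+2) ≠ f (t+4) := NJ _ _ (d24 t)
          have nad : f (t+2) ≠ f t := NJ _ _ (d20 t)
          have nbd : f (t+3) ≠ f t := NJ _ _ (d30 t)
          have nae : f (t+2) ≠ u := fun h => hB (h ▸ e23)
          have nbe : f (t+3) ≠ u := fun h => hD (h ▸ e34)
          have nce : f (t+4) ≠ u := fun h => hB (h ▸ e34.symm)
          exact (p5_free h1 nac nad nae nbd nbe nce
            e23 e34 e40 ht.symm
            (N (t+2) (t+4) (Or.inl (i22 t).symm))
            (N (t+2) t (Or.inr rfl))
            (fun h => hA h.symm)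
            (N (t+3) t (Or.inl (i32 t).symm))
            (fun h => hB h.symm)
            (fun h => hD h.symm)).elim
    · push_neg at hcyc
      have e12 : G.Adj (f (i+1)) (f (i+2)) := A _ _ (Or.inl (i11 i).symm)
      have e23' : G.Adj (f (i+2)) (f (i+3)) := A _ _ (Or.inl (i21 i).symm)
      have e34' : G.Adj (f (i+3)) (f (i+4)) := A _ _ (Or.inl (i31 i).symm)
      have nac : u ≠ f (i+1) := fun h => hcyc (i+2) (by rw [h]; exact e12)
      have nad : u ≠ f (i+2) := fun h => hcyc (i+3) (by rw [h]; exact e23')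
      have nae : u ≠ f (i+3) := fun h => hcyc (i+4) (by rw [h]; exact e34')
      have nbd : v ≠ f (i+2) := fun h =>
        N (i+2) (i+4) (Or.inl (i22 i).symm) (by rw [← h]; exact h4)
      have nbe : v ≠ f (i+3) := fun h =>
        N (i+3) (i+1) (Or.inr (i12 i).symm) (by rw [← h]; exact h1')
      have nce : f (i+1) ≠ f (i+3) := NJ _ _ (d13 i)
      have nP13 : ¬G.Adj (f (i+1)) (f (i+3)) := N (i+1) (i+3) (Or.inl (i12 i).symm)
      exact (p5_free h1 nac nad nae nbd nbe nce
        huv h1' e12 e23'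
        (hcyc (i+1)) (hcyc (i+2)) (hcyc (i+3))
        hni2 hni3 nP13).elim
  have cover : ∀ (x y : V), G.Walk x y → ∀ i : Fin 5, x ∈ S' i → ∃ j, y ∈ S' j := by
    intro x y w
    induction w with
    | nil => exact fun i hi => ⟨i, hi⟩
    | cons h p ih =>
        intro i hi
        obtain ⟨j, hj⟩ := step i _ hi _ h.symm
        exact ih j hj
  have suppmem : ∀ i : Fin 5, ∀ v : V, v ∈ S' i → v ∈ c.supp := by
    intro i v hv
    rw [ConnectedComponent.mem_supp_iff]
    rw [← (c.mem_supp_iff (f (i+4))).mp (hfc (i+4))]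
    exact ConnectedComponent.sound ⟨Walk.cons hv.1 Walk.nil⟩
  refine ⟨fun i => Subtype.val ⁻¹' (S' i), fun i => ⟨⟨f i, hfc i⟩, fmem i⟩, ?_, ?_, ?_, ?_⟩
  · rintro ⟨v, hvc⟩
    have hreach : G.Reachable (f 0) v := by
      apply ConnectedComponent.exact
      rw [(c.mem_supp_iff (f 0)).mp (hfc 0), (c.mem_supp_iff v).mp hvc]
    obtain ⟨w⟩ := hreach
    obtain ⟨j, hj⟩ := cover (f 0) v w 0 (fmem 0)
    exact ⟨j, hj, fun k hk => by_contra fun hne => (disj k j hne v hk hj).elim⟩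
  · rintro i ⟨u, huc⟩ hu ⟨v, hvc⟩ hv hadjuv
    have hGuv : G.Adj u v := hadjuv
    exact tri_free h2 hGuv hv.2 hu.2
  · rintro i ⟨u, huc⟩ hu ⟨v, hvc⟩ hv
    show G.Adj u v
    by_contra hn
    have hv1 : G.Adj v (f i) := by rw [← i14 i]; exact hv.1
    have hv2 : G.Adj v (f (i+2)) := by rw [← i11 i]; exact hv.2
    obtain ⟨pv1, pv2, pv3⟩ := prof (i+1) v hv
    have pv2' : ¬G.Adj v (f (i+3)) := by rw [← i12 i]; exact pv2
    have pv3' : ¬G.Adj v (f (i+4)) := by rw [← i13 i]; exact pv3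
    obtain ⟨pu1, pu2, pu3⟩ := prof i u hu
    have e23 : G.Adj (f (i+2)) (f (i+3)) := A _ _ (Or.inl (i21 i).symm)
    have e34 : G.Adj (f (i+3)) (f (i+4)) := A _ _ (Or.inl (i31 i).symm)
    exact p5_free h1
      (fun h => N (i+3) i (Or.inl (i32 i).symm) (by rw [← h]; exact hv1))
      (fun h => N (i+4) (i+2) (Or.inr (i22 i).symm) (by rw [← h]; exact hv2))
      (fun h => pv1 (by rw [h]; exact hu.2))
      (NJ (i+2) (i+4) (d24 i))
      (fun h => N (i+2) (i+4) (Or.inl (i22 i).symm) (by rw [h]; exact hu.1))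
      (fun h => N (i+3) (i+1) (Or.inr (i12 i).symm) (by rw [h]; exact hu.2))
      hv2 e23 e34 hu.1.symm
      pv2' pv3' (fun h => hn h.symm)
      (N (i+2) (i+4) (Or.inl (i22 i).symm))
      (fun h => pu2 h.symm) (fun h => pu3 h.symm)
  · rintro i ⟨u, huc⟩ hu ⟨v, hvc⟩ hv hadjuv
    have hGuv : G.Adj u v := hadjuv
    have hv1 : G.Adj v (f (i+1)) := by rw [← i24 i]; exact hv.1
    exact tri_free h2 hGuv hv1 hu.2

lemma reach_getVert {x y : V} (w : G.Walk x y) (k : ℕ) : G.Reachable x (w.getVert k) := by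
  induction w generalizing k with
  | nil =>
      cases k with
      | zero => rw [Walk.getVert_zero]
      | succ k => rw [Walk.getVert_of_length_le _ (by simp)]
  | cons h p ih =>
      cases k with
      | zero => rw [Walk.getVert_zero]
      | succ k => rw [Walk.getVert_cons_succ]; exact (h.reachable).trans (ih k)

end Aux

/-- Every connected component of a `(P_5, triangle)`-free graph is a 5-ring or
bipartite. -/
theorem stmt_13 {V : Type} [Fintype V] (G : SimpleGraph V)
    (h1 : _root_.Free (pathGraph 5) G) (h2 : _root_.Free (⊤ : SimpleGraph (Fin 3)) G) :
    ∀ c : G.ConnectedComponent,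
      Is5Ring (G.induce c.supp) ∨ (G.induce c.supp).Colorable 2 := by
  intro c
  by_cases hP : ∃ f : Fin 5 → V, (∀ i, f i ∈ c.supp) ∧ (∀ i : Fin 5, G.Adj (f i) (f (i+1)))
  · obtain ⟨f, hfc, hadj⟩ := hP
    exact Or.inl (ring5 h1 h2 c f hfc hadj)
  · right
    obtain ⟨r, hr⟩ := c.exists_rep
    refine ⟨Coloring.mk (fun v => ⟨G.dist r ↑v % 2, by omega⟩) ?_⟩
    rintro u v huv heq
    have hGuv : G.Adj ↑u ↑v := huv
    have hcu : G.connectedComponentMk ↑u = c := (c.mem_supp_iff ↑u).mp u.2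
    have hcv : G.connectedComponentMk ↑v = c := (c.mem_supp_iff ↑v).mp v.2
    have hru : G.Reachable r ↑u := ConnectedComponent.exact (hr.trans hcu.symm)
    have hrv : G.Reachable r ↑v := ConnectedComponent.exact (hr.trans hcv.symm)
    obtain ⟨p, hp⟩ := hru.exists_walk_length_eq_dist
    obtain ⟨q, hq⟩ := hrv.exists_walk_length_eq_dist
    have heq' : G.dist r ↑u % 2 = G.dist r ↑v % 2 := congrArg Fin.val heq
    set w : G.Walk r r := p.append (Walk.cons hGuv q.reverse) with hw
    have hlen : w.length = p.length + (q.length + 1) := by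
      rw [hw, Walk.length_append, Walk.length_cons, Walk.length_reverse]
    have hodd : w.length % 2 = 1 := by omega
    obtain ⟨f, hmem, hfadj⟩ := c5_of_odd h1 h2 w.length hodd w.getVert
      (by rw [Walk.getVert_zero, Walk.getVert_length]) (fun i hi => w.adj_getVert_succ hi)
    apply hP
    refine ⟨f, fun i => ?_, hfadj⟩
    obtain ⟨k, _, hk⟩ := hmem i
    rw [c.mem_supp_iff, hk, ← hr]
    exact (ConnectedComponent.sound (reach_getVert w k)).symm
end

section
/- Let G be a connected (P_5, C_5, triangle)-free graph with adjacent vertices x and y such that {x, y} is a dominating set of G and deg(y) ≤ deg(x). Then x is a Gallai vertex of G. -/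
open SimpleGraph

/-- `G` is `H`-free: no induced subgraph of `G` is isomorphic to `H`. -/
def InducedFree {W V : Type*} (H : SimpleGraph W) (G : SimpleGraph V) : Prop :=
  IsEmpty (H ↪g G)

section GallaiAux
open Finset

lemma k3_of {V : Type} (G : SimpleGraph V) (h3 : InducedFree (⊤ : SimpleGraph (Fin 3)) G)
    {a b c : V} (hab : G.Adj a b) (hbc : G.Adj b c) (hac : G.Adj a c) : False := by
  apply h3.false
  have hab' := hab.ne; have hbc' := hbc.ne; have hac' := hac.ne
  refine ⟨⟨![a,b,c], ?_⟩, ?_⟩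
  · intro i j hij
    fin_cases i <;> fin_cases j <;> simp_all <;> omega
  · intro i j
    change G.Adj (![a,b,c] i) (![a,b,c] j) ↔ _
    simp only [top_adj]
    fin_cases i <;> fin_cases j <;>
      simp_all [G.irrefl, hab.symm, hbc.symm, hac.symm]

lemma p5_of {V : Type} (G : SimpleGraph V) (h1 : InducedFree (pathGraph 5) G)
    {v0 v1 v2 v3 v4 : V}
    (d02 : v0 ≠ v2) (d03 : v0 ≠ v3) (d04 : v0 ≠ v4) (d13 : v1 ≠ v3) (d14 : v1 ≠ v4)
    (d24 : v2 ≠ v4)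
    (e01 : G.Adj v0 v1) (e12 : G.Adj v1 v2) (e23 : G.Adj v2 v3) (e34 : G.Adj v3 v4)
    (n02 : ¬ G.Adj v0 v2) (n03 : ¬ G.Adj v0 v3) (n04 : ¬ G.Adj v0 v4)
    (n13 : ¬ G.Adj v1 v3) (n14 : ¬ G.Adj v1 v4) (n24 : ¬ G.Adj v2 v4) : False := by
  apply h1.false
  have d01 := e01.ne; have d12 := e12.ne; have d23 := e23.ne; have d34 := e34.ne
  have n20 : ¬ G.Adj v2 v0 := fun h => n02 h.symm
  have n30 : ¬ G.Adj v3 v0 := fun h => n03 h.symm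
  have n40 : ¬ G.Adj v4 v0 := fun h => n04 h.symm
  have n31 : ¬ G.Adj v3 v1 := fun h => n13 h.symm
  have n41 : ¬ G.Adj v4 v1 := fun h => n14 h.symm
  have n42 : ¬ G.Adj v4 v2 := fun h => n24 h.symm
  refine ⟨⟨![v0,v1,v2,v3,v4], ?_⟩, ?_⟩
  · intro i j hij
    fin_cases i <;> fin_cases j <;> simp_all <;> omega
  · intro i j
    change G.Adj (![v0,v1,v2,v3,v4] i) (![v0,v1,v2,v3,v4] j) ↔ _
    simp only [pathGraph_adj]
    fin_cases i <;> fin_cases j <;>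
      simp_all [G.irrefl, e01.symm, e12.symm, e23.symm, e34.symm]


variable {V : Type} [DecidableEq V] {G : SimpleGraph V} {U W : Finset V}

/-- paths between two `U`-vertices in a "bipartite" graph have even length,
twice the number of `W`-vertices on them. -/
lemma alt_len
    (hcover : ∀ v : V, v ∈ U ∨ v ∈ W)
    (hdisj : ∀ v : V, v ∈ U → v ∈ W → False)
    (hUind : ∀ u v, u ∈ U → v ∈ U → ¬ G.Adj u v)
    (hWind : ∀ u v, u ∈ W → v ∈ W → ¬ G.Adj u v)
    (n : ℕ) {u u' : V} (q : G.Walk u u') [DecidablePred (· ∈ W)]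
    (hlen : q.length = n) (hq : q.IsPath) (hu : u ∈ U) (hu' : u' ∈ U) :
    q.length = 2 * (q.support.toFinset.filter (· ∈ W)).card := by
  induction n using Nat.strong_induction_on generalizing u u' q with
  | _ n IH =>
  cases q with
  | nil =>
    simp only [Walk.support_nil, List.toFinset_cons, List.toFinset_nil, LawfulSingleton.insert_empty_eq]
    rw [filter_singleton]
    simp only [Walk.length_nil]
    rw [if_neg (fun hw => hdisj u hu hw)]
    simp
  | @cons _ w1 _ h q1 =>
    have hw1 : w1 ∈ W := by
      rcases hcover w1 with h' | h'
      · exact absurd h (hUind _ _ hu h')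
      · exact h'
    cases q1 with
    | nil => exact absurd hu' (fun hu'' => hdisj _ hu'' hw1)
    | @cons _ u2 _ h2 q2 =>
      have hu2 : u2 ∈ U := by
        rcases hcover u2 with h' | h'
        · exact h'
        · exact absurd h2 (hWind _ _ hw1 h')
      have hq2 : q2.IsPath := by
        have := ((Walk.cons_isPath_iff _ _).mp hq).1
        exact ((Walk.cons_isPath_iff _ _).mp this).1
      have hnd := hq.support_nodup
      simp only [Walk.support_cons, List.nodup_cons] at hnd
      have hw1not : w1 ∉ q2.support := hnd.2.1
      have hunot : u ∉ q2.support ∧ u ≠ w1 := by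
        have := hnd.1
        simp only [List.mem_cons] at this
        push_neg at this
        exact ⟨this.2, this.1⟩
      have hrec := IH q2.length (by simp [Walk.length_cons] at hlen ⊢; omega) q2 rfl hq2 hu2 hu'
      simp only [Walk.support_cons, List.toFinset_cons, Walk.length_cons]
      rw [filter_insert, if_neg (fun hw => hdisj u hu hw), filter_insert, if_pos hw1]
      rw [card_insert_of_notMem (fun hc => hw1not (by simpa using (mem_filter.mp hc).1))]
      omega

/-- The key neighborhood counting lemma : on a path between two `U` vertices avoiding `x`,
each "qualifying" `W`-vertex contributes distinct vertices of `N0`, plus one extra. -/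
lemma claimb {x : V}
    (hcover : ∀ v : V, v ∈ U ∨ v ∈ W)
    (hdisj : ∀ v : V, v ∈ U → v ∈ W → False)
    (hUind : ∀ u v, u ∈ U → v ∈ U → ¬ G.Adj u v)
    (hWind : ∀ u v, u ∈ W → v ∈ W → ¬ G.Adj u v)
    (N0 : Finset V) (Qual : V → Prop) [DecidablePred Qual]
    (hQ : ∀ w z, w ∈ W → Qual w → G.Adj w z → z ≠ x → z ∈ N0)
    (n : ℕ) {u u' : V} (q : G.Walk u u')
    (hlen : q.length = n) (hq : q.IsPath) (hx : x ∉ q.support) (hu : u ∈ U) (hu' : u' ∈ U) :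
    1 ≤ (q.support.toFinset.filter (fun w => w ∈ W ∧ Qual w)).card →
    (q.support.toFinset.filter (fun w => w ∈ W ∧ Qual w)).card + 1
      ≤ (q.support.toFinset.filter (· ∈ N0)).card := by
  induction n using Nat.strong_induction_on generalizing u u' q with
  | _ n IH =>
  cases q with
  | nil =>
    intro hone
    exfalso
    simp only [Walk.support_nil, List.toFinset_cons, List.toFinset_nil, LawfulSingleton.insert_empty_eq] at hone
    rw [filter_singleton] at hone
    rw [if_neg (fun hw => hdisj u hu hw.1)] at hone
    simp at hone
  | @cons _ w1 _ h q1 =>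
    have hw1 : w1 ∈ W := by
      rcases hcover w1 with h' | h'
      · exact absurd h (hUind _ _ hu h')
      · exact h'
    cases q1 with
    | nil => exact absurd hu' (fun hu'' => hdisj _ hu'' hw1)
    | @cons _ u2 _ h2 q2 =>
      intro hone
      have hu2 : u2 ∈ U := by
        rcases hcover u2 with h' | h'
        · exact h'
        · exact absurd h2 (hWind _ _ hw1 h')
      have hq2 : q2.IsPath := by
        have := ((Walk.cons_isPath_iff _ _).mp hq).1
        exact ((Walk.cons_isPath_iff _ _).mp this).1
      have hnd := hq.support_nodup
      simp only [Walk.support_cons, List.nodup_cons] at hnd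
      have hw1not : w1 ∉ q2.support := hnd.2.1
      have hunot : u ∉ q2.support ∧ u ≠ w1 := by
        have := hnd.1
        simp only [List.mem_cons] at this
        push_neg at this
        exact ⟨this.2, this.1⟩
      have hx2 : x ∉ q2.support := by
        simp only [Walk.support_cons, List.mem_cons] at hx
        push_neg at hx; exact hx.2.2
      have hxu : u ≠ x := by
        intro hc; subst hc; exact hx (by simp)
      have hxw1 : w1 ≠ x := by
        intro hc; subst hc
        exact hx (by simp [Walk.support_cons])
      -- abbreviations
      set T2 := q2.support.toFinset with hT2
      have hsupp : ((Walk.cons h (Walk.cons h2 q2)).support.toFinset : Finset V)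
          = insert u (insert w1 T2) := by
        simp [Walk.support_cons, hT2]
      rw [hsupp] at hone ⊢
      have huW : u ∉ W := fun hw => hdisj u hu hw
      rw [filter_insert, if_neg (fun hw => huW hw.1), filter_insert] at hone ⊢
      by_cases hq1 : Qual w1
      · rw [if_pos ⟨hw1, hq1⟩] at hone ⊢
        have hw1T2 : w1 ∉ filter (fun w => w ∈ W ∧ Qual w) T2 :=
          fun hc => hw1not (by simpa [hT2] using (mem_filter.mp hc).1)
        rw [card_insert_of_notMem hw1T2] at hone ⊢
        -- u ∈ N0
        have huN0 : u ∈ N0 := hQ w1 u hw1 hq1 h.symm hxu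
        -- u2 ∈ N0 and in T2
        have hu2N0 : u2 ∈ N0 := hQ w1 u2 hw1 hq1 h2 (by
          intro hc; subst hc
          exact hx2 (q2.start_mem_support))
        have hu2T2 : u2 ∈ T2 := by simp [hT2, q2.start_mem_support]
        -- count N0 side
        rw [filter_insert, if_pos huN0, filter_insert]
        have huins : u ∉ (if w1 ∈ N0 then insert w1 (filter (· ∈ N0) T2)
            else filter (· ∈ N0) T2) := by
          split <;> simp only [mem_insert, mem_filter] <;> push_neg
          · exact ⟨hunot.2, fun hc _ => hunot.1 (by simpa [hT2] using hc)⟩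
          · exact fun hc _ => hunot.1 (by simpa [hT2] using hc)
        rw [card_insert_of_notMem huins]
        have hmono : (filter (· ∈ N0) T2).card
            ≤ (if w1 ∈ N0 then insert w1 (filter (· ∈ N0) T2) else filter (· ∈ N0) T2).card := by
          split
          · exact card_le_card (subset_insert _ _)
          · exact le_rfl
        by_cases hm2 : 1 ≤ (filter (fun w => w ∈ W ∧ Qual w) T2).card
        · have := IH q2.length (by simp [Walk.length_cons] at hlen ⊢; omega) q2 rfl hq2 hx2 hu2 hu' hm2
          rw [← hT2] at this
          omega
        · -- m2 = 0 but u2 ∈ filter N0 T2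
          have : 1 ≤ (filter (· ∈ N0) T2).card := by
            refine card_pos.mpr ⟨u2, ?_⟩
            exact mem_filter.mpr ⟨hu2T2, hu2N0⟩
          omega
      · simp only [hq1, and_false, if_false] at hone ⊢
        have := IH q2.length (by simp [Walk.length_cons] at hlen ⊢; omega) q2 rfl hq2 hx2 hu2 hu' hone
        rw [← hT2] at this
        have hmq : (filter (· ∈ N0) T2).card ≤ (filter (· ∈ N0) (insert u (insert w1 T2))).card := by
          apply card_le_card
          apply filter_subset_filter
          intro z hz; simp only [mem_insert]; tauto
        omega


/-- greedy zig-zag path builder through a nested family of neighborhoods. -/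
lemma zig (nbG : V → Finset V) (W UB : Finset V)
    (hWUB : ∀ z, z ∈ UB → z ∈ W → False)
    (hadj : ∀ w z, w ∈ W → z ∈ nbG w → G.Adj w z)
    (n : ℕ) :
    ∀ (F : Finset V), F.card = n → ∀ (c : V) (used : Finset V),
    (∀ w ∈ F, w ∈ W) →
    (∀ w ∈ F, ∀ w' ∈ F, nbG w ⊆ nbG w' ∨ nbG w' ⊆ nbG w) →
    (∀ w ∈ F, nbG w ⊆ UB) →
    (∀ w ∈ F, c ∈ nbG w) →
    c ∈ used →
    (∀ w ∈ F, used.card + (F.filter (fun w' => nbG w' ⊆ nbG w)).card ≤ (nbG w).card) →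
    ∃ (d : V) (q : G.Walk c d), q.IsPath ∧ q.length = 2 * F.card ∧
      ∀ z ∈ q.support, z = c ∨ z ∈ F ∨ (z ∈ UB ∧ z ∉ used) := by
  induction n using Nat.strong_induction_on with
  | _ n IH =>
  intro F hcard c used hFW hcomp hnbU hc hcused hsize
  rcases eq_or_ne n 0 with hn0 | hn0
  · have hF : F = ∅ := card_eq_zero.mp (hcard.trans hn0)
    subst hF
    exact ⟨c, Walk.nil, by simp [Walk.isPath_iff_eq_nil], by simp, by simp⟩
  · have hFne : F.Nonempty := by
      rw [← card_pos, hcard]; omega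
    obtain ⟨v, hvF, hvmin⟩ := F.exists_min_image (fun w => (nbG w).card) hFne
    -- v's neighborhood is contained in that of every member of F
    have hvsub : ∀ w ∈ F, nbG v ⊆ nbG w := by
      intro w hw
      rcases hcomp v hvF w hw with h' | h'
      · exact h'
      · rw [eq_of_subset_of_card_le h' (hvmin w hw)]
    -- pick a fresh b'
    have hbig : used.card < (nbG v).card := by
      have h1 := hsize v hvF
      have h2 : 0 < (F.filter (fun w' => nbG w' ⊆ nbG v)).card :=
        card_pos.mpr ⟨v, mem_filter.mpr ⟨hvF, subset_rfl⟩⟩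
      omega
    have hfresh : ∃ b', b' ∈ nbG v ∧ b' ∉ used := by
      by_contra hcon
      push_neg at hcon
      have : nbG v ⊆ used := fun z hz => hcon z hz
      exact absurd (card_le_card this) (by omega)
    obtain ⟨b', hb'nb, hb'used⟩ := hfresh
    set F' := F.erase v with hF'
    have hcard' : F'.card = n - 1 := by
      rw [hF', card_erase_of_mem hvF, hcard]
    have hsub' : ∀ w ∈ F', nbG v ⊆ nbG w := fun w hw => hvsub w (mem_of_mem_erase hw)
    have hrec := IH (n-1) (by omega) F' hcard' b' (insert b' used)
      (fun w hw => hFW w (mem_of_mem_erase hw))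
      (fun w hw w' hw' => hcomp w (mem_of_mem_erase hw) w' (mem_of_mem_erase hw'))
      (fun w hw => hnbU w (mem_of_mem_erase hw))
      (fun w hw => hsub' w hw hb'nb)
      (mem_insert_self _ _)
      (by
        intro w hw
        have hwF := mem_of_mem_erase hw
        have h1 := hsize w hwF
        have hins : insert v (F'.filter (fun w' => nbG w' ⊆ nbG w))
            ⊆ F.filter (fun w' => nbG w' ⊆ nbG w) := by
          intro z hz
          rcases mem_insert.mp hz with rfl | hz'
          · exact mem_filter.mpr ⟨hvF, hvsub w hwF⟩
          · have := mem_filter.mp hz'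
            exact mem_filter.mpr ⟨mem_of_mem_erase this.1, this.2⟩
        have hvnot : v ∉ F'.filter (fun w' => nbG w' ⊆ nbG w) := by
          intro hcon
          exact (notMem_erase v F) (mem_filter.mp hcon).1
        have hcard2 := card_le_card hins
        rw [card_insert_of_notMem hvnot] at hcard2
        rw [card_insert_of_notMem hb'used]
        omega)
    obtain ⟨d, q', hq'path, hq'len, hq'supp⟩ := hrec
    -- assemble:  c — v — b' — q'
    have hadj_cv : G.Adj c v := ((hadj v c (hFW v hvF) (hc v hvF))).symm
    have hadj_vb : G.Adj v b' := hadj v b' (hFW v hvF) hb'nb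
    refine ⟨d, Walk.cons hadj_cv (Walk.cons hadj_vb q'), ?_, ?_, ?_⟩
    · rw [Walk.cons_isPath_iff, Walk.cons_isPath_iff]
      refine ⟨⟨hq'path, ?_⟩, ?_⟩
      · -- v ∉ q'.support
        intro hcon
        rcases hq'supp v hcon with heq | h' | h'
        · exact hWUB b' (hnbU v hvF hb'nb) (heq ▸ hFW v hvF)
        · exact (notMem_erase v F) h'
        · exact hWUB v h'.1 (hFW v hvF)
      · -- c ∉ v :: q'.support
        simp only [Walk.support_cons, List.mem_cons]
        rintro (heq | hcon)
        · exact hWUB v (heq ▸ hnbU v hvF (hc v hvF)) (hFW v hvF)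
        · rcases hq'supp c hcon with heq | h' | h'
          · exact hb'used (heq ▸ hcused)
          · exact hWUB c (hnbU v hvF (hc v hvF)) (hFW c (mem_of_mem_erase h'))
          · exact h'.2 (mem_insert_of_mem hcused)
    · simp only [Walk.length_cons, hq'len, hcard', hcard]
      omega
    · intro z hz
      simp only [Walk.support_cons, List.mem_cons] at hz
      rcases hz with rfl | rfl | hz'
      · exact Or.inl rfl
      · exact Or.inr (Or.inl hvF)
      · rcases hq'supp z hz' with heq | h' | h'
        · subst heq
          exact Or.inr (Or.inr ⟨hnbU v hvF hb'nb, hb'used⟩)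
        · exact Or.inr (Or.inl (mem_of_mem_erase h'))
        · refine Or.inr (Or.inr ⟨h'.1, fun hc2 => h'.2 (mem_insert_of_mem hc2)⟩)

end GallaiAux

section MainThm
open Finset

/-- In a connected `(P_5, C_5, triangle)`-free graph with a dominating edge `xy`
such that `deg y ≤ deg x`, the vertex `x` is a Gallai vertex. -/
theorem stmt_16 {V : Type} [Fintype V] (G : SimpleGraph V) (hG : G.Connected)
    (h1 : InducedFree (pathGraph 5) G) (h2 : InducedFree (cycleGraph 5) G)
    (h3 : InducedFree (⊤ : SimpleGraph (Fin 3)) G)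
    (x y : V) (hxy : G.Adj x y)
    (hdom : ∀ v : V, v ∈ ({x, y} : Set V) ∨ ∃ d ∈ ({x, y} : Set V), G.Adj v d)
    (hdeg : (G.neighborSet y).ncard ≤ (G.neighborSet x).ncard) :
    IsGallaiVertex G x := by
  classical
  intro s t p hlp
  by_contra hxp
  have hpath : p.IsPath := hlp.1
  have hmax : ∀ (c d : V) (q : G.Walk c d), q.IsPath → q.length ≤ p.length := hlp.2
  set U : Finset V := univ.filter (G.Adj y ·) with hUdef
  set W : Finset V := univ.filter (G.Adj x ·) with hWdef
  have memU : ∀ z, z ∈ U ↔ G.Adj y z := by intro z; simp [hUdef]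
  have memW : ∀ z, z ∈ W ↔ G.Adj x z := by intro z; simp [hWdef]
  have k3 : ∀ {a b c : V}, G.Adj a b → G.Adj b c → G.Adj a c → False :=
    fun hab hbc hac => k3_of G h3 hab hbc hac
  have hcover : ∀ v : V, v ∈ U ∨ v ∈ W := by
    intro v
    rcases hdom v with hv | ⟨d, hd, hadj⟩
    · rcases hv with hv | hv
      · exact Or.inl ((memU v).mpr (hv ▸ hxy.symm))
      · simp only [Set.mem_singleton_iff] at hv
        exact Or.inr ((memW v).mpr (hv ▸ hxy))
    · rcases hd with hd | hd
      · exact Or.inr ((memW v).mpr (hd ▸ hadj).symm)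
      · simp only [Set.mem_singleton_iff] at hd
        exact Or.inl ((memU v).mpr (hd ▸ hadj).symm)
  have hdisjUW : ∀ v : V, v ∈ U → v ∈ W → False := by
    intro v hU hW
    exact k3 hxy ((memU v).mp hU) ((memW v).mp hW)
  have hUind : ∀ u v, u ∈ U → v ∈ U → ¬ G.Adj u v := by
    intro u v hu hv hadj
    exact k3 ((memU u).mp hu) hadj ((memU v).mp hv)
  have hWind : ∀ u v, u ∈ W → v ∈ W → ¬ G.Adj u v := by
    intro u v hu hv hadj
    exact k3 ((memW u).mp hu) hadj ((memW v).mp hv)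
  set nbG : V → Finset V := fun w => (univ.filter (G.Adj w ·)).erase x with hnbGdef
  have memnb : ∀ w z, z ∈ nbG w ↔ (z ≠ x ∧ G.Adj w z) := by
    intro w z; simp [hnbGdef]
  have hnbU : ∀ w ∈ W, nbG w ⊆ U.erase x := by
    intro w hw z hz
    rw [memnb] at hz
    rcases hcover z with h' | h'
    · exact mem_erase.mpr ⟨hz.1, h'⟩
    · exact absurd hz.2 (hWind w z hw h')
  -- endpoints in U
  have hsU : s ∈ U := by
    rcases hcover s with h' | h'
    · exact h'
    · exfalso
      have hadj : G.Adj x s := (memW s).mp h'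
      have hQ : (Walk.cons hadj p).IsPath := (Walk.cons_isPath_iff _ _).mpr ⟨hpath, hxp⟩
      have := hmax _ _ _ hQ
      simp [Walk.length_cons] at this
  have htU : t ∈ U := by
    rcases hcover t with h' | h'
    · exact h'
    · exfalso
      have hadj : G.Adj x t := (memW t).mp h'
      have hQ : (Walk.cons hadj p.reverse).IsPath := (Walk.cons_isPath_iff _ _).mpr
        ⟨hpath.reverse, by rw [Walk.support_reverse]; simpa using hxp⟩
      have := hmax _ _ _ hQ
      simp [Walk.length_cons, Walk.length_reverse] at this
  have hyW : y ∈ W := (memW y).mpr hxy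
  have hxU : x ∈ U := (memU x).mpr hxy.symm
  have hysupp : y ∈ p.support := by
    by_contra hyn
    have hadjyt : G.Adj y t := (memU t).mp htU
    have hQ1 : (Walk.cons hadjyt p.reverse).IsPath := (Walk.cons_isPath_iff _ _).mpr
      ⟨hpath.reverse, by rw [Walk.support_reverse]; simpa using hyn⟩
    have hQ : (Walk.cons hxy (Walk.cons hadjyt p.reverse)).IsPath :=
      (Walk.cons_isPath_iff _ _).mpr ⟨hQ1, by
        simp only [Walk.support_cons, List.mem_cons]
        push_neg
        refine ⟨hxy.ne, ?_⟩
        rw [Walk.support_reverse]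
        simpa using hxp⟩
    have := hmax _ _ _ hQ
    simp only [Walk.length_cons, Walk.length_reverse] at this
    omega
  set suppF : Finset V := p.support.toFinset with hsuppFdef
  have hmemsupp : ∀ z, z ∈ suppF ↔ z ∈ p.support := by
    intro z; simp [hsuppFdef]
  have hcardsupp : suppF.card = p.length + 1 := by
    rw [hsuppFdef, List.toFinset_card_of_nodup hpath.support_nodup, Walk.length_support]
  set cW : ℕ := (suppF.filter (· ∈ W)).card with hcWdef
  have halt : p.length = 2 * cW := by
    rw [hcWdef, hsuppFdef]
    exact alt_len hcover hdisjUW hUind hWind p.length p rfl hpath hsU htU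
  have hcWpos : 1 ≤ cW := by
    rw [hcWdef]
    refine card_pos.mpr ⟨y, mem_filter.mpr ⟨(hmemsupp y).mpr hysupp, hyW⟩⟩
  have hUcount : (suppF.filter (· ∈ U)).card + cW = 2 * cW + 1 := by
    have hsplit := card_filter_add_card_filter_not (s := suppF) (p := (· ∈ U))
    have hW' : suppF.filter (fun v => ¬ v ∈ U) = suppF.filter (· ∈ W) := by
      apply filter_congr
      intro z _
      constructor
      · intro h'; rcases hcover z with h'' | h''; exact absurd h'' h'; exact h''
      · intro h' h''; exact hdisjUW z h'' h'
    rw [hW'] at hsplit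
    rw [← hcWdef] at hsplit
    omega
  have hUBsub : suppF.filter (· ∈ U) ⊆ U.erase x := by
    intro z hz
    have hz' := mem_filter.mp hz
    refine mem_erase.mpr ⟨?_, hz'.2⟩
    intro heq
    exact hxp (heq ▸ (hmemsupp z).mp hz'.1)
  have hUcard : cW + 2 ≤ U.card := by
    have h1 := card_le_card hUBsub
    have h2 : (U.erase x).card = U.card - 1 := card_erase_of_mem hxU
    have h3 : 1 ≤ U.card := card_pos.mpr ⟨x, hxU⟩
    omega
  have hUW : U.card ≤ W.card := by
    have h1 : (G.neighborSet y).ncard = U.card := by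
      rw [show G.neighborSet y = (U : Set V) by ext z; simp [memU z]]
      exact Set.ncard_coe_finset _
    have h2 : (G.neighborSet x).ncard = W.card := by
      rw [show G.neighborSet x = (W : Set V) by ext z; simp [memW z]]
      exact Set.ncard_coe_finset _
    omega
  set F : Finset V := (suppF.filter (· ∈ W)).erase y with hFdef
  have hFcard : F.card + 1 = cW := by
    rw [hFdef, card_erase_of_mem (mem_filter.mpr ⟨(hmemsupp y).mpr hysupp, hyW⟩), ← hcWdef]
    omega
  have hFW : ∀ w ∈ F, w ∈ W := fun w hw => (mem_filter.mp (mem_of_mem_erase hw)).2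
  have hFy : ∀ w ∈ F, w ≠ y := fun w hw => ne_of_mem_erase hw
  have hFsupp : ∀ w ∈ F, w ∈ p.support := fun w hw =>
    (hmemsupp w).mp (mem_filter.mp (mem_of_mem_erase hw)).1
  -- off path W vertex
  have hwst : ∃ w, w ∈ W ∧ w ≠ y ∧ w ∉ p.support := by
    by_contra hcon
    push_neg at hcon
    have hsub : W.erase y ⊆ F := by
      intro w hw
      obtain ⟨hwy, hwW⟩ := mem_erase.mp hw
      exact mem_erase.mpr ⟨hwy, mem_filter.mpr ⟨(hmemsupp w).mpr (hcon w hwW hwy), hwW⟩⟩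
    have h1 := card_le_card hsub
    have h2 : (W.erase y).card = W.card - 1 := card_erase_of_mem hyW
    omega
  obtain ⟨wst, hwstW, hwsty, hwstsupp⟩ := hwst
  -- comparability chain
  have hchain : ∀ w ∈ W, ∀ w' ∈ W, nbG w ⊆ nbG w' ∨ nbG w' ⊆ nbG w := by
    have hy : ∀ w'' ∈ W, nbG w'' ⊆ nbG y := by
      intro w'' hw'' z hz
      rw [memnb] at hz ⊢
      refine ⟨hz.1, ?_⟩
      rcases hcover z with h' | h'
      · exact (memU z).mp h'
      · exact absurd hz.2 (hWind _ _ hw'' h')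
    intro w hw w' hw'
    by_cases hwy : w = y
    · subst hwy; exact Or.inr (hy w' hw')
    by_cases hw'y : w' = y
    · subst hw'y; exact Or.inl (hy w hw)
    by_contra hcon
    push_neg at hcon
    obtain ⟨hns1, hns2⟩ := hcon
    obtain ⟨b, hb, hbn⟩ := not_subset.mp hns1
    obtain ⟨b', hb', hb'n⟩ := not_subset.mp hns2
    have hbU : b ∈ U := mem_of_mem_erase (hnbU w hw hb)
    have hb'U : b' ∈ U := mem_of_mem_erase (hnbU w' hw' hb')
    refine p5_of G h1 (v0 := w) (v1 := b) (v2 := y) (v3 := b') (v4 := w')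
      hwy (fun heq => hdisjUW b' hb'U (heq ▸ hw)) (fun heq => hbn (heq ▸ hb))
      (fun heq => hbn (heq.symm ▸ hb')) (fun heq => hdisjUW b hbU (heq.symm ▸ hw'))
      (Ne.symm hw'y)
      ((memnb w b).mp hb).2 ((memU b).mp hbU).symm ((memU b').mp hb'U)
      ((memnb w' b').mp hb').2.symm
      (fun h => k3 ((memW w).mp hw) h hxy)
      (fun h => hb'n ((memnb w b').mpr ⟨(mem_erase.mp (hnbU w' hw' hb')).1, h⟩))
      (hWind w w' hw hw')
      (hUind b b' hbU hb'U)
      (fun h => hbn ((memnb w' b).mpr ⟨(mem_erase.mp (hnbU w hw hb)).1, h.symm⟩))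
      (fun h => k3 ((memW w').mp hw') h.symm hxy)
  -- sizes
  have hsize : ∀ w ∈ F, 1 + (F.filter (fun w' => nbG w' ⊆ nbG w)).card ≤ (nbG w).card := by
    intro w hw
    have hQ : ∀ w' z, w' ∈ W → nbG w' ⊆ nbG w → G.Adj w' z → z ≠ x → z ∈ nbG w := by
      intro w' z _ hqual hadj hzx
      exact hqual ((memnb w' z).mpr ⟨hzx, hadj⟩)
    have hone : 1 ≤ (suppF.filter (fun w' => w' ∈ W ∧ nbG w' ⊆ nbG w)).card := by
      refine card_pos.mpr ⟨w, mem_filter.mpr ⟨(hmemsupp w).mpr (hFsupp w hw), hFW w hw,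
        subset_rfl⟩⟩
    have hA := claimb hcover hdisjUW hUind hWind (nbG w) (fun w'' => nbG w'' ⊆ nbG w) hQ
      p.length p rfl hpath hxp hsU htU (by simpa [hsuppFdef] using hone)
    simp only [← hsuppFdef] at hA
    have hsub1 : F.filter (fun w' => nbG w' ⊆ nbG w)
        ⊆ suppF.filter (fun w' => w' ∈ W ∧ nbG w' ⊆ nbG w) := by
      intro z hz
      have h' := mem_filter.mp hz
      exact mem_filter.mpr ⟨(hmemsupp z).mpr (hFsupp z h'.1), hFW z h'.1, h'.2⟩
    have hsub2 : suppF.filter (· ∈ nbG w) ⊆ nbG w := fun z hz => (mem_filter.mp hz).2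
    have hc1 := card_le_card hsub1
    have hc2 := card_le_card hsub2
    omega
  -- choice of b1
  have hb1 : ∃ b1, b1 ∈ U.erase x ∧ ∀ w ∈ F, b1 ∈ nbG w := by
    rcases F.eq_empty_or_nonempty with hFe | hFne
    · refine ⟨s, mem_erase.mpr ⟨?_, hsU⟩, by simp [hFe]⟩
      intro heq
      exact hxp (heq ▸ p.start_mem_support)
    · obtain ⟨v0, hv0F, hv0min⟩ := F.exists_min_image (fun w => (nbG w).card) hFne
      have h1 := hsize v0 hv0F
      have hne : (nbG v0).Nonempty := by
        rw [← card_pos]; omega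
      obtain ⟨b1, hb1⟩ := hne
      refine ⟨b1, hnbU v0 (hFW v0 hv0F) hb1, ?_⟩
      intro w hw
      rcases hchain v0 (hFW v0 hv0F) w (hFW w hw) with h' | h'
      · exact h' hb1
      · rw [eq_of_subset_of_card_le h' (hv0min w hw)]; exact hb1
  obtain ⟨b1, hb1UB, hb1all⟩ := hb1
  -- zig
  have hzig : ∃ (d : V) (q : G.Walk b1 d), q.IsPath ∧ q.length = 2 * F.card ∧
      ∀ z ∈ q.support, z = b1 ∨ z ∈ F ∨ (z ∈ U.erase x ∧ z ∉ ({b1} : Finset V)) := by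
    refine zig nbG W (U.erase x)
      (fun z hz hw => hdisjUW z (mem_of_mem_erase hz) hw)
      (fun w z _ hz => ((memnb w z).mp hz).2)
      F.card F rfl b1 {b1} hFW
      (fun w hw w' hw' => hchain w (hFW w hw) w' (hFW w' hw'))
      (fun w hw => hnbU w (hFW w hw)) hb1all (mem_singleton_self b1) ?_
    intro w hw
    have := hsize w hw
    simpa using this
  obtain ⟨d, q, hqpath, hqlen, hqsupp⟩ := hzig
  have hadjyb1 : G.Adj y b1 := (memU b1).mp (mem_of_mem_erase hb1UB)
  have hadjwx : G.Adj wst x := ((memW wst).mp hwstW).symm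
  have hQ1 : (Walk.cons hadjyb1 q).IsPath := (Walk.cons_isPath_iff _ _).mpr ⟨hqpath, by
    intro hcon
    rcases hqsupp y hcon with heq | h' | h'
    · exact hdisjUW y (heq ▸ mem_of_mem_erase hb1UB) hyW
    · exact hFy y h' rfl
    · exact hdisjUW y (mem_of_mem_erase h'.1) hyW⟩
  have hQ2 : (Walk.cons hxy (Walk.cons hadjyb1 q)).IsPath := (Walk.cons_isPath_iff _ _).mpr ⟨hQ1, by
    simp only [Walk.support_cons, List.mem_cons]
    push_neg
    refine ⟨hxy.ne, ?_⟩
    intro hcon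
    rcases hqsupp x hcon with heq | h' | h'
    · exact (mem_erase.mp hb1UB).1 heq.symm
    · exact G.irrefl ((memW x).mp (hFW x h'))
    · exact (mem_erase.mp h'.1).1 rfl⟩
  have hQ3 : (Walk.cons hadjwx (Walk.cons hxy (Walk.cons hadjyb1 q))).IsPath :=
    (Walk.cons_isPath_iff _ _).mpr ⟨hQ2, by
      simp only [Walk.support_cons, List.mem_cons]
      push_neg
      refine ⟨hadjwx.ne, hwsty, ?_⟩
      intro hcon
      rcases hqsupp wst hcon with heq | h' | h'
      · exact hdisjUW wst (heq ▸ mem_of_mem_erase hb1UB) hwstW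
      · exact hwstsupp (hFsupp wst h')
      · exact hdisjUW wst (mem_of_mem_erase h'.1) hwstW⟩
  have hfin := hmax _ _ _ hQ3
  simp only [Walk.length_cons] at hfin
  omega

end MainThm
end
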